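/- arXiv:2303.06300 — 3 statements merged into one kernel-verified Lean document; each statement's English description precedes it below -/
import Mathlib

section
/- For all n ≥ 0 and k ≥ 0, the number of non-crossing partitions of [n] with exactly k occurrences of the subword 1121 equals the number with exactly k occurrences of 1211, which also equals the number with exactly k occurrences of 1221 and the number with exactly k occurrences of 1231. -/
/-- `l` is a restricted growth sequence (canonical sequential form of a set
partition): it starts with 1, all letters are ≥ 1, and each letter is at most
one more than the maximum of the preceding prefix. -/
def IsRGS (l : List ℕ) : Prop :=
  l.getD 0 1 = 1 ∧ (∀ x ∈ l, 1 ≤ x) ∧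
  ∀ i, i + 1 < l.length → l.getD (i + 1) 0 ≤ (l.take (i + 1)).foldr max 0 + 1

/-- `l` contains a (classical) occurrence of 1-2-1-2: a subsequence a,b,a,b with a < b. -/
def Crossing (l : List ℕ) : Prop :=
  ∃ i j k m : ℕ, i < j ∧ j < k ∧ k < m ∧ m < l.length ∧
    l.getD i 0 = l.getD k 0 ∧ l.getD j 0 = l.getD m 0 ∧ l.getD i 0 < l.getD j 0

/-- `l` is the canonical sequential form of a non-crossing partition of [n]. -/
def NCseq (n : ℕ) (l : List ℕ) : Prop := l.length = n ∧ IsRGS l ∧ ¬ Crossing l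

/-- Two lists of the same length are order-isomorphic. -/
def OrdIso (s t : List ℕ) : Prop :=
  s.length = t.length ∧ ∀ j k, j < s.length → k < s.length →
    (s.getD j 0 < s.getD k 0 ↔ t.getD j 0 < t.getD k 0)

/-- The subword pattern `τ` occurs in `l` starting at position `i`. -/
def occAt (τ l : List ℕ) (i : ℕ) : Prop := OrdIso τ ((l.drop i).take τ.length)

/-- The number of occurrences of the subword pattern `τ` in `l`. -/
noncomputable def occCount (τ l : List ℕ) : ℕ := Nat.card {i : ℕ // occAt τ l i}

/-- The total number of occurrences of the subword pattern `τ` over all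
members of NC_n, counted with multiplicity (as marked occurrences). -/
noncomputable def totalOcc (n : ℕ) (τ : List ℕ) : ℕ :=
  Nat.card {p : List ℕ × ℕ // NCseq n p.1 ∧ occAt τ p.1 p.2}

namespace NCP

/-! ### Move sequences -/

/-- Validity of a move sequence, given current stack height.
`0` = open a new block (push); `j+1` = return to the block at depth `j`
(popping everything above it). -/
def MValid : ℕ → List ℕ → Prop
  | _, [] => True
  | h, 0 :: ms => MValid (h + 1) ms
  | h, (j+1) :: ms => j < h ∧ MValid (h - j) ms

/-- Decode a move sequence into a canonical sequence, given stack and counter. -/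
def decodeAux : List ℕ → ℕ → List ℕ → List ℕ
  | _, _, [] => []
  | st, c, 0 :: ms => (c+1) :: decodeAux ((c+1) :: st) (c+1) ms
  | st, c, (j+1) :: ms => (st.drop j).headD 0 :: decodeAux (st.drop j) c ms

def dec (m : List ℕ) : List ℕ := decodeAux [] 0 m

def encodeAux : List ℕ → ℕ → List ℕ → List ℕ
  | _, _, [] => []
  | st, c, x :: l =>
    if x = c + 1 then 0 :: encodeAux (x :: st) (c+1) l
    else (st.idxOf x + 1) :: encodeAux (st.drop (st.idxOf x)) c l

def enc (l : List ℕ) : List ℕ := encodeAux [] 0 l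

lemma decodeAux_length : ∀ (ms st : List ℕ) (c : ℕ),
    (decodeAux st c ms).length = ms.length
  | [], _, _ => rfl
  | 0 :: ms, st, c => by simp [decodeAux, decodeAux_length ms]
  | (j+1) :: ms, st, c => by simp [decodeAux, decodeAux_length ms]

lemma encodeAux_length : ∀ (l st : List ℕ) (c : ℕ),
    (encodeAux st c l).length = l.length
  | [], _, _ => rfl
  | x :: l, st, c => by
    simp only [encodeAux]
    split <;> simp [encodeAux_length l]

/-! ### helpers -/

lemma headD_drop (l : List ℕ) (n : ℕ) : (l.drop n).headD 0 = l.getD n 0 := by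
  induction l generalizing n with
  | nil => simp
  | cons a l ih =>
    cases n with
    | zero => simp
    | succ n => simpa using ih n

lemma getD_drop (l : List ℕ) (n i : ℕ) : (l.drop n).getD i 0 = l.getD (n + i) 0 := by
  induction l generalizing n with
  | nil => simp
  | cons a l ih =>
    cases n with
    | zero => simp
    | succ n => simpa [Nat.succ_add] using ih n

/-- strict decrease along a sorted stack -/
lemma sorted_getD_lt {st : List ℕ} (hs : st.Chain' (· > ·)) {i j : ℕ}
    (hij : i < j) (hj : j < st.length) : st.getD j 0 < st.getD i 0 := by
  replace hs : List.IsChain (· > ·) st := hs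
  rw [List.isChain_iff_pairwise] at hs
  rw [List.pairwise_iff_get] at hs
  have := hs ⟨i, lt_trans hij hj⟩ ⟨j, hj⟩ (by simpa using hij)
  rw [List.getD_eq_getElem _ _ hj, List.getD_eq_getElem _ _ (lt_trans hij hj)]
  simpa using this

lemma sorted_getD_le_head {st : List ℕ} (hs : st.Chain' (· > ·)) {j : ℕ}
    (hj : j < st.length) : st.getD j 0 ≤ st.headD 0 := by
  have h0 : st.headD 0 = st.getD 0 0 := by cases st <;> simp
  rw [h0]
  rcases Nat.eq_zero_or_pos j with rfl | hpos
  · exact le_refl _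
  · exact le_of_lt (sorted_getD_lt hs hpos hj)

lemma sorted_getD_inj {st : List ℕ} (hs : st.Chain' (· > ·)) {i j : ℕ}
    (hi : i < st.length) (hj : j < st.length) (h : st.getD i 0 = st.getD j 0) : i = j := by
  rcases lt_trichotomy i j with hlt | heq | hgt
  · exact absurd (sorted_getD_lt hs hlt hj) (by omega)
  · exact heq
  · exact absurd (sorted_getD_lt hs hgt hi) (by omega)

lemma getD_mem {st : List ℕ} {j : ℕ} (hj : j < st.length) : st.getD j 0 ∈ st := by
  rw [List.getD_eq_getElem _ _ hj]; exact List.getElem_mem _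

lemma headD_mem {st : List ℕ} (h : st ≠ []) : st.headD 0 ∈ st := by
  cases st with
  | nil => exact absurd rfl h
  | cons a t => simp


/-- max of a list -/
def MaxF (l : List ℕ) : ℕ := l.foldr max 0

lemma MaxF_snoc (l : List ℕ) (x : ℕ) : MaxF (l ++ [x]) = max (MaxF l) x := by
  induction l with
  | nil => simp [MaxF]
  | cons a l ih =>
    simp only [MaxF, List.cons_append, List.foldr_cons] at *
    rw [ih]
    omega

lemma MaxF_le {l : List ℕ} {c : ℕ} (h : ∀ x ∈ l, x ≤ c) : MaxF l ≤ c := by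
  induction l with
  | nil => simp [MaxF]
  | cons a l ih =>
    simp only [MaxF, List.foldr_cons]
    have := h a (by simp)
    have := ih (fun x hx => h x (by simp [hx]))
    simp only [MaxF] at this
    omega

lemma le_MaxF {l : List ℕ} {x : ℕ} (h : x ∈ l) : x ≤ MaxF l := by
  induction l with
  | nil => simp at h
  | cons a l ih =>
    simp only [MaxF, List.foldr_cons]
    rcases List.mem_cons.1 h with rfl | h
    · omega
    · have := ih h; simp only [MaxF] at this; omega

/-- "No weak descent between equal letters": there is no `j < k < m` with
`l j = l m` and `l k < l m`.  For lists this implies non-crossing. -/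
def Star (L : List ℕ) : Prop :=
  ∀ j k m, j < k → k < m → m < L.length →
    L.getD j 0 = L.getD m 0 → ¬ L.getD k 0 < L.getD m 0

lemma Star.not_crossing {L : List ℕ} (h : Star L) : ¬ Crossing L := by
  rintro ⟨i, j, k, m, hij, hjk, hkm, hm, hik, hjm, hlt⟩
  exact h j k m hjk hkm hm hjm (by omega)

/-- Decode-side state invariant. `q` is the output so far. -/
structure StI (q st : List ℕ) (c : ℕ) : Prop where
  sorted : st.Chain' (· > ·)
  st_pos : ∀ x ∈ st, 1 ≤ x
  st_ub : ∀ x ∈ st, x ≤ c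
  q_pos : ∀ x ∈ q, 1 ≤ x
  q_ub : ∀ x ∈ q, x ≤ c
  maxq : MaxF q = c
  empt : q = [] ↔ st = []
  act : ∀ v ∈ st, ∃ i, i < q.length ∧ q.getD i 0 = v ∧
        ∀ t, i < t → t < q.length → v < q.getD t 0

lemma StI.nil : StI [] [] 0 :=
  ⟨List.isChain_nil, by simp, by simp, by simp, by simp, rfl, by simp, by simp⟩

/-- RGS is preserved by appending a letter `x` with `1 ≤ x ≤ max+1`. -/
lemma rgs_snoc {q : List ℕ} {x : ℕ} (hq : IsRGS q) (h1 : 1 ≤ x)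
    (h2 : x ≤ MaxF q + 1) : IsRGS (q ++ [x]) := by
  obtain ⟨hq0, hqmem, hqstep⟩ := hq
  refine ⟨?_, ?_, ?_⟩
  · cases q with
    | nil =>
      have h2' : x ≤ 1 := by simpa [MaxF] using h2
      simp only [List.nil_append, List.getD_cons_zero]
      omega
    | cons a t => simpa using hq0
  · intro y hy
    rcases List.mem_append.1 hy with hy | hy
    · exact hqmem y hy
    · simp at hy; omega
  · intro i hi
    simp only [List.length_append, List.length_cons, List.length_nil] at hi
    rcases lt_or_ge (i+1) q.length with hlt | hge
    · rw [List.getD_append _ _ _ _ hlt,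
        List.take_append_of_le_length (by omega)]
      exact hqstep i hlt
    · have hieq : i + 1 = q.length := by omega
      rw [List.getD_append_right _ _ _ _ (by omega), hieq]
      simp only [Nat.sub_self, List.getD_cons_zero]
      rw [List.take_left' rfl]
      exact h2

lemma star_snoc {q : List ℕ} {x : ℕ} (hq : Star q)
    (h : ∀ j k, j < k → k < q.length → q.getD j 0 = x → ¬ q.getD k 0 < x) :
    Star (q ++ [x]) := by
  intro j k m hjk hkm hm hjm
  simp only [List.length_append, List.length_cons, List.length_nil] at hm
  rcases lt_or_ge m q.length with hmlt | hmge
  · rw [List.getD_append _ _ _ _ hmlt] at hjm ⊢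
    rw [List.getD_append _ _ _ _ (by omega : j < q.length)] at hjm
    rw [List.getD_append _ _ _ _ (by omega : k < q.length)]
    exact hq j k m hjk hkm hmlt hjm
  · have hmeq : m = q.length := by omega
    subst hmeq
    rw [List.getD_append_right _ _ _ _ (le_refl _), Nat.sub_self,
      List.getD_cons_zero] at hjm ⊢
    rw [List.getD_append _ _ _ _ (by omega : j < q.length)] at hjm
    rw [List.getD_append _ _ _ _ (by omega : k < q.length)]
    exact h j k hjk (by omega) hjm


lemma decode_good : ∀ (ms st q : List ℕ) (c : ℕ), MValid st.length ms → StI q st c →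
    IsRGS q → Star q → IsRGS (q ++ decodeAux st c ms) ∧ Star (q ++ decodeAux st c ms)
  | [], st, q, c, _, _, hr, hs => by simpa [decodeAux] using ⟨hr, hs⟩
  | 0 :: ms, st, q, c, hv, hI, hr, hs => by
    have hv' : MValid (((c+1) :: st)).length ms := by
      simpa [MValid, List.length_cons] using hv
    have hql : ∀ i, i < q.length → q.getD i 0 ≤ c := fun i hi =>
      hI.q_ub _ (getD_mem hi)
    have hI' : StI (q ++ [c+1]) ((c+1) :: st) (c+1) := by
      refine ⟨?_, ?_, ?_, ?_, ?_, ?_, ?_, ?_⟩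
      · refine List.isChain_cons.2 ⟨fun b hb => ?_, hI.sorted⟩
        have : b ∈ st := List.mem_of_mem_head? hb
        have := hI.st_ub b this
        omega
      · intro x hx
        rcases List.mem_cons.1 hx with rfl | hx
        · omega
        · exact hI.st_pos x hx
      · intro x hx
        rcases List.mem_cons.1 hx with rfl | hx
        · exact le_refl _
        · have := hI.st_ub x hx; omega
      · intro x hx
        rcases List.mem_append.1 hx with hx | hx
        · exact hI.q_pos x hx
        · simp at hx; omega
      · intro x hx
        rcases List.mem_append.1 hx with hx | hx
        · have := hI.q_ub x hx; omega
        · simp at hx; omega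
      · rw [MaxF_snoc, hI.maxq]; omega
      · simp
      · intro v hv
        rcases List.mem_cons.1 hv with rfl | hv
        · refine ⟨q.length, by simp, ?_, ?_⟩
          · rw [List.getD_append_right _ _ _ _ (le_refl _), Nat.sub_self,
              List.getD_cons_zero]
          · intro t ht1 ht2
            simp only [List.length_append, List.length_cons, List.length_nil] at ht2
            omega
        · obtain ⟨i, hi, hiv, hlater⟩ := hI.act v hv
          refine ⟨i, by simp only [List.length_append]; omega,
            by rw [List.getD_append _ _ _ _ hi]; exact hiv, ?_⟩
          intro t ht1 ht2
          simp only [List.length_append, List.length_cons, List.length_nil] at ht2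
          rcases lt_or_ge t q.length with htq | htq
          · rw [List.getD_append _ _ _ _ htq]; exact hlater t ht1 htq
          · have : t = q.length := by omega
            subst this
            rw [List.getD_append_right _ _ _ _ (le_refl _), Nat.sub_self,
              List.getD_cons_zero]
            have := hI.st_ub v hv
            omega
    have hr' : IsRGS (q ++ [c+1]) :=
      rgs_snoc hr (by omega) (by rw [hI.maxq])
    have hs' : Star (q ++ [c+1]) := by
      refine star_snoc hs fun j k hjk hk hj => ?_
      have := hql j (by omega)
      omega
    have hres := decode_good ms _ (q ++ [c+1]) (c+1) hv' hI' hr' hs'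
    have hshape : decodeAux st c (0 :: ms) = (c+1) :: decodeAux ((c+1)::st) (c+1) ms := rfl
    rw [hshape, List.append_cons]
    exact hres
  | (j+1) :: ms, st, q, c, hv, hI, hr, hs => by
    obtain ⟨hj, hv0⟩ : j < st.length ∧ MValid (st.length - j) ms := hv
    set x := st.getD j 0 with hxdef
    have hhead : (st.drop j).headD 0 = x := headD_drop st j
    have hxmem : x ∈ st := getD_mem hj
    have hx1 : 1 ≤ x := hI.st_pos x hxmem
    have hxc : x ≤ c := hI.st_ub x hxmem
    have hv' : MValid (st.drop j).length ms := by
      simpa [List.length_drop] using hv0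
    obtain ⟨ix, hix, hixv, hixlater⟩ := hI.act x hxmem
    have hI' : StI (q ++ [x]) (st.drop j) c := by
      refine ⟨hI.sorted.sublist (List.drop_sublist _ _), ?_, ?_, ?_, ?_, ?_, ?_, ?_⟩
      · exact fun y hy => hI.st_pos y (List.drop_subset _ _ hy)
      · exact fun y hy => hI.st_ub y (List.drop_subset _ _ hy)
      · intro y hy
        rcases List.mem_append.1 hy with hy | hy
        · exact hI.q_pos y hy
        · simp at hy; omega
      · intro y hy
        rcases List.mem_append.1 hy with hy | hy
        · exact hI.q_ub y hy
        · simp at hy; omega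
      · rw [MaxF_snoc, hI.maxq]; omega
      · constructor
        · intro h; exact absurd h (by simp)
        · intro h
          have : (st.drop j).length = 0 := by rw [h]; rfl
          rw [List.length_drop] at this
          omega
      · intro v hvmem
        by_cases hvx : v = x
        · subst hvx
          refine ⟨q.length, by simp, ?_, ?_⟩
          · rw [List.getD_append_right _ _ _ _ (le_refl _), Nat.sub_self,
              List.getD_cons_zero]
          · intro t ht1 ht2
            simp only [List.length_append, List.length_cons, List.length_nil] at ht2
            omega
        · -- v strictly below x on the stack
          have hvlt : v < x := by
            obtain ⟨i', hi', hv'⟩ := List.mem_iff_getElem.1 hvmem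
            have hgd : (st.drop j).getD i' 0 = v := by
              rw [List.getD_eq_getElem _ _ hi']; exact hv'
            rw [getD_drop] at hgd
            have hi'' : i' ≠ 0 := by
              intro h0
              subst h0
              simp only [Nat.add_zero] at hgd
              refine hvx ?_
              rw [hxdef]
              exact hgd.symm
            have hlen : j + i' < st.length := by
              rw [List.length_drop] at hi'; omega
            have := sorted_getD_lt hI.sorted (show j < j + i' by omega) hlen
            omega
          obtain ⟨i, hi, hiv, hlater⟩ := hI.act v (List.drop_subset _ _ hvmem)
          refine ⟨i, by simp only [List.length_append]; omega,
            by rw [List.getD_append _ _ _ _ hi]; exact hiv, ?_⟩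
          intro t ht1 ht2
          simp only [List.length_append, List.length_cons, List.length_nil] at ht2
          rcases lt_or_ge t q.length with htq | htq
          · rw [List.getD_append _ _ _ _ htq]; exact hlater t ht1 htq
          · have : t = q.length := by omega
            subst this
            rw [List.getD_append_right _ _ _ _ (le_refl _), Nat.sub_self,
              List.getD_cons_zero]
            exact hvlt
    have hr' : IsRGS (q ++ [x]) := rgs_snoc hr hx1 (by rw [hI.maxq]; omega)
    have hs' : Star (q ++ [x]) := by
      refine star_snoc hs fun j' k' hjk hk hj' hklt => ?_
      rcases lt_trichotomy k' ix with hlt | heq | hgt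
      · exact hs j' k' ix hjk hlt hix (hj'.trans hixv.symm) (by omega)
      · subst heq; omega
      · have := hixlater k' hgt hk; omega
    have hres := decode_good ms _ (q ++ [x]) c hv' hI' hr' hs'
    have hshape : decodeAux st c ((j+1) :: ms)
        = (st.drop j).headD 0 :: decodeAux (st.drop j) c ms := rfl
    rw [hshape, hhead, List.append_cons]
    exact hres

lemma getD_zero_of_ne_nil {L : List ℕ} (h : L ≠ []) (d : ℕ) : L.getD 0 d = L.getD 0 1 := by
  cases L with
  | nil => exact absurd rfl h
  | cons a t => rfl

/-- All values `1..max` of a prefix occur in that prefix. -/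
lemma rgs_complete {L : List ℕ} (hL : IsRGS L) :
    ∀ p u, 1 ≤ u → u ≤ MaxF (L.take p) → ∃ r, r < p ∧ r < L.length ∧ L.getD r 0 = u := by
  intro p
  induction p with
  | zero => intro u h1 h2; simp [MaxF] at h2; omega
  | succ p ih =>
    intro u h1 h2
    rw [List.take_succ] at h2
    cases hp : L[p]? with
    | none =>
      rw [hp] at h2
      simp only [Option.toList_none, List.append_nil] at h2
      obtain ⟨r, hr1, hr2, hr3⟩ := ih u h1 h2
      exact ⟨r, by omega, hr2, hr3⟩
    | some x =>
      rw [hp] at h2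
      simp only [Option.toList_some] at h2
      rw [MaxF_snoc] at h2
      have hplen : p < L.length := List.getElem?_eq_some_iff.1 hp |>.1
      have hpx : L.getD p 0 = x := by
        rw [List.getD_eq_getElem _ _ hplen]
        exact (List.getElem?_eq_some_iff.1 hp).2
      rcases le_or_gt u (MaxF (L.take p)) with hle | hgt
      · obtain ⟨r, hr1, hr2, hr3⟩ := ih u h1 hle
        exact ⟨r, by omega, hr2, hr3⟩
      · have hux : u ≤ x := by omega
        rcases Nat.eq_zero_or_pos p with rfl | hppos
        · have h0 : L.getD 0 0 = 1 := by
            rw [getD_zero_of_ne_nil (List.ne_nil_of_length_pos hplen)]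
            exact hL.1
          refine ⟨0, by omega, by omega, ?_⟩
          rw [h0]; rw [hpx] at h0; omega
        · have hstep := hL.2.2 (p-1) (by omega)
          rw [show p - 1 + 1 = p by omega] at hstep
          rw [hpx] at hstep
          have hM : MaxF (L.take p) = List.foldr max 0 (L.take p) := rfl
          exact ⟨p, by omega, hplen, by rw [hpx]; omega⟩

lemma rgs_before {L : List ℕ} (hL : IsRGS L) {i u : ℕ} (hi : i < L.length)
    (h1 : 1 ≤ u) (h2 : u < L.getD i 0) : ∃ r, r < i ∧ L.getD r 0 = u := by
  rcases Nat.eq_zero_or_pos i with rfl | hpos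
  · have h0 : L.getD 0 0 = 1 := by
      rw [getD_zero_of_ne_nil (List.ne_nil_of_length_pos hi)]
      exact hL.1
    omega
  · have := hL.2.2 (i-1) (by omega)
    rw [show i - 1 + 1 = i by omega] at this
    have : u ≤ MaxF (L.take i) := by unfold MaxF; omega
    obtain ⟨r, hr1, _, hr3⟩ := rgs_complete hL i u h1 this
    exact ⟨r, hr1, hr3⟩

/-- Encode-side invariant. -/
structure EI (q st : List ℕ) (c : ℕ) : Prop where
  sorted : st.Chain' (· > ·)
  st_pos : ∀ x ∈ st, 1 ≤ x
  st_ub : ∀ x ∈ st, x ≤ c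
  maxq : MaxF q = c
  empt : q = [] ↔ st = []
  occ : ∀ v ∈ st, ∃ i, i < q.length ∧ q.getD i 0 = v
  dead : ∀ v, 1 ≤ v → v ≤ c → v ∉ st →
      ∃ i k, i < k ∧ k < q.length ∧ q.getD i 0 = v ∧ q.getD k 0 < v

lemma EI.nil : EI [] [] 0 :=
  ⟨List.isChain_nil, by simp, by simp, rfl, by simp, by simp,
   fun v h1 h2 _ => absurd (le_trans h1 h2) (by omega)⟩

lemma encode_good : ∀ (l q st : List ℕ) (c : ℕ), EI q st c → IsRGS (q ++ l) →
    ¬ Crossing (q ++ l) →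
    MValid st.length (encodeAux st c l) ∧ decodeAux st c (encodeAux st c l) = l
  | [], q, st, c, _, _, _ => ⟨trivial, rfl⟩
  | x :: rest, q, st, c, hI, hr, hnc => by
    set L := q ++ x :: rest with hLdef
    have hLlen : q.length < L.length := by
      rw [hLdef]; simp
    have hLq : ∀ i, i < q.length → L.getD i 0 = q.getD i 0 := fun i hi =>
      List.getD_append _ _ _ _ hi
    have hLx : L.getD q.length 0 = x := by
      rw [hLdef, List.getD_append_right _ _ _ _ (le_refl _), Nat.sub_self,
        List.getD_cons_zero]
    have hx1 : 1 ≤ x := hr.2.1 x (by rw [hLdef] at *; exact List.mem_append.2 (Or.inr (by simp)))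
    have hxc : x ≤ c + 1 := by
      rcases Nat.eq_zero_or_pos q.length with hq0 | hqpos
      · have hqnil : q = [] := List.length_eq_zero_iff.1 hq0
        have hc0 : c = 0 := by rw [← hI.maxq, hqnil]; rfl
        have hx1' : x = 1 := by
          have h := hr.1
          rw [hLdef, hqnil] at h
          simpa using h
        omega
      · have := hr.2.2 (q.length - 1) (by rw [show q.length - 1 + 1 = q.length by omega]; exact hLlen)
        rw [show q.length - 1 + 1 = q.length by omega] at this
        rw [hLx] at this
        rw [hLdef, List.take_left' rfl] at this
        rw [← hI.maxq]
        exact this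
    by_cases hfresh : x = c + 1
    · -- fresh letter, push
      subst hfresh
      have henc : encodeAux st c ((c+1) :: rest) = 0 :: encodeAux ((c+1) :: st) (c+1) rest := by
        simp [encodeAux]
      have hI' : EI (q ++ [c+1]) ((c+1) :: st) (c+1) := by
        refine ⟨?_, ?_, ?_, ?_, ?_, ?_, ?_⟩
        · refine List.isChain_cons.2 ⟨fun b hb => ?_, hI.sorted⟩
          have := hI.st_ub b (List.mem_of_mem_head? hb)
          omega
        · intro y hy
          rcases List.mem_cons.1 hy with rfl | hy
          · omega
          · exact hI.st_pos y hy
        · intro y hy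
          rcases List.mem_cons.1 hy with rfl | hy
          · exact le_refl _
          · have := hI.st_ub y hy; omega
        · rw [MaxF_snoc, hI.maxq]; omega
        · simp
        · intro v hv
          rcases List.mem_cons.1 hv with rfl | hv
          · exact ⟨q.length, by simp, by
              rw [List.getD_append_right _ _ _ _ (le_refl _), Nat.sub_self,
                List.getD_cons_zero]⟩
          · obtain ⟨i, hi, hiv⟩ := hI.occ v hv
            exact ⟨i, by simp only [List.length_append]; omega,
              by rw [List.getD_append _ _ _ _ hi]; exact hiv⟩
        · intro v h1 h2 h3
          have hvne : v ≠ c + 1 := fun h => h3 (h ▸ List.mem_cons_self)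
          have hvc : v ≤ c := by omega
          obtain ⟨i, k, hik, hk, hiv, hkv⟩ :=
            hI.dead v h1 hvc (fun h => h3 (List.mem_cons_of_mem _ h))
          exact ⟨i, k, hik, by simp only [List.length_append]; omega,
            by rw [List.getD_append _ _ _ _ (by omega)]; exact hiv,
            by rw [List.getD_append _ _ _ _ hk]; exact hkv⟩
      have hr' : IsRGS ((q ++ [c+1]) ++ rest) := by
        rw [hLdef, List.append_cons] at hr; exact hr
      have hnc' : ¬ Crossing ((q ++ [c+1]) ++ rest) := by
        rw [hLdef, List.append_cons] at hnc; exact hnc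
      obtain ⟨hmv, hdec⟩ := encode_good rest (q ++ [c+1]) ((c+1) :: st) (c+1) hI' hr' hnc'
      constructor
      · rw [henc]
        show MValid (st.length + 1) _
        simpa using hmv
      · rw [henc]
        show (c+1) :: decodeAux ((c+1) :: st) (c+1) _ = _
        rw [hdec]
    · -- old letter: must be on the stack
      have hxc' : x ≤ c := by omega
      have hmem : x ∈ st := by
        by_contra hnm
        obtain ⟨i, k, hik, hk, hiv, hkv⟩ := hI.dead x hx1 hxc' hnm
        set y := q.getD k 0 with hydef
        have hy1 : 1 ≤ y := by
          refine hr.2.1 y ?_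
          rw [hLdef]
          exact List.mem_append.2 (Or.inl (by rw [hydef]; exact getD_mem hk))
        obtain ⟨r, hr1, hr3⟩ := rgs_before hr (show i < L.length by omega) hy1
          (by rw [hLq i (by omega), hiv]; omega)
        refine hnc ⟨r, i, k, q.length, hr1, hik, hk, hLlen, ?_, ?_, ?_⟩
        · rw [hr3, hLq k hk]
        · rw [hLq i (by omega), hiv, hLx]
        · rw [hr3, hLq i (by omega), hiv]; omega
      set idx := st.idxOf x with hidxdef
      have hidxlt : idx < st.length := List.idxOf_lt_length_iff.2 hmem
      have hidxval : st.getD idx 0 = x := by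
        rw [List.getD_eq_getElem _ _ hidxlt]
        exact List.getElem_idxOf hidxlt
      have henc : encodeAux st c (x :: rest)
          = (idx + 1) :: encodeAux (st.drop idx) c rest := by
        simp only [encodeAux, if_neg hfresh, hidxdef]
      have hI' : EI (q ++ [x]) (st.drop idx) c := by
        refine ⟨hI.sorted.sublist (List.drop_sublist _ _),
          fun y hy => hI.st_pos y (List.drop_subset _ _ hy),
          fun y hy => hI.st_ub y (List.drop_subset _ _ hy), ?_, ?_, ?_, ?_⟩
        · rw [MaxF_snoc, hI.maxq]; omega
        · constructor
          · intro h; exact absurd h (by simp)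
          · intro h
            have : (st.drop idx).length = 0 := by rw [h]; rfl
            rw [List.length_drop] at this
            omega
        · intro v hv
          obtain ⟨i, hi, hiv⟩ := hI.occ v (List.drop_subset _ _ hv)
          exact ⟨i, by simp only [List.length_append]; omega,
            by rw [List.getD_append _ _ _ _ hi]; exact hiv⟩
        · intro v h1 h2 h3
          by_cases hvst : v ∈ st
          · -- v was popped: v > x, witness: occurrence of v, then x at the end
            have hvgt : x < v := by
              have hmemtake : v ∈ st.take idx := by
                have h : v ∈ st.take idx ++ st.drop idx := by
                  rw [List.take_append_drop]; exact hvst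
                rcases List.mem_append.1 h with h | h
                · exact h
                · exact absurd h h3
              obtain ⟨i', hi', hv'⟩ := List.mem_iff_getElem.1 hmemtake
              have hlen : i' < idx := by
                have h := hi'
                rw [List.length_take] at h
                omega
              have hgd : st.getD i' 0 = v := by
                have h : (st.take idx).getD i' 0 = v := by
                  rw [List.getD_eq_getElem _ _ hi']; exact hv'
                rwa [List.getD_eq_getElem?_getD, List.getElem?_take_of_lt hlen,
                  ← List.getD_eq_getElem?_getD] at h
              have := sorted_getD_lt hI.sorted hlen hidxlt
              rw [hgd, hidxval] at this
              omega
            obtain ⟨i, hi, hiv⟩ := hI.occ v hvst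
            refine ⟨i, q.length, by omega,
              by simp only [List.length_append]; simp, ?_, ?_⟩
            · rw [List.getD_append _ _ _ _ hi]; exact hiv
            · rw [List.getD_append_right _ _ _ _ (le_refl _), Nat.sub_self,
                List.getD_cons_zero]
              exact hvgt
          · obtain ⟨i, k, hik, hk, hiv, hkv⟩ := hI.dead v h1 h2 hvst
            exact ⟨i, k, hik, by simp only [List.length_append]; omega,
              by rw [List.getD_append _ _ _ _ (by omega)]; exact hiv,
              by rw [List.getD_append _ _ _ _ hk]; exact hkv⟩
      have hr' : IsRGS ((q ++ [x]) ++ rest) := by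
        rw [hLdef, List.append_cons] at hr; exact hr
      have hnc' : ¬ Crossing ((q ++ [x]) ++ rest) := by
        rw [hLdef, List.append_cons] at hnc; exact hnc
      obtain ⟨hmv, hdec⟩ := encode_good rest (q ++ [x]) (st.drop idx) c hI' hr' hnc'
      constructor
      · rw [henc]
        show idx < st.length ∧ MValid (st.length - idx) _
        refine ⟨hidxlt, ?_⟩
        rw [← List.length_drop]
        exact hmv
      · rw [henc]
        show (st.drop idx).headD 0 :: decodeAux (st.drop idx) c _ = _
        rw [hdec, headD_drop, hidxval]

/-- encode ∘ decode = id on valid move sequences. -/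
lemma enc_dec : ∀ (ms st : List ℕ) (c : ℕ), st.Chain' (· > ·) → (∀ x ∈ st, x ≤ c) →
    MValid st.length ms → encodeAux st c (decodeAux st c ms) = ms
  | [], _, _, _, _, _ => rfl
  | 0 :: ms, st, c, hs, hub, hv => by
    have hv' : MValid ((c+1) :: st).length ms := by
      simpa [MValid, List.length_cons] using hv
    have hs' : ((c+1) :: st).Chain' (· > ·) := by
      refine List.isChain_cons.2 ⟨fun b hb => ?_, hs⟩
      have := hub b (List.mem_of_mem_head? hb)
      omega
    have hub' : ∀ x ∈ (c+1) :: st, x ≤ c + 1 := by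
      intro y hy
      rcases List.mem_cons.1 hy with rfl | hy
      · exact le_refl _
      · have := hub y hy; omega
    show encodeAux st c ((c+1) :: decodeAux ((c+1) :: st) (c+1) ms) = _
    rw [show encodeAux st c ((c+1) :: decodeAux ((c+1)::st) (c+1) ms)
        = 0 :: encodeAux ((c+1)::st) (c+1) (decodeAux ((c+1)::st) (c+1) ms) from by
      simp [encodeAux]]
    rw [enc_dec ms _ _ hs' hub' hv']
  | (j+1) :: ms, st, c, hs, hub, hv => by
    obtain ⟨hj, hv0⟩ : j < st.length ∧ MValid (st.length - j) ms := hv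
    have hx : (st.drop j).headD 0 = st.getD j 0 := headD_drop st j
    set x := st.getD j 0 with hxdef
    have hxmem : x ∈ st := getD_mem hj
    have hxc : x ≤ c := hub x hxmem
    have hfresh : ¬ (x = c + 1) := by omega
    have hidx : st.idxOf x = j := by
      have hlt : st.idxOf x < st.length := List.idxOf_lt_length_iff.2 hxmem
      have hval : st.getD (st.idxOf x) 0 = x := by
        rw [List.getD_eq_getElem _ _ hlt]
        exact List.getElem_idxOf hlt
      exact sorted_getD_inj hs hlt hj (by rw [hval])
    have hv' : MValid (st.drop j).length ms := by
      simpa [List.length_drop] using hv0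
    show encodeAux st c ((st.drop j).headD 0 :: decodeAux (st.drop j) c ms) = _
    rw [hx]
    simp only [encodeAux, if_neg hfresh, hidx]
    rw [enc_dec ms _ _ (hs.sublist (List.drop_sublist _ _))
      (fun y hy => hub y (List.drop_subset _ _ hy)) hv']

/-! ### Single-step semantics -/

def mstep : List ℕ × ℕ → ℕ → List ℕ × ℕ
  | (st, c), 0 => ((c+1) :: st, c+1)
  | (st, c), j+1 => (st.drop j, c)

def mlet : List ℕ × ℕ → ℕ → ℕ
  | (_, c), 0 => c+1
  | (st, _), j+1 => (st.drop j).headD 0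

lemma decodeAux_cons (st : List ℕ) (c m : ℕ) (ms : List ℕ) :
    decodeAux st c (m :: ms)
      = mlet (st, c) m :: decodeAux (mstep (st, c) m).1 (mstep (st, c) m).2 ms := by
  cases m <;> rfl

lemma mstep_headD (st : List ℕ) (c m : ℕ) :
    (mstep (st, c) m).1.headD 0 = mlet (st, c) m := by
  cases m <;> rfl

/-- Reachable-state invariant. -/
structure SI (st : List ℕ) (c : ℕ) : Prop where
  sorted : st.Chain' (· > ·)
  pos : ∀ x ∈ st, 1 ≤ x
  ub : ∀ x ∈ st, x ≤ c

lemma SI.nil : SI [] 0 := ⟨List.isChain_nil, by simp, by simp⟩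

lemma SI.push {st c} (h : SI st c) : SI ((c+1) :: st) (c+1) := by
  refine ⟨?_, ?_, ?_⟩
  · refine List.isChain_cons.2 ⟨fun b hb => ?_, h.sorted⟩
    have := h.ub b (List.mem_of_mem_head? hb)
    omega
  · intro y hy
    rcases List.mem_cons.1 hy with rfl | hy
    · omega
    · exact h.pos y hy
  · intro y hy
    rcases List.mem_cons.1 hy with rfl | hy
    · exact le_refl _
    · have := h.ub y hy; omega

lemma SI.dropj {st c} (h : SI st c) (j : ℕ) : SI (st.drop j) c :=
  ⟨h.sorted.sublist (List.drop_sublist _ _),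
   fun y hy => h.pos y (List.drop_subset _ _ hy),
   fun y hy => h.ub y (List.drop_subset _ _ hy)⟩

lemma step_SI {st c} (h : SI st c) (m : ℕ) : SI (mstep (st, c) m).1 (mstep (st, c) m).2 := by
  cases m with
  | zero => exact h.push
  | succ j => exact h.dropj j

lemma mvalid_head {st : List ℕ} {m : ℕ} {ms : List ℕ}
    (h : MValid st.length (m :: ms)) : m = 0 ∨ m - 1 < st.length := by
  cases m with
  | zero => exact Or.inl rfl
  | succ j => exact Or.inr (by simpa using h.1)

lemma mvalid_step {st : List ℕ} {c : ℕ} {m : ℕ} {ms : List ℕ}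
    (h : MValid st.length (m :: ms)) : MValid (mstep (st, c) m).1.length ms := by
  cases m with
  | zero => simpa [mstep, MValid] using h
  | succ j =>
    obtain ⟨hj, hv⟩ := h
    simpa [mstep, List.length_drop] using hv

lemma step_nonempty {st : List ℕ} {c m : ℕ} (hval : m = 0 ∨ m - 1 < st.length) :
    (mstep (st, c) m).1 ≠ [] := by
  cases m with
  | zero => simp [mstep]
  | succ j =>
    rcases hval with h | h
    · omega
    · simp only [mstep]
      intro hnil
      have : (st.drop j).length = 0 := by rw [hnil]; rfl
      rw [List.length_drop] at this
      omega

lemma mlet_ret (st : List ℕ) (c j : ℕ) : mlet (st, c) (j+1) = st.getD j 0 := by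
  simp [mlet, headD_drop]

/-- If the produced letter exceeds the stack top, the move was a push. -/
lemma fresh_inv {st : List ℕ} {c m : ℕ} (hS : SI st c)
    (hval : m = 0 ∨ m - 1 < st.length) (h : st.headD 0 < mlet (st, c) m) : m = 0 := by
  cases m with
  | zero => rfl
  | succ j =>
    have hj : j < st.length := by rcases hval with h' | h' <;> omega
    rw [mlet_ret] at h
    have := sorted_getD_le_head hS.sorted hj
    omega

/-- If the produced letter equals the stack entry at depth `k`, the move was `k+1`. -/
lemma depth_inv {st : List ℕ} {c m : ℕ} (hS : SI st c)
    (hval : m = 0 ∨ m - 1 < st.length) {k : ℕ} (hk : k < st.length)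
    (h : mlet (st, c) m = st.getD k 0) : m = k + 1 := by
  cases m with
  | zero =>
    have : st.getD k 0 ≤ c := hS.ub _ (getD_mem hk)
    have : mlet (st, c) 0 = c + 1 := rfl
    omega
  | succ j =>
    have hj : j < st.length := by rcases hval with h' | h' <;> omega
    rw [mlet_ret] at h
    have := sorted_getD_inj hS.sorted hj hk h
    omega

lemma headD_eq_getD0 {st : List ℕ} (h : st ≠ []) : st.headD 0 = st.getD 0 0 := by
  cases st with
  | nil => exact absurd rfl h
  | cons a t => rfl

/-! ### OrdIso for explicit 4-windows -/

lemma ordIso_1121 {a b : ℕ} (h : a < b) : OrdIso [1,1,2,1] [a,a,b,a] := by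
  refine ⟨rfl, fun j k hj hk => ?_⟩
  simp only [List.length_cons, List.length_nil] at hj hk
  interval_cases j <;> interval_cases k <;> simp <;> omega

lemma ordIso_1211 {a b : ℕ} (h : a < b) : OrdIso [1,2,1,1] [a,b,a,a] := by
  refine ⟨rfl, fun j k hj hk => ?_⟩
  simp only [List.length_cons, List.length_nil] at hj hk
  interval_cases j <;> interval_cases k <;> simp <;> omega

lemma ordIso_1221 {a b : ℕ} (h : a < b) : OrdIso [1,2,2,1] [a,b,b,a] := by
  refine ⟨rfl, fun j k hj hk => ?_⟩
  simp only [List.length_cons, List.length_nil] at hj hk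
  interval_cases j <;> interval_cases k <;> simp <;> omega

lemma ordIso_1231 {a b c : ℕ} (h1 : a < b) (h2 : b < c) : OrdIso [1,2,3,1] [a,b,c,a] := by
  refine ⟨rfl, fun j k hj hk => ?_⟩
  simp only [List.length_cons, List.length_nil] at hj hk
  interval_cases j <;> interval_cases k <;> simp <;> omega

lemma ordIso_1121_extract {x0 x1 x2 x3 : ℕ} (h : OrdIso [1,1,2,1] [x0,x1,x2,x3]) :
    x1 = x0 ∧ x0 < x2 ∧ x3 = x0 := by
  obtain ⟨-, h⟩ := h
  have h01 := h 0 1 (by norm_num) (by norm_num)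
  have h10 := h 1 0 (by norm_num) (by norm_num)
  have h02 := h 0 2 (by norm_num) (by norm_num)
  have h03 := h 0 3 (by norm_num) (by norm_num)
  have h30 := h 3 0 (by norm_num) (by norm_num)
  simp at h01 h10 h02 h03 h30
  omega

lemma ordIso_1211_extract {x0 x1 x2 x3 : ℕ} (h : OrdIso [1,2,1,1] [x0,x1,x2,x3]) :
    x0 < x1 ∧ x2 = x0 ∧ x3 = x0 := by
  obtain ⟨-, h⟩ := h
  have h01 := h 0 1 (by norm_num) (by norm_num)
  have h02 := h 0 2 (by norm_num) (by norm_num)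
  have h20 := h 2 0 (by norm_num) (by norm_num)
  have h03 := h 0 3 (by norm_num) (by norm_num)
  have h30 := h 3 0 (by norm_num) (by norm_num)
  simp at h01 h02 h20 h03 h30
  omega

lemma ordIso_1221_extract {x0 x1 x2 x3 : ℕ} (h : OrdIso [1,2,2,1] [x0,x1,x2,x3]) :
    x0 < x1 ∧ x2 = x1 ∧ x3 = x0 := by
  obtain ⟨-, h⟩ := h
  have h01 := h 0 1 (by norm_num) (by norm_num)
  have h12 := h 1 2 (by norm_num) (by norm_num)
  have h21 := h 2 1 (by norm_num) (by norm_num)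
  have h03 := h 0 3 (by norm_num) (by norm_num)
  have h30 := h 3 0 (by norm_num) (by norm_num)
  simp at h01 h12 h21 h03 h30
  omega

lemma ordIso_1231_extract {x0 x1 x2 x3 : ℕ} (h : OrdIso [1,2,3,1] [x0,x1,x2,x3]) :
    x0 < x1 ∧ x1 < x2 ∧ x3 = x0 := by
  obtain ⟨-, h⟩ := h
  have h01 := h 0 1 (by norm_num) (by norm_num)
  have h12 := h 1 2 (by norm_num) (by norm_num)
  have h03 := h 0 3 (by norm_num) (by norm_num)
  have h30 := h 3 0 (by norm_num) (by norm_num)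
  simp at h01 h12 h03 h30
  omega

@[simp] lemma mstep_0 (st : List ℕ) (c : ℕ) : mstep (st, c) 0 = ((c+1) :: st, c+1) := rfl
@[simp] lemma mstep_succ (st : List ℕ) (c j : ℕ) : mstep (st, c) (j+1) = (st.drop j, c) := rfl
@[simp] lemma mlet_0 (st : List ℕ) (c : ℕ) : mlet (st, c) 0 = c + 1 := rfl

lemma SI.mono {st : List ℕ} {c c' : ℕ} (h : SI st c) (hcc : c ≤ c') : SI st c' :=
  ⟨h.sorted, h.pos, fun x hx => le_trans (h.ub x hx) hcc⟩

@[simp] lemma getElem0_head? (st : List ℕ) : st[0]? = st.head? := by cases st <;> simp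

@[simp] lemma getD0_headD (st : List ℕ) : st.getD 0 0 = st.headD 0 := by cases st <;> rfl

section cores

variable {st : List ℕ} {c : ℕ} {m1 m2 m3 : ℕ} {rest : List ℕ}

lemma core_1221 (hS : SI st c) (hne : st ≠ [])
    (hv : MValid st.length (m1 :: m2 :: m3 :: rest)) :
    OrdIso [1,2,2,1] [st.headD 0, mlet (st, c) m1,
      mlet (mstep (st, c) m1) m2, mlet (mstep (mstep (st, c) m1) m2) m3]
      ↔ (m1 = 0 ∧ m2 = 1 ∧ m3 = 2) := by
  have hac : st.headD 0 ≤ c := hS.ub _ (headD_mem hne)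
  have hlen0 : 0 < st.length := List.length_pos_iff.2 hne
  constructor
  · intro h
    obtain ⟨h01, h21, h30⟩ := ordIso_1221_extract h
    have hm1 : m1 = 0 := fresh_inv hS (mvalid_head hv) h01
    subst hm1
    have hv2 : MValid ((c+1) :: st).length (m2 :: m3 :: rest) := by
      have := mvalid_step (c := c) hv
      simpa using this
    have hm2 : m2 = 1 := by
      refine depth_inv hS.push (mvalid_head hv2) (k := 0) (by simp) ?_
      simp only [mstep_0, mlet_0] at h21
      simpa using h21
    subst hm2
    have hv3 : MValid ((c+1) :: st).length (m3 :: rest) := by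
      have := mvalid_step (c := c+1) hv2
      simpa using this
    have hm3 : m3 = 2 := by
      refine depth_inv hS.push (mvalid_head hv3) (k := 1) (by simp; omega) ?_
      simp only [mstep_0, mstep_succ, List.drop_zero] at h30
      rw [h30, ← getD0_headD]
      simp
    exact ⟨rfl, rfl, hm3⟩
  · rintro ⟨rfl, rfl, rfl⟩
    have e2 : mlet (mstep (st, c) 0) 1 = c + 1 := by simp [mlet_ret]
    have e3 : mlet (mstep (mstep (st, c) 0) 1) 2 = st.headD 0 := by
      simp [mlet_ret, getD0_headD]
    rw [e2, e3, mlet_0]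
    exact ordIso_1221 (by omega)

lemma core_1121 (hS : SI st c) (hne : st ≠ [])
    (hv : MValid st.length (m1 :: m2 :: m3 :: rest)) :
    OrdIso [1,1,2,1] [st.headD 0, mlet (st, c) m1,
      mlet (mstep (st, c) m1) m2, mlet (mstep (mstep (st, c) m1) m2) m3]
      ↔ (m1 = 1 ∧ m2 = 0 ∧ m3 = 2) := by
  have hac : st.headD 0 ≤ c := hS.ub _ (headD_mem hne)
  have hlen0 : 0 < st.length := List.length_pos_iff.2 hne
  constructor
  · intro h
    obtain ⟨h10, h02, h30⟩ := ordIso_1121_extract h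
    have hm1 : m1 = 1 := by
      refine depth_inv hS (mvalid_head hv) (k := 0) hlen0 ?_
      rw [h10, ← getD0_headD]
    subst hm1
    have hv2 : MValid st.length (m2 :: m3 :: rest) := by
      have := mvalid_step (c := c) hv
      simpa using this
    have hm2 : m2 = 0 := by
      refine fresh_inv hS (mvalid_head hv2) ?_
      simp only [mstep_succ, List.drop_zero] at h02
      exact h02
    subst hm2
    have hv3 : MValid ((c+1) :: st).length (m3 :: rest) := by
      have := mvalid_step (c := c) hv2
      simpa using this
    have hm3 : m3 = 2 := by
      refine depth_inv hS.push (mvalid_head hv3) (k := 1) (by simp; omega) ?_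
      simp only [mstep_succ, mstep_0, List.drop_zero] at h30
      rw [h30, ← getD0_headD]
      simp
    exact ⟨rfl, rfl, hm3⟩
  · rintro ⟨rfl, rfl, rfl⟩
    have e1 : mlet (st, c) 1 = st.headD 0 := by
      simp [mlet_ret, getD0_headD]
    have e2 : mlet (mstep (st, c) 1) 0 = c + 1 := by simp
    have e3 : mlet (mstep (mstep (st, c) 1) 0) 2 = st.headD 0 := by
      simp [mlet_ret, getD0_headD]
    rw [e1, e2, e3]
    exact ordIso_1121 (by omega)

lemma core_1211 (hS : SI st c) (hne : st ≠ [])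
    (hv : MValid st.length (m1 :: m2 :: m3 :: rest)) :
    OrdIso [1,2,1,1] [st.headD 0, mlet (st, c) m1,
      mlet (mstep (st, c) m1) m2, mlet (mstep (mstep (st, c) m1) m2) m3]
      ↔ (m1 = 0 ∧ m2 = 2 ∧ m3 = 1) := by
  have hac : st.headD 0 ≤ c := hS.ub _ (headD_mem hne)
  have hlen0 : 0 < st.length := List.length_pos_iff.2 hne
  constructor
  · intro h
    obtain ⟨h01, h20, h30⟩ := ordIso_1211_extract h
    have hm1 : m1 = 0 := fresh_inv hS (mvalid_head hv) h01
    subst hm1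
    have hv2 : MValid ((c+1) :: st).length (m2 :: m3 :: rest) := by
      have := mvalid_step (c := c) hv
      simpa using this
    have hm2 : m2 = 2 := by
      refine depth_inv hS.push (mvalid_head hv2) (k := 1) (by simp; omega) ?_
      simp only [mstep_0] at h20
      rw [h20, ← getD0_headD]
      simp
    subst hm2
    have hv3 : MValid st.length (m3 :: rest) := by
      have := mvalid_step (c := c+1) hv2
      simpa using this
    have hm3 : m3 = 1 := by
      refine depth_inv (hS.mono (by omega : c ≤ c + 1)) (mvalid_head hv3) (k := 0) hlen0 ?_
      simp only [mstep_0, mstep_succ, List.drop_succ_cons, List.drop_zero] at h30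
      rw [h30, ← getD0_headD]
    exact ⟨rfl, rfl, hm3⟩
  · rintro ⟨rfl, rfl, rfl⟩
    have e2 : mlet (mstep (st, c) 0) 2 = st.headD 0 := by
      simp [mlet_ret, getD0_headD]
    have e3 : mlet (mstep (mstep (st, c) 0) 2) 1 = st.headD 0 := by
      simp [mlet_ret, getD0_headD]
    rw [e2, e3, mlet_0]
    exact ordIso_1211 (by omega)

lemma core_1231 (hS : SI st c) (hne : st ≠ [])
    (hv : MValid st.length (m1 :: m2 :: m3 :: rest)) :
    OrdIso [1,2,3,1] [st.headD 0, mlet (st, c) m1,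
      mlet (mstep (st, c) m1) m2, mlet (mstep (mstep (st, c) m1) m2) m3]
      ↔ (m1 = 0 ∧ m2 = 0 ∧ m3 = 3) := by
  have hac : st.headD 0 ≤ c := hS.ub _ (headD_mem hne)
  have hlen0 : 0 < st.length := List.length_pos_iff.2 hne
  constructor
  · intro h
    obtain ⟨h01, h12, h30⟩ := ordIso_1231_extract h
    have hm1 : m1 = 0 := fresh_inv hS (mvalid_head hv) h01
    subst hm1
    have hv2 : MValid ((c+1) :: st).length (m2 :: m3 :: rest) := by
      have := mvalid_step (c := c) hv
      simpa using this
    have hm2 : m2 = 0 := by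
      refine fresh_inv hS.push (mvalid_head hv2) ?_
      simp only [mstep_0, mlet_0] at h12
      simpa using h12
    subst hm2
    have hv3 : MValid ((c+2) :: (c+1) :: st).length (m3 :: rest) := by
      have := mvalid_step (c := c+1) hv2
      simpa [show c + 1 + 1 = c + 2 by omega] using this
    have hm3 : m3 = 3 := by
      refine depth_inv (hS.push.push) (mvalid_head hv3) (k := 2) (by simp [hlen0]) ?_
      simp only [mstep_0] at h30 ⊢
      rw [h30, ← getD0_headD]
      simp
    exact ⟨rfl, rfl, hm3⟩
  · rintro ⟨rfl, rfl, rfl⟩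
    have e3 : mlet (mstep (mstep (st, c) 0) 0) 3 = st.headD 0 := by
      simp [mlet_ret, getD0_headD]
    have e2 : mlet (mstep (st, c) 0) 0 = c + 2 := rfl
    rw [e2, e3, mlet_0]
    exact ordIso_1231 (by omega) (by omega)

end cores

lemma window_take (st : List ℕ) (c m0 m1 m2 m3 : ℕ) (rest : List ℕ) :
    (decodeAux st c (m0 :: m1 :: m2 :: m3 :: rest)).take 4
      = [(mstep (st, c) m0).1.headD 0,
         mlet (mstep (st, c) m0) m1,
         mlet (mstep (mstep (st, c) m0) m1) m2,
         mlet (mstep (mstep (mstep (st, c) m0) m1) m2) m3] := by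
  rw [decodeAux_cons, decodeAux_cons, decodeAux_cons, decodeAux_cons, mstep_headD]
  rfl

section windows

variable {st : List ℕ} {c : ℕ} {m0 m1 m2 m3 : ℕ} {rest : List ℕ}

lemma window_iff_1121 (hS : SI st c) (hv : MValid st.length (m0 :: m1 :: m2 :: m3 :: rest)) :
    OrdIso [1,1,2,1] ((decodeAux st c (m0 :: m1 :: m2 :: m3 :: rest)).take 4)
      ↔ (m1 = 1 ∧ m2 = 0 ∧ m3 = 2) := by
  rw [window_take]
  exact core_1121 (step_SI hS m0) (step_nonempty (mvalid_head hv)) (mvalid_step hv)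

lemma window_iff_1211 (hS : SI st c) (hv : MValid st.length (m0 :: m1 :: m2 :: m3 :: rest)) :
    OrdIso [1,2,1,1] ((decodeAux st c (m0 :: m1 :: m2 :: m3 :: rest)).take 4)
      ↔ (m1 = 0 ∧ m2 = 2 ∧ m3 = 1) := by
  rw [window_take]
  exact core_1211 (step_SI hS m0) (step_nonempty (mvalid_head hv)) (mvalid_step hv)

lemma window_iff_1221 (hS : SI st c) (hv : MValid st.length (m0 :: m1 :: m2 :: m3 :: rest)) :
    OrdIso [1,2,2,1] ((decodeAux st c (m0 :: m1 :: m2 :: m3 :: rest)).take 4)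
      ↔ (m1 = 0 ∧ m2 = 1 ∧ m3 = 2) := by
  rw [window_take]
  exact core_1221 (step_SI hS m0) (step_nonempty (mvalid_head hv)) (mvalid_step hv)

lemma window_iff_1231 (hS : SI st c) (hv : MValid st.length (m0 :: m1 :: m2 :: m3 :: rest)) :
    OrdIso [1,2,3,1] ((decodeAux st c (m0 :: m1 :: m2 :: m3 :: rest)).take 4)
      ↔ (m1 = 0 ∧ m2 = 0 ∧ m3 = 3) := by
  rw [window_take]
  exact core_1231 (step_SI hS m0) (step_nonempty (mvalid_head hv)) (mvalid_step hv)

end windows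

lemma decodeAux_drop : ∀ (p : ℕ) (ms st : List ℕ) (c : ℕ),
    (decodeAux st c ms).drop p
      = decodeAux ((ms.take p).foldl mstep (st, c)).1
          ((ms.take p).foldl mstep (st, c)).2 (ms.drop p) := by
  intro p
  induction p with
  | zero => intro ms st c; simp
  | succ p ih =>
    intro ms st c
    cases ms with
    | nil => simp [decodeAux]
    | cons m ms =>
      rw [decodeAux_cons]
      simp only [List.drop_succ_cons, List.take_succ_cons, List.foldl_cons]
      exact ih ms (mstep (st, c) m).1 (mstep (st, c) m).2

lemma run_state : ∀ (p : ℕ) (ms st : List ℕ) (c : ℕ), SI st c → MValid st.length ms →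
    SI ((ms.take p).foldl mstep (st, c)).1 ((ms.take p).foldl mstep (st, c)).2
      ∧ MValid ((ms.take p).foldl mstep (st, c)).1.length (ms.drop p) := by
  intro p
  induction p with
  | zero => intro ms st c h hv; simpa using ⟨h, hv⟩
  | succ p ih =>
    intro ms st c h hv
    cases ms with
    | nil => simpa using ⟨h, hv⟩
    | cons m ms =>
      simp only [List.take_succ_cons, List.foldl_cons, List.drop_succ_cons]
      exact ih ms (mstep (st, c) m).1 (mstep (st, c) m).2 (step_SI h m) (mvalid_step hv)

def TripleAt (t0 t1 t2 : ℕ) (m : List ℕ) (p : ℕ) : Prop :=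
  p + 4 ≤ m.length ∧ m.getD (p+1) 0 = t0 ∧ m.getD (p+2) 0 = t1 ∧ m.getD (p+3) 0 = t2

lemma exists_four {s : List ℕ} (h : 4 ≤ s.length) :
    ∃ a b c d t, s = a :: b :: c :: d :: t := by
  rcases s with _ | ⟨a, _ | ⟨b, _ | ⟨c, _ | ⟨d, t⟩⟩⟩⟩ <;>
    first
      | exact ⟨a, b, c, d, t, rfl⟩
      | (exfalso; simp at h; omega)
      | (exfalso; simp at h)

lemma occ_bridge_gen (τ : List ℕ) (hτ : τ.length = 4) (t0 t1 t2 : ℕ)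
    (W : ∀ (st : List ℕ) (c : ℕ) (m0 m1 m2 m3 : ℕ) (rest : List ℕ),
      SI st c → MValid st.length (m0 :: m1 :: m2 :: m3 :: rest) →
      (OrdIso τ ((decodeAux st c (m0 :: m1 :: m2 :: m3 :: rest)).take 4)
        ↔ (m1 = t0 ∧ m2 = t1 ∧ m3 = t2)))
    (m : List ℕ) (hm : MValid 0 m) (p : ℕ) :
    occAt τ (dec m) p ↔ TripleAt t0 t1 t2 m p := by
  obtain ⟨hSI, hval⟩ := run_state p m [] 0 SI.nil (by simpa using hm)
  have hdrop : (dec m).drop p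
      = decodeAux ((m.take p).foldl mstep ([], 0)).1
          ((m.take p).foldl mstep ([], 0)).2 (m.drop p) := decodeAux_drop p m [] 0
  have hgd : ∀ i, (m.drop p).getD i 0 = m.getD (p + i) 0 := fun i => getD_drop m p i
  constructor
  · intro h
    rw [occAt, hτ, hdrop] at h
    have hlen4 : 4 ≤ (m.drop p).length := by
      have hl := h.1
      rw [hτ, List.length_take, decodeAux_length] at hl
      omega
    obtain ⟨a, b, c', d, t, hsplit⟩ := exists_four hlen4
    rw [hsplit] at h
    have hw := (W _ _ a b c' d t hSI (by rw [← hsplit]; exact hval)).1 h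
    have hlenm : p + 4 ≤ m.length := by
      rw [List.length_drop] at hlen4; omega
    refine ⟨hlenm, ?_, ?_, ?_⟩
    · rw [show p + 1 = p + 1 from rfl, ← hgd 1, hsplit]; exact hw.1
    · rw [← hgd 2, hsplit]; exact hw.2.1
    · rw [← hgd 3, hsplit]; exact hw.2.2
  · rintro ⟨hlen, h1, h2, h3⟩
    have hlen4 : 4 ≤ (m.drop p).length := by
      rw [List.length_drop]; omega
    obtain ⟨a, b, c', d, t, hsplit⟩ := exists_four hlen4
    have hb : b = t0 := by rw [← h1, ← hgd 1, hsplit]; rfl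
    have hc : c' = t1 := by rw [← h2, ← hgd 2, hsplit]; rfl
    have hd : d = t2 := by rw [← h3, ← hgd 3, hsplit]; rfl
    rw [occAt, hτ, hdrop, hsplit]
    exact (W _ _ a b c' d t hSI (by rw [← hsplit]; exact hval)).2 ⟨hb, hc, hd⟩

def togAux (u0 u1 u2 v0 v1 v2 : ℕ) : List ℕ → List ℕ
  | a :: b :: c :: r =>
    if a = u0 ∧ b = u1 ∧ c = u2 then v0 :: v1 :: v2 :: togAux u0 u1 u2 v0 v1 v2 r
    else if a = v0 ∧ b = v1 ∧ c = v2 then u0 :: u1 :: u2 :: togAux u0 u1 u2 v0 v1 v2 r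
    else a :: togAux u0 u1 u2 v0 v1 v2 (b :: c :: r)
  | s => s

section tog
variable (u0 u1 u2 v0 v1 v2 : ℕ)

local notation "T" => togAux u0 u1 u2 v0 v1 v2

lemma togAux_cons3 (a b c : ℕ) (r : List ℕ) :
    T (a :: b :: c :: r)
      = if a = u0 ∧ b = u1 ∧ c = u2 then v0 :: v1 :: v2 :: T r
        else if a = v0 ∧ b = v1 ∧ c = v2 then u0 :: u1 :: u2 :: T r
        else a :: T (b :: c :: r) := rfl

lemma togAux_nil : T [] = [] := rfl
lemma togAux_one (a : ℕ) : T [a] = [a] := rfl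
lemma togAux_two (a b : ℕ) : T [a, b] = [a, b] := rfl

lemma togAux_length : ∀ s : List ℕ, (T s).length = s.length
  | [] => by rw [togAux_nil]
  | [a] => by rw [togAux_one]
  | [a, b] => by rw [togAux_two]
  | a :: b :: c :: r => by
    rw [togAux_cons3]
    split_ifs with h1 h2
    · simp [togAux_length r]
    · simp [togAux_length r]
    · simp [togAux_length (b :: c :: r)]
  termination_by s => s.length

end tog

structure TogOK (u0 u1 u2 v0 v1 v2 : ℕ) : Prop where
  ne : ¬(u0 = v0 ∧ u1 = v1 ∧ u2 = v2)
  uu1 : ¬(u1 = u0 ∧ u2 = u1)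
  uv1 : ¬(u1 = v0 ∧ u2 = v1)
  vv1 : ¬(v1 = v0 ∧ v2 = v1)
  vu1 : ¬(v1 = u0 ∧ v2 = u1)
  uu2 : u2 ≠ u0
  uv2 : u2 ≠ v0
  vv2 : v2 ≠ v0
  vu2 : v2 ≠ u0

/-- A marked occurrence of the 3-word `w0 w1 w2` in `s` at position `p`. -/
def SOcc (w0 w1 w2 : ℕ) (s : List ℕ) (p : ℕ) : Prop :=
  p + 3 ≤ s.length ∧ s.getD p 0 = w0 ∧ s.getD (p+1) 0 = w1 ∧ s.getD (p+2) 0 = w2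

lemma SOcc_cons3 (w0 w1 w2 x y z : ℕ) (t : List ℕ) (q : ℕ) :
    SOcc w0 w1 w2 (x :: y :: z :: t) (q+3) ↔ SOcc w0 w1 w2 t q := by
  unfold SOcc
  constructor <;> rintro ⟨hl, e1, e2, e3⟩ <;>
    exact ⟨by simp at hl ⊢; omega, e1, e2, e3⟩

lemma SOcc_cons1 (w0 w1 w2 x : ℕ) (t : List ℕ) (q : ℕ) :
    SOcc w0 w1 w2 (x :: t) (q+1) ↔ SOcc w0 w1 w2 t q := by
  unfold SOcc
  constructor <;> rintro ⟨hl, e1, e2, e3⟩ <;>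
    exact ⟨by simp at hl ⊢; omega, e1, e2, e3⟩

lemma togAux_peek (u0 u1 u2 v0 v1 v2 : ℕ) (b c : ℕ) (r : List ℕ) :
    (∃ x, togAux u0 u1 u2 v0 v1 v2 (b :: c :: r) = v0 :: v1 :: x ∧ b = u0 ∧ c = u1) ∨
    (∃ x, togAux u0 u1 u2 v0 v1 v2 (b :: c :: r) = u0 :: u1 :: x ∧ b = v0 ∧ c = v1) ∨
    (∃ x, togAux u0 u1 u2 v0 v1 v2 (b :: c :: r) = b :: v0 :: x ∧ c = u0) ∨
    (∃ x, togAux u0 u1 u2 v0 v1 v2 (b :: c :: r) = b :: u0 :: x ∧ c = v0) ∨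
    (∃ x, togAux u0 u1 u2 v0 v1 v2 (b :: c :: r) = b :: c :: x) := by
  cases r with
  | nil => exact Or.inr (Or.inr (Or.inr (Or.inr ⟨[], togAux_two _ _ _ _ _ _ _ _⟩)))
  | cons r0 r1 =>
    rw [togAux_cons3]
    split_ifs with h1 h2
    · exact Or.inl ⟨_, rfl, h1.1, h1.2.1⟩
    · exact Or.inr (Or.inl ⟨_, rfl, h2.1, h2.2.1⟩)
    · cases r1 with
      | nil =>
        refine Or.inr (Or.inr (Or.inr (Or.inr ⟨[r0], ?_⟩)))
        rw [togAux_two]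
      | cons r2 r3 =>
        rw [togAux_cons3]
        split_ifs with h3 h4
        · exact Or.inr (Or.inr (Or.inl ⟨_, rfl, h3.1⟩))
        · exact Or.inr (Or.inr (Or.inr (Or.inl ⟨_, rfl, h4.1⟩)))
        · exact Or.inr (Or.inr (Or.inr (Or.inr ⟨_, rfl⟩)))

lemma tog_invol (u0 u1 u2 v0 v1 v2 : ℕ) (hok : TogOK u0 u1 u2 v0 v1 v2) :
    ∀ s : List ℕ, togAux u0 u1 u2 v0 v1 v2 (togAux u0 u1 u2 v0 v1 v2 s) = s
  | [] => rfl
  | [a] => rfl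
  | [a, b] => rfl
  | a :: b :: c :: r => by
    rw [togAux_cons3]
    split_ifs with h1 h2
    · rw [togAux_cons3, if_neg (fun h => hok.ne ⟨h.1.symm, h.2.1.symm, h.2.2.symm⟩),
        if_pos ⟨rfl, rfl, rfl⟩, tog_invol u0 u1 u2 v0 v1 v2 hok r,
        h1.1, h1.2.1, h1.2.2]
    · rw [togAux_cons3, if_pos ⟨rfl, rfl, rfl⟩, tog_invol u0 u1 u2 v0 v1 v2 hok r,
        h2.1, h2.2.1, h2.2.2]
    · rcases togAux_peek u0 u1 u2 v0 v1 v2 b c r with ⟨x, hx, hb, hc⟩ | ⟨x, hx, hb, hc⟩ |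
        ⟨x, hx, hc⟩ | ⟨x, hx, hc⟩ | ⟨x, hx⟩
      · rw [hx, togAux_cons3,
          if_neg (fun h => hok.uv1 ⟨h.2.1.symm, h.2.2.symm⟩),
          if_neg (fun h => hok.vv1 ⟨h.2.1.symm, h.2.2.symm⟩),
          ← hx, tog_invol u0 u1 u2 v0 v1 v2 hok (b :: c :: r)]
      · rw [hx, togAux_cons3,
          if_neg (fun h => hok.uu1 ⟨h.2.1.symm, h.2.2.symm⟩),
          if_neg (fun h => hok.vu1 ⟨h.2.1.symm, h.2.2.symm⟩),
          ← hx, tog_invol u0 u1 u2 v0 v1 v2 hok (b :: c :: r)]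
      · rw [hx, togAux_cons3,
          if_neg (fun h => hok.uv2 h.2.2.symm),
          if_neg (fun h => hok.vv2 h.2.2.symm),
          ← hx, tog_invol u0 u1 u2 v0 v1 v2 hok (b :: c :: r)]
      · rw [hx, togAux_cons3,
          if_neg (fun h => hok.uu2 h.2.2.symm),
          if_neg (fun h => hok.vu2 h.2.2.symm),
          ← hx, tog_invol u0 u1 u2 v0 v1 v2 hok (b :: c :: r)]
      · rw [hx, togAux_cons3,
          if_neg (fun h => h1 ⟨h.1, h.2.1, h.2.2⟩),
          if_neg (fun h => h2 ⟨h.1, h.2.1, h.2.2⟩),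
          ← hx, tog_invol u0 u1 u2 v0 v1 v2 hok (b :: c :: r)]
  termination_by s => s.length

lemma tog_valid (u0 u1 u2 v0 v1 v2 : ℕ)
    (HU : ∀ (h : ℕ) (r : List ℕ), 1 ≤ h → (MValid h (u0 :: u1 :: u2 :: r) ↔ MValid h r))
    (HV : ∀ (h : ℕ) (r : List ℕ), 1 ≤ h → (MValid h (v0 :: v1 :: v2 :: r) ↔ MValid h r)) :
    ∀ (s : List ℕ) (h : ℕ), 1 ≤ h → MValid h s → MValid h (togAux u0 u1 u2 v0 v1 v2 s)
  | [], _, _, hv => hv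
  | [a], _, _, hv => hv
  | [a, b], _, _, hv => hv
  | a :: b :: c :: r, h, hh, hv => by
    rw [togAux_cons3]
    split_ifs with h1 h2
    · rw [h1.1, h1.2.1, h1.2.2] at hv
      exact (HV h _ hh).2 (tog_valid u0 u1 u2 v0 v1 v2 HU HV r h hh ((HU h _ hh).1 hv))
    · rw [h2.1, h2.2.1, h2.2.2] at hv
      exact (HU h _ hh).2 (tog_valid u0 u1 u2 v0 v1 v2 HU HV r h hh ((HV h _ hh).1 hv))
    · cases a with
      | zero =>
        show MValid (h + 1) (togAux u0 u1 u2 v0 v1 v2 (b :: c :: r))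
        exact tog_valid u0 u1 u2 v0 v1 v2 HU HV (b :: c :: r) (h+1) (by omega) hv
      | succ j =>
        obtain ⟨hj, hv'⟩ := hv
        exact ⟨hj, tog_valid u0 u1 u2 v0 v1 v2 HU HV (b :: c :: r) (h - j) (by omega) hv'⟩
  termination_by s => s.length

lemma tog_occ (u0 u1 u2 v0 v1 v2 : ℕ) (hok : TogOK u0 u1 u2 v0 v1 v2) :
    ∀ (s : List ℕ) (p : ℕ),
      SOcc u0 u1 u2 (togAux u0 u1 u2 v0 v1 v2 s) p ↔ SOcc v0 v1 v2 s p
  | [], p => by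
    rw [togAux_nil]
    constructor <;> (rintro ⟨hl, -⟩; simp at hl)
  | [a], p => by
    rw [togAux_one]
    constructor <;> (rintro ⟨hl, -⟩; simp at hl)
  | [a, b], p => by
    rw [togAux_two]
    constructor <;> (rintro ⟨hl, -⟩; simp at hl)
  | a :: b :: c :: r, p => by
    rw [togAux_cons3]
    split_ifs with h1 h2
    · rw [h1.1, h1.2.1, h1.2.2]
      rcases p with _ | _ | _ | q
      · constructor
        · rintro ⟨-, e1, e2, e3⟩
          exact absurd ⟨e1.symm, e2.symm, e3.symm⟩ hok.ne
        · rintro ⟨-, e1, e2, e3⟩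
          exact absurd ⟨e1, e2, e3⟩ hok.ne
      · constructor
        · rintro ⟨-, e1, e2, -⟩
          exact absurd ⟨e1, e2⟩ hok.vu1
        · rintro ⟨-, e1, e2, -⟩
          exact absurd ⟨e1, e2⟩ hok.uv1
      · constructor
        · rintro ⟨-, e1, -, -⟩
          exact absurd e1 hok.vu2
        · rintro ⟨-, e1, -, -⟩
          exact absurd e1 hok.uv2
      · rw [show q+1+1+1 = q+3 from rfl, SOcc_cons3, SOcc_cons3]
        exact tog_occ u0 u1 u2 v0 v1 v2 hok r q
    · rw [h2.1, h2.2.1, h2.2.2]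
      rcases p with _ | _ | _ | q
      · have hlen : (togAux u0 u1 u2 v0 v1 v2 r).length = r.length :=
          togAux_length _ _ _ _ _ _ _
        constructor
        · rintro ⟨hl, -, -, -⟩
          refine ⟨?_, rfl, rfl, rfl⟩
          simp only [List.length_cons] at hl ⊢
          omega
        · rintro ⟨hl, -, -, -⟩
          refine ⟨?_, rfl, rfl, rfl⟩
          simp only [List.length_cons] at hl ⊢
          omega
      · constructor
        · rintro ⟨-, e1, e2, -⟩
          exact absurd ⟨e1, e2⟩ hok.uu1
        · rintro ⟨-, e1, e2, -⟩
          exact absurd ⟨e1, e2⟩ hok.vv1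
      · constructor
        · rintro ⟨-, e1, -, -⟩
          exact absurd e1 hok.uu2
        · rintro ⟨-, e1, -, -⟩
          exact absurd e1 hok.vv2
      · rw [show q+1+1+1 = q+3 from rfl, SOcc_cons3, SOcc_cons3]
        exact tog_occ u0 u1 u2 v0 v1 v2 hok r q
    · rcases p with _ | q
      · constructor
        · rintro ⟨-, e1, e2, e3⟩
          rcases togAux_peek u0 u1 u2 v0 v1 v2 b c r with ⟨x, hx, hb, hc⟩ | ⟨x, hx, hb, hc⟩ |
            ⟨x, hx, hc⟩ | ⟨x, hx, hc⟩ | ⟨x, hx⟩ <;> rw [hx] at e2 e3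
          · exact absurd ⟨(show v0 = u1 from e2).symm, (show v1 = u2 from e3).symm⟩ hok.uv1
          · exact absurd ⟨(show u0 = u1 from e2).symm, (show u1 = u2 from e3).symm⟩ hok.uu1
          · exact absurd (show v0 = u2 from e3).symm hok.uv2
          · exact absurd (show u0 = u2 from e3).symm hok.uu2
          · exact absurd ⟨e1, (show b = u1 from e2), (show c = u2 from e3)⟩ h1
        · rintro ⟨-, e1, e2, e3⟩
          exact absurd ⟨e1, e2, e3⟩ h2
      · rw [SOcc_cons1, SOcc_cons1]
        exact tog_occ u0 u1 u2 v0 v1 v2 hok (b :: c :: r) q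
  termination_by s => s.length

/-! ### The toggle on full move sequences -/

def tg (u0 u1 u2 v0 v1 v2 : ℕ) : List ℕ → List ℕ
  | [] => []
  | m0 :: s => m0 :: togAux u0 u1 u2 v0 v1 v2 s

lemma tg_length (u0 u1 u2 v0 v1 v2 : ℕ) (m : List ℕ) :
    (tg u0 u1 u2 v0 v1 v2 m).length = m.length := by
  cases m with
  | nil => rfl
  | cons m0 s =>
    show (m0 :: togAux u0 u1 u2 v0 v1 v2 s).length = _
    simp [togAux_length]

lemma tg_invol (u0 u1 u2 v0 v1 v2 : ℕ) (hok : TogOK u0 u1 u2 v0 v1 v2) (m : List ℕ) :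
    tg u0 u1 u2 v0 v1 v2 (tg u0 u1 u2 v0 v1 v2 m) = m := by
  cases m with
  | nil => rfl
  | cons m0 s =>
    show m0 :: togAux u0 u1 u2 v0 v1 v2 (togAux u0 u1 u2 v0 v1 v2 s) = m0 :: s
    rw [tog_invol u0 u1 u2 v0 v1 v2 hok s]

lemma tg_mvalid (u0 u1 u2 v0 v1 v2 : ℕ)
    (HU : ∀ (h : ℕ) (r : List ℕ), 1 ≤ h → (MValid h (u0 :: u1 :: u2 :: r) ↔ MValid h r))
    (HV : ∀ (h : ℕ) (r : List ℕ), 1 ≤ h → (MValid h (v0 :: v1 :: v2 :: r) ↔ MValid h r))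
    {m : List ℕ} (hm : MValid 0 m) : MValid 0 (tg u0 u1 u2 v0 v1 v2 m) := by
  cases m with
  | nil => trivial
  | cons m0 s =>
    cases m0 with
    | zero =>
      show MValid 1 (togAux u0 u1 u2 v0 v1 v2 s)
      exact tog_valid u0 u1 u2 v0 v1 v2 HU HV s 1 (le_refl _) hm
    | succ j =>
      obtain ⟨hj, -⟩ := hm
      omega

lemma tripleAt_cons (t0 t1 t2 m0 : ℕ) (s : List ℕ) (p : ℕ) :
    TripleAt t0 t1 t2 (m0 :: s) p ↔ SOcc t0 t1 t2 s p := by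
  unfold TripleAt SOcc
  constructor <;> rintro ⟨hl, e1, e2, e3⟩ <;>
    exact ⟨by simp at hl ⊢; omega, e1, e2, e3⟩

lemma tg_triple_u (u0 u1 u2 v0 v1 v2 : ℕ) (hok : TogOK u0 u1 u2 v0 v1 v2)
    (m : List ℕ) (p : ℕ) :
    TripleAt u0 u1 u2 (tg u0 u1 u2 v0 v1 v2 m) p ↔ TripleAt v0 v1 v2 m p := by
  cases m with
  | nil =>
    constructor <;> (rintro ⟨hl, -⟩; simp [tg] at hl)
  | cons m0 s =>
    show TripleAt u0 u1 u2 (m0 :: togAux u0 u1 u2 v0 v1 v2 s) p ↔ _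
    rw [tripleAt_cons, tripleAt_cons]
    exact tog_occ u0 u1 u2 v0 v1 v2 hok s p

lemma tg_triple_v (u0 u1 u2 v0 v1 v2 : ℕ) (hok : TogOK u0 u1 u2 v0 v1 v2)
    (m : List ℕ) (p : ℕ) :
    TripleAt v0 v1 v2 (tg u0 u1 u2 v0 v1 v2 m) p ↔ TripleAt u0 u1 u2 m p := by
  have h := tg_triple_u u0 u1 u2 v0 v1 v2 hok (tg u0 u1 u2 v0 v1 v2 m) p
  rw [tg_invol u0 u1 u2 v0 v1 v2 hok m] at h
  exact h.symm

/-! ### Counting -/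

noncomputable def TCount (t0 t1 t2 : ℕ) (m : List ℕ) : ℕ :=
  Nat.card {p : ℕ // TripleAt t0 t1 t2 m p}

/-! ### Top-level bijection lemmas -/

lemma rgs_nil : IsRGS [] := ⟨rfl, by simp, by simp⟩

lemma star_nil : Star [] := by intro j k m _ _ hm; simp at hm

lemma dec_NC {m : List ℕ} (hm : MValid 0 m) : NCseq m.length (dec m) := by
  have h := decode_good m [] [] 0 (by simpa using hm) StI.nil rgs_nil star_nil
  rw [List.nil_append] at h
  exact ⟨by rw [dec, decodeAux_length], h.1, h.2.not_crossing⟩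

lemma enc_NC {l : List ℕ} {n : ℕ} (h : NCseq n l) :
    MValid 0 (enc l) ∧ dec (enc l) = l := by
  have := encode_good l [] [] 0 EI.nil (by simpa using h.2.1) (by simpa using h.2.2)
  exact this

lemma enc_dec_id {m : List ℕ} (hm : MValid 0 m) : enc (dec m) = m :=
  enc_dec m [] 0 List.isChain_nil (by simp) (by simpa using hm)

lemma enc_length (l : List ℕ) : (enc l).length = l.length := encodeAux_length _ _ _

lemma card_transfer (P : List ℕ → Prop) (n : ℕ) :
    Nat.card {l : List ℕ // NCseq n l ∧ P l}
      = Nat.card {m : List ℕ // (m.length = n ∧ MValid 0 m) ∧ P (dec m)} := by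
  apply Nat.card_congr
  refine ⟨fun x => ⟨enc x.1, ⟨by rw [enc_length]; exact x.2.1.1, (enc_NC x.2.1).1⟩,
      by rw [(enc_NC x.2.1).2]; exact x.2.2⟩,
    fun y => ⟨dec y.1, ?_, y.2.2⟩, fun x => ?_, fun y => ?_⟩
  · have := dec_NC y.2.1.2
    rw [y.2.1.1] at this
    exact this
  · exact Subtype.ext (enc_NC x.2.1).2
  · exact Subtype.ext (enc_dec_id y.2.1.2)

/-- Equality of the pattern-count distributions, generic form. -/
lemma pair_card (τu τv : List ℕ) (u0 u1 u2 v0 v1 v2 : ℕ)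
    (Bu : ∀ m : List ℕ, MValid 0 m → ∀ p, occAt τu (dec m) p ↔ TripleAt u0 u1 u2 m p)
    (Bv : ∀ m : List ℕ, MValid 0 m → ∀ p, occAt τv (dec m) p ↔ TripleAt v0 v1 v2 m p)
    (hok : TogOK u0 u1 u2 v0 v1 v2)
    (HU : ∀ (h : ℕ) (r : List ℕ), 1 ≤ h → (MValid h (u0 :: u1 :: u2 :: r) ↔ MValid h r))
    (HV : ∀ (h : ℕ) (r : List ℕ), 1 ≤ h → (MValid h (v0 :: v1 :: v2 :: r) ↔ MValid h r))
    (n k : ℕ) :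
    Nat.card {l : List ℕ // NCseq n l ∧ occCount τu l = k}
      = Nat.card {l : List ℕ // NCseq n l ∧ occCount τv l = k} := by
  have hcu : ∀ m : List ℕ, MValid 0 m → occCount τu (dec m) = TCount u0 u1 u2 m :=
    fun m hm => Nat.card_congr (Equiv.subtypeEquivRight (Bu m hm))
  have hcv : ∀ m : List ℕ, MValid 0 m → occCount τv (dec m) = TCount v0 v1 v2 m :=
    fun m hm => Nat.card_congr (Equiv.subtypeEquivRight (Bv m hm))
  rw [card_transfer (fun l => occCount τu l = k) n,
    card_transfer (fun l => occCount τv l = k) n]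
  apply Nat.card_congr
  have htu : ∀ m : List ℕ, TCount u0 u1 u2 (tg u0 u1 u2 v0 v1 v2 m) = TCount v0 v1 v2 m :=
    fun m => Nat.card_congr (Equiv.subtypeEquivRight (tg_triple_u u0 u1 u2 v0 v1 v2 hok m))
  have htv : ∀ m : List ℕ, TCount v0 v1 v2 (tg u0 u1 u2 v0 v1 v2 m) = TCount u0 u1 u2 m :=
    fun m => Nat.card_congr (Equiv.subtypeEquivRight (tg_triple_v u0 u1 u2 v0 v1 v2 hok m))
  refine ⟨fun x => ⟨tg u0 u1 u2 v0 v1 v2 x.1,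
      ⟨by rw [tg_length]; exact x.2.1.1, tg_mvalid _ _ _ _ _ _ HU HV x.2.1.2⟩, ?_⟩,
    fun y => ⟨tg u0 u1 u2 v0 v1 v2 y.1,
      ⟨by rw [tg_length]; exact y.2.1.1, tg_mvalid _ _ _ _ _ _ HU HV y.2.1.2⟩, ?_⟩,
    fun x => ?_, fun y => ?_⟩
  · rw [hcv _ (tg_mvalid _ _ _ _ _ _ HU HV x.2.1.2), htv, ← hcu _ x.2.1.2]
    exact x.2.2
  · rw [hcu _ (tg_mvalid _ _ _ _ _ _ HU HV y.2.1.2), htu, ← hcv _ y.2.1.2]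
    exact y.2.2
  · exact Subtype.ext (tg_invol _ _ _ _ _ _ hok x.1)
  · exact Subtype.ext (tg_invol _ _ _ _ _ _ hok y.1)

/-! ### Concrete instances -/

lemma bridge_1121 : ∀ m : List ℕ, MValid 0 m →
    ∀ p, occAt [1,1,2,1] (dec m) p ↔ TripleAt 1 0 2 m p :=
  fun m hm p => occ_bridge_gen [1,1,2,1] rfl 1 0 2
    (fun _ _ _ _ _ _ _ hS hv => window_iff_1121 hS hv) m hm p

lemma bridge_1211 : ∀ m : List ℕ, MValid 0 m →
    ∀ p, occAt [1,2,1,1] (dec m) p ↔ TripleAt 0 2 1 m p :=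
  fun m hm p => occ_bridge_gen [1,2,1,1] rfl 0 2 1
    (fun _ _ _ _ _ _ _ hS hv => window_iff_1211 hS hv) m hm p

lemma bridge_1221 : ∀ m : List ℕ, MValid 0 m →
    ∀ p, occAt [1,2,2,1] (dec m) p ↔ TripleAt 0 1 2 m p :=
  fun m hm p => occ_bridge_gen [1,2,2,1] rfl 0 1 2
    (fun _ _ _ _ _ _ _ hS hv => window_iff_1221 hS hv) m hm p

lemma bridge_1231 : ∀ m : List ℕ, MValid 0 m →
    ∀ p, occAt [1,2,3,1] (dec m) p ↔ TripleAt 0 0 3 m p :=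
  fun m hm p => occ_bridge_gen [1,2,3,1] rfl 0 0 3
    (fun _ _ _ _ _ _ _ hS hv => window_iff_1231 hS hv) m hm p

lemma H_012 : ∀ (h : ℕ) (r : List ℕ), 1 ≤ h → (MValid h (0 :: 1 :: 2 :: r) ↔ MValid h r) := by
  intro h r hh
  show MValid (h+1) (1 :: 2 :: r) ↔ _
  show (0 < h + 1 ∧ MValid (h + 1 - 0) (2 :: r)) ↔ _
  constructor
  · rintro ⟨-, -, hv⟩; exact hv
  · intro hv
    refine ⟨?_, ?_, hv⟩
    · omega
    · show (1:ℕ) < h + 1 - 0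
      omega

lemma H_102 : ∀ (h : ℕ) (r : List ℕ), 1 ≤ h → (MValid h (1 :: 0 :: 2 :: r) ↔ MValid h r) := by
  intro h r hh
  show (0 < h ∧ MValid (h - 0) (0 :: 2 :: r)) ↔ _
  constructor
  · rintro ⟨-, -, hv⟩; exact hv
  · intro hv
    refine ⟨?_, ?_, hv⟩
    · omega
    · show (1:ℕ) < h - 0 + 1
      omega

lemma H_021 : ∀ (h : ℕ) (r : List ℕ), 1 ≤ h → (MValid h (0 :: 2 :: 1 :: r) ↔ MValid h r) := by
  intro h r hh
  show MValid (h+1) (2 :: 1 :: r) ↔ _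
  show (1 < h + 1 ∧ MValid (h + 1 - 1) (1 :: r)) ↔ _
  constructor
  · rintro ⟨-, -, hv⟩; exact hv
  · intro hv
    refine ⟨?_, ?_, hv⟩
    · omega
    · show (0:ℕ) < h + 1 - 1
      omega

lemma H_003 : ∀ (h : ℕ) (r : List ℕ), 1 ≤ h → (MValid h (0 :: 0 :: 3 :: r) ↔ MValid h r) := by
  intro h r hh
  show MValid (h+2) (3 :: r) ↔ _
  show (2 < h + 2 ∧ MValid (h + 2 - 2) r) ↔ _
  constructor
  · rintro ⟨-, hv⟩; exact hv
  · intro hv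
    refine ⟨?_, hv⟩
    show (2:ℕ) < h + 2
    omega

lemma main_1121_1221 (n k : ℕ) :
    Nat.card {l : List ℕ // NCseq n l ∧ occCount [1,1,2,1] l = k}
      = Nat.card {l : List ℕ // NCseq n l ∧ occCount [1,2,2,1] l = k} :=
  pair_card [1,1,2,1] [1,2,2,1] 1 0 2 0 1 2 bridge_1121 bridge_1221
    (by constructor <;> decide) H_102 H_012 n k

lemma main_1211_1221 (n k : ℕ) :
    Nat.card {l : List ℕ // NCseq n l ∧ occCount [1,2,1,1] l = k}
      = Nat.card {l : List ℕ // NCseq n l ∧ occCount [1,2,2,1] l = k} :=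
  pair_card [1,2,1,1] [1,2,2,1] 0 2 1 0 1 2 bridge_1211 bridge_1221
    (by constructor <;> decide) H_021 H_012 n k

lemma main_1221_1231 (n k : ℕ) :
    Nat.card {l : List ℕ // NCseq n l ∧ occCount [1,2,2,1] l = k}
      = Nat.card {l : List ℕ // NCseq n l ∧ occCount [1,2,3,1] l = k} :=
  pair_card [1,2,2,1] [1,2,3,1] 0 1 2 0 0 3 bridge_1221 bridge_1231
    (by constructor <;> decide) H_012 H_003 n k

end NCP

/-- The subwords 1121, 1211, 1221 and 1231 are all equidistributed on NC_n. -/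
theorem stmt13 (n k : ℕ) :
    Nat.card {l : List ℕ // NCseq n l ∧ occCount [1, 1, 2, 1] l = k} =
      Nat.card {l : List ℕ // NCseq n l ∧ occCount [1, 2, 1, 1] l = k} ∧
    Nat.card {l : List ℕ // NCseq n l ∧ occCount [1, 2, 1, 1] l = k} =
      Nat.card {l : List ℕ // NCseq n l ∧ occCount [1, 2, 2, 1] l = k} ∧
    Nat.card {l : List ℕ // NCseq n l ∧ occCount [1, 2, 2, 1] l = k} =
      Nat.card {l : List ℕ // NCseq n l ∧ occCount [1, 2, 3, 1] l = k} :=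
  ⟨(NCP.main_1121_1221 n k).trans (NCP.main_1211_1221 n k).symm,
   NCP.main_1211_1221 n k, NCP.main_1221_1231 n k⟩
end

section
/- For n ≥ 3, the total number of occurrences of the subword 121 over all non-crossing partitions of [n] equals binom(2n−4, n−1). -/
namespace NC15
open List Finset

def maxL (l : List ℕ) : ℕ := l.foldr max 0
def sufmin (l : List ℕ) (j : ℕ) : ℕ := (l.drop j).foldr min (l.getD j 0)
def SA (l : List ℕ) : Finset ℕ := (Finset.range l.length).image (sufmin l)
def hS (l : List ℕ) : ℕ := (SA l).card
def NoBAB (l : List ℕ) : Prop := ∀ j k m, j < k → k < m → m < l.length →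
  l.getD m 0 = l.getD j 0 → l.getD j 0 ≤ l.getD k 0
def NCgood (l : List ℕ) : Prop := IsRGS l ∧ NoBAB l
def step (l : List ℕ) : Finset ℕ := insert (maxL l + 1) (SA l)
def exts (l : List ℕ) : ℕ → Finset (List ℕ)
  | 0 => {[]}
  | t+1 => (step l).biUnion (fun v => (exts (l ++ [v]) t).image (v :: ·))

lemma getD_append' (l : List ℕ) (v : ℕ) (i : ℕ) (h : i < l.length) :
    (l ++ [v]).getD i 0 = l.getD i 0 := List.getD_append l [v] 0 i h

lemma getD_append_len (l : List ℕ) (v : ℕ) : (l ++ [v]).getD l.length 0 = v := by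
  simp [List.getD_eq_getElem?_getD]

lemma getD_take' (l : List ℕ) (i s : ℕ) (h : i < s) : (l.take s).getD i 0 = l.getD i 0 := by
  simp [List.getD_eq_getElem?_getD, List.getElem?_take, h]

lemma getD_mem (l : List ℕ) (i : ℕ) (h : i < l.length) : l.getD i 0 ∈ l := by
  rw [List.getD_eq_getElem l 0 h]; exact List.getElem_mem h

lemma maxL_append (l : List ℕ) (v : ℕ) : maxL (l ++ [v]) = max (maxL l) v := by
  induction l with
  | nil => simp [maxL]
  | cons x xs ih => simp [maxL] at ih ⊢; omega

lemma le_maxL {l : List ℕ} {y : ℕ} (h : y ∈ l) : y ≤ maxL l := by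
  induction l with
  | nil => simp at h
  | cons x xs ih =>
    rcases List.mem_cons.mp h with rfl | h
    · simp [maxL]
    · simp only [maxL, List.foldr_cons]; exact le_trans (ih h) (le_max_right _ _)

lemma foldr_min_le_init (xs : List ℕ) (i : ℕ) : xs.foldr min i ≤ i := by
  induction xs with
  | nil => simp
  | cons x xs ih => exact le_trans (min_le_right _ _) ih

lemma foldr_min_le_mem {xs : List ℕ} {y : ℕ} (i : ℕ) (h : y ∈ xs) : xs.foldr min i ≤ y := by
  induction xs with
  | nil => simp at h
  | cons x xs ih =>
    rcases List.mem_cons.mp h with rfl | h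
    · exact min_le_left _ _
    · exact le_trans (min_le_right _ _) (ih h)

lemma foldr_min_mem (xs : List ℕ) (i : ℕ) : xs.foldr min i = i ∨ xs.foldr min i ∈ xs := by
  induction xs with
  | nil => left; rfl
  | cons x xs ih =>
    rcases le_total x (xs.foldr min i) with h | h
    · right; simp [min_eq_left h]
    · rcases ih with h' | h'
      · left; rw [List.foldr_cons, min_eq_right h, h']
      · right; simp only [List.foldr_cons, min_eq_right h]; exact List.mem_cons_of_mem _ h'

lemma foldr_min_append (xs : List ℕ) (i v : ℕ) :
    (xs ++ [v]).foldr min i = min (xs.foldr min i) v := by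
  induction xs with
  | nil => simp [min_comm]
  | cons x xs ih => simp only [List.cons_append, List.foldr_cons, ih]; omega

-- chunk 2 body, to be appended to c1 content (without `end NC15`)
lemma getD_drop (l : List ℕ) (j m : ℕ) : (l.drop j).getD m 0 = l.getD (j + m) 0 := by
  simp [List.getD_eq_getElem?_getD, List.getElem?_drop]

lemma sufmin_le (l : List ℕ) {j k : ℕ} (hj : j ≤ k) (hk : k < l.length) :
    sufmin l j ≤ l.getD k 0 := by
  have : l.getD k 0 ∈ l.drop j := by
    have h1 : (l.drop j).getD (k - j) 0 = l.getD k 0 := by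
      rw [getD_drop]; congr 1; omega
    rw [← h1]
    exact getD_mem _ _ (by rw [List.length_drop]; omega)
  exact foldr_min_le_mem _ this

lemma sufmin_attained (l : List ℕ) {j : ℕ} (hj : j < l.length) :
    ∃ k, j ≤ k ∧ k < l.length ∧ l.getD k 0 = sufmin l j := by
  rcases foldr_min_mem (l.drop j) (l.getD j 0) with h | h
  · exact ⟨j, le_refl j, hj, h.symm⟩
  · obtain ⟨m, hm, hval⟩ := List.getElem_of_mem h
    rw [List.length_drop] at hm
    refine ⟨j + m, by omega, by omega, ?_⟩
    have : (l.drop j).getD m 0 = sufmin l j := by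
      rw [List.getD_eq_getElem _ 0 (by rw [List.length_drop]; omega)]; exact hval
    rw [← this, getD_drop]

lemma sufmin_append_lt (l : List ℕ) (v : ℕ) {j : ℕ} (hj : j < l.length) :
    sufmin (l ++ [v]) j = min (sufmin l j) v := by
  unfold sufmin
  rw [List.drop_append_of_le_length (by omega), getD_append' _ _ _ hj, foldr_min_append]

lemma sufmin_append_len (l : List ℕ) (v : ℕ) : sufmin (l ++ [v]) l.length = v := by
  unfold sufmin
  rw [List.drop_append_of_le_length (le_refl _), List.drop_length, getD_append_len]
  simp

lemma SA_append (l : List ℕ) (v : ℕ) :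
    SA (l ++ [v]) = insert v ((SA l).filter (· ≤ v)) := by
  ext x
  simp only [SA, Finset.mem_image, Finset.mem_range, Finset.mem_insert, Finset.mem_filter,
    List.length_append, List.length_singleton]
  constructor
  · rintro ⟨j, hj, rfl⟩
    rcases Nat.lt_or_ge j l.length with h | h
    · rw [sufmin_append_lt l v h]
      rcases le_total (sufmin l j) v with h2 | h2
      · right; exact ⟨⟨j, h, (min_eq_left h2).symm⟩, by omega⟩
      · left; omega
    · have : j = l.length := by omega
      subst this; left; exact sufmin_append_len l v
  · rintro (rfl | ⟨⟨j, hj, rfl⟩, hle⟩)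
    · exact ⟨l.length, by omega, sufmin_append_len l _⟩
    · exact ⟨j, by omega, by rw [sufmin_append_lt l _ hj]; omega⟩

lemma SA_mem_mem {l : List ℕ} {x : ℕ} (h : x ∈ SA l) : x ∈ l := by
  simp only [SA, Finset.mem_image, Finset.mem_range] at h
  obtain ⟨j, hj, rfl⟩ := h
  obtain ⟨k, _, hk2, hk3⟩ := sufmin_attained l hj
  rw [← hk3]; exact getD_mem _ _ hk2

lemma SA_le_maxL {l : List ℕ} {x : ℕ} (h : x ∈ SA l) : x ≤ maxL l := le_maxL (SA_mem_mem h)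

lemma SA_le_last {l : List ℕ} {x : ℕ} (h : x ∈ SA l) : x ≤ l.getD (l.length - 1) 0 := by
  simp only [SA, Finset.mem_image, Finset.mem_range] at h
  obtain ⟨j, hj, rfl⟩ := h
  exact sufmin_le l (by omega) (by omega)

lemma sufmin_last {l : List ℕ} (h : l ≠ []) :
    sufmin l (l.length - 1) = l.getD (l.length - 1) 0 := by
  have hl : 0 < l.length := List.length_pos_iff.mpr h
  apply _root_.le_antisymm (sufmin_le l (le_refl _) (by omega))
  obtain ⟨k, hk1, hk2, hk3⟩ := sufmin_attained l (j := l.length - 1) (by omega)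
  have : k = l.length - 1 := by omega
  subst this; rw [hk3]

lemma last_mem_SA {l : List ℕ} (h : l ≠ []) : l.getD (l.length - 1) 0 ∈ SA l := by
  have hl : 0 < l.length := List.length_pos_iff.mpr h
  simp only [SA, Finset.mem_image, Finset.mem_range]
  exact ⟨l.length - 1, by omega, sufmin_last h⟩
lemma getD_take'' (l : List ℕ) (i s d : ℕ) (h : i < s) : (l.take s).getD i d = l.getD i d := by
  simp [List.getD_eq_getElem?_getD, List.getElem?_take, h]

lemma RGS_append (l : List ℕ) (v : ℕ) :
    IsRGS (l ++ [v]) ↔ IsRGS l ∧ 1 ≤ v ∧ v ≤ maxL l + 1 := by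
  constructor
  · rintro ⟨h1, h2, h3⟩
    refine ⟨⟨?_, fun x hx => h2 x (by simp [hx]), fun i hi => ?_⟩, h2 v (by simp), ?_⟩
    · cases l with
      | nil => rfl
      | cons a as => simpa using h1
    · have hlen : i + 1 < l.length := hi
      have := h3 i (by simp; omega)
      rwa [List.getD_append _ _ _ _ (by omega), List.take_append_of_le_length (by omega)] at this
    · rcases Nat.eq_zero_or_pos l.length with h | h
      · have hnil : l = [] := List.length_eq_zero_iff.mp h
        subst hnil
        simp only [List.nil_append] at h1
        simp only [List.getD_cons_zero] at h1
        simp [maxL, h1]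
      · have := h3 (l.length - 1) (by simp; omega)
        rw [show l.length - 1 + 1 = l.length by omega] at this
        rwa [getD_append_len, List.take_append_of_le_length (le_refl _), List.take_length] at this
  · rintro ⟨⟨h1, h2, h3⟩, hv1, hv2⟩
    refine ⟨?_, fun x hx => ?_, fun i hi => ?_⟩
    · cases l with
      | nil =>
        simp only [maxL, List.foldr_nil] at hv2
        simp only [List.nil_append, List.getD_cons_zero]
        omega
      | cons a as => simpa using h1
    · rcases List.mem_append.mp hx with h | h
      · exact h2 x h
      · simp at h; omega
    · simp only [List.length_append, List.length_singleton] at hi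
      rcases Nat.lt_or_ge (i + 1) l.length with h | h
      · rw [List.getD_append _ _ _ _ (by omega), List.take_append_of_le_length (by omega)]
        exact h3 i h
      · have : i + 1 = l.length := by omega
        rw [this, getD_append_len, List.take_append_of_le_length (le_refl _), List.take_length]
        exact hv2

lemma R1 {l : List ℕ} (h : IsRGS l) : ∀ v, 1 ≤ v → v ≤ maxL l → v ∈ l := by
  induction l using List.reverseRecOn with
  | nil => intro v h1 h2; simp [maxL] at h2; omega
  | append_singleton xs x ih =>
    intro v h1 h2
    obtain ⟨hr, hx1, hx2⟩ := (RGS_append xs x).mp h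
    rw [maxL_append] at h2
    rcases Nat.lt_or_ge (maxL xs) v with hgt | hle
    · have hvx : v ≤ x := by omega
      have : v = x := by omega
      subst this; simp
    · exact List.mem_append_left _ (ih hr v h1 hle)

lemma RGS_take {l : List ℕ} (h : IsRGS l) (s : ℕ) : IsRGS (l.take s) := by
  obtain ⟨h1, h2, h3⟩ := h
  refine ⟨?_, fun x hx => h2 x (List.take_subset s l hx), fun i hi => ?_⟩
  · rcases Nat.eq_zero_or_pos s with rfl | hs
    · rfl
    · rcases Nat.eq_zero_or_pos l.length with hl | hl
      · rw [List.length_eq_zero_iff.mp hl]; simp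
      · rw [getD_take'' _ _ _ _ hs]; exact h1
  · rw [List.length_take] at hi
    rw [getD_take'' _ _ _ _ (by omega), List.take_take, min_eq_left (by omega)]
    exact h3 i (by omega)

lemma NoBAB_append (l : List ℕ) (v : ℕ) :
    NoBAB (l ++ [v]) ↔ NoBAB l ∧
      ∀ j k, j < k → k < l.length → l.getD j 0 = v → v ≤ l.getD k 0 := by
  constructor
  · intro h
    constructor
    · intro j k m hjk hkm hm heq
      have := h j k m hjk hkm (by simp; omega)
        (by rwa [List.getD_append _ _ _ _ (by omega), List.getD_append _ _ _ _ (by omega)])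
      rwa [List.getD_append _ _ _ _ (by omega), List.getD_append _ _ _ _ (by omega)] at this
    · intro j k hjk hk heq
      have := h j k l.length hjk hk (by simp)
        (by rw [getD_append_len, List.getD_append _ _ _ _ (by omega)]; omega)
      rwa [List.getD_append _ _ _ _ (by omega), List.getD_append _ _ _ _ (by omega), heq] at this
  · rintro ⟨h1, h2⟩ j k m hjk hkm hm heq
    simp only [List.length_append, List.length_singleton] at hm
    rcases Nat.lt_or_ge m l.length with h | h
    · rw [List.getD_append _ _ _ _ (by omega), List.getD_append _ _ _ _ (by omega)] at heq ⊢
      exact h1 j k m hjk hkm h heq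
    · have hm' : m = l.length := by omega
      subst hm'
      rw [getD_append_len, List.getD_append _ _ _ _ (by omega)] at heq
      rw [List.getD_append _ _ _ _ (by omega), List.getD_append _ _ _ _ (by omega)]
      exact heq ▸ h2 j k hjk (by omega) heq.symm

lemma NoBAB_take {l : List ℕ} (h : NoBAB l) (s : ℕ) : NoBAB (l.take s) := by
  intro j k m hjk hkm hm heq
  rw [List.length_take] at hm
  have e1 : (l.take s).getD m 0 = l.getD m 0 := getD_take'' _ _ _ _ (by omega)
  have e2 : (l.take s).getD j 0 = l.getD j 0 := getD_take'' _ _ _ _ (by omega)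
  have e3 : (l.take s).getD k 0 = l.getD k 0 := getD_take'' _ _ _ _ (by omega)
  rw [e1, e2] at heq
  rw [e2, e3]
  exact h j k m hjk hkm (by omega) heq

lemma NCgood_take {l : List ℕ} (h : NCgood l) (s : ℕ) : NCgood (l.take s) :=
  ⟨RGS_take h.1 s, NoBAB_take h.2 s⟩

lemma NCgood_prefix {x y : List ℕ} (h : NCgood (x ++ y)) : NCgood x := by
  have := NCgood_take h x.length
  rwa [List.take_left] at this

lemma Crossing_iff {l : List ℕ} (h : IsRGS l) :
    Crossing l ↔ ∃ j k m, j < k ∧ k < m ∧ m < l.length ∧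
      l.getD m 0 = l.getD j 0 ∧ l.getD k 0 < l.getD j 0 := by
  constructor
  · rintro ⟨i, j, k, m, h1, h2, h3, h4, h5, h6, h7⟩
    exact ⟨j, k, m, h2, h3, h4, h6.symm, by omega⟩
  · rintro ⟨j, k, m, hjk, hkm, hm, heq, hlt⟩
    have hj : j < l.length := by omega
    have hk : k < l.length := by omega
    have hbmem : l.getD j 0 ∈ l.take (j + 1) := by
      have : (l.take (j+1)).getD j 0 = l.getD j 0 := getD_take'' _ _ _ _ (by omega)
      rw [← this]
      exact getD_mem _ _ (by rw [List.length_take]; omega)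
    have hamem : l.getD k 0 ∈ l.take (j + 1) := by
      apply R1 (RGS_take h (j+1)) _ (h.2.1 _ (getD_mem _ _ hk))
      calc l.getD k 0 ≤ l.getD j 0 := by omega
        _ ≤ maxL (l.take (j+1)) := le_maxL hbmem
    obtain ⟨q, hq, hqv⟩ := List.getElem_of_mem hamem
    have hq2 : q < (j+1) ⊓ l.length := by rw [List.length_take] at hq; exact hq
    have hqd : l.getD q 0 = l.getD k 0 := by
      rw [← getD_take'' l q (j+1) 0 (by omega), List.getD_eq_getElem _ 0 hq, hqv]
    have hqj : q < j := by
      rcases Nat.lt_trichotomy q j with h' | rfl | h'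
      · exact h'
      · omega
      · omega
    exact ⟨q, j, k, m, hqj, hjk, hkm, hm, hqd, heq.symm, by omega⟩

lemma NCseq_iff (n : ℕ) (l : List ℕ) :
    NCseq n l ↔ l.length = n ∧ IsRGS l ∧ NoBAB l := by
  unfold NCseq
  constructor
  · rintro ⟨hl, hr, hc⟩
    refine ⟨hl, hr, fun j k m hjk hkm hm heq => ?_⟩
    by_contra hlt
    exact hc ((Crossing_iff hr).mpr ⟨j, k, m, hjk, hkm, hm, heq, by omega⟩)
  · rintro ⟨hl, hr, hb⟩
    refine ⟨hl, hr, fun hc => ?_⟩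
    obtain ⟨j, k, m, hjk, hkm, hm, heq, hlt⟩ := (Crossing_iff hr).mp hc
    exact absurd (hb j k m hjk hkm hm heq) (by omega)
lemma SA_mem_exists {l : List ℕ} {v : ℕ} (h : v ∈ SA l) :
    ∃ j, j < l.length ∧ sufmin l j = v := by
  simpa [SA, Finset.mem_image] using h

lemma NCgood_append {l : List ℕ} (hg : NCgood l) (v : ℕ) :
    NCgood (l ++ [v]) ↔ v ∈ step l := by
  constructor
  · intro hga
    obtain ⟨hr, hv1, hv2⟩ := (RGS_append l v).mp hga.1
    rcases Nat.lt_or_ge (maxL l) v with hgt | hle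
    · have : v = maxL l + 1 := by omega
      simp [step, this]
    · have hvl : v ∈ l := R1 hg.1 v hv1 hle
      obtain ⟨q0, hq0, hq0v⟩ := List.getElem_of_mem hvl
      have hq0d : l.getD q0 0 = v := by rw [List.getD_eq_getElem _ 0 hq0]; exact hq0v
      set S : Finset ℕ := (Finset.range l.length).filter (fun j => l.getD j 0 = v) with hs
      have hSne : S.Nonempty := ⟨q0, by simp [hs, hq0, hq0d, hq0v]⟩
      set J := S.max' hSne with hJ
      have hJS : J ∈ S := S.max'_mem hSne
      have hJlen : J < l.length := by
        have := (Finset.mem_filter.mp hJS).1; simpa using this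
      have hJd : l.getD J 0 = v := (Finset.mem_filter.mp hJS).2
      have hlast : ∀ j', J < j' → j' < l.length → l.getD j' 0 ≠ v := by
        intro j' hj1 hj2 hc
        rw [List.getD_eq_getElem _ 0 hj2] at hc
        have : j' ∈ S := by simp [hs, hj2, hc]
        have := S.le_max' j' this
        omega
      have hsm : sufmin l J = v := by
        apply _root_.le_antisymm (by rw [← hJd]; exact sufmin_le l (le_refl _) hJlen)
        by_contra hcon
        push_neg at hcon
        obtain ⟨j1, hj11, hj12, hj13⟩ := sufmin_attained l hJlen
        have hj1J : J < j1 := by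
          rcases Nat.lt_or_ge J j1 with h' | h'
          · exact h'
          · have : j1 = J := by omega
            rw [this, hJd] at hj13; omega
        have h2 := ((NoBAB_append l v).mp hga.2).2 J j1 hj1J hj12 hJd
        omega
      simp only [step, Finset.mem_insert, SA, Finset.mem_image, Finset.mem_range]
      exact Or.inr ⟨J, hJlen, hsm⟩
  · intro hv
    rcases Finset.mem_insert.mp hv with rfl | hvA
    · refine ⟨(RGS_append l _).mpr ⟨hg.1, by omega, by omega⟩, (NoBAB_append l _).mpr ⟨hg.2, ?_⟩⟩
      intro j k hjk hk heq
      have : l.getD j 0 ≤ maxL l := le_maxL (getD_mem _ _ (by omega))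
      omega
    · have hvl : v ∈ l := SA_mem_mem hvA
      have hv1 : 1 ≤ v := hg.1.2.1 v hvl
      have hvm : v ≤ maxL l := le_maxL hvl
      refine ⟨(RGS_append l _).mpr ⟨hg.1, hv1, by omega⟩, (NoBAB_append l _).mpr ⟨hg.2, ?_⟩⟩
      intro j k hjk hk heq
      obtain ⟨j0, hj0, hj0v⟩ := SA_mem_exists hvA
      obtain ⟨j1, hj11, hj12, hj13⟩ := sufmin_attained l hj0
      rw [hj0v] at hj13
      rcases Nat.lt_or_ge k j0 with hlt | hge
      · have hkj1 : k < j1 := by omega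
        have := hg.2 j k j1 hjk hkj1 hj12 (by rw [hj13, heq])
        omega
      · have := sufmin_le l hge hk
        omega

lemma NCgood_one : NCgood [1] := by
  refine ⟨⟨rfl, by simp, fun i hi => by simp at hi⟩, fun j k m h1 h2 h3 _ => by simp at h3; omega⟩

lemma exts_mem : ∀ (t : ℕ) (l w : List ℕ), NCgood l →
    (w ∈ exts l t ↔ (w.length = t ∧ NCgood (l ++ w))) := by
  intro t
  induction t with
  | zero =>
    intro l w hg
    simp only [exts, Finset.mem_singleton]
    constructor
    · rintro rfl; exact ⟨rfl, by simpa⟩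
    · rintro ⟨hw, _⟩; exact List.length_eq_zero_iff.mp hw
  | succ t ih =>
    intro l w hg
    simp only [exts, Finset.mem_biUnion, Finset.mem_image]
    constructor
    · rintro ⟨v, hv, u, hu, rfl⟩
      have hgv : NCgood (l ++ [v]) := (NCgood_append hg v).mpr hv
      obtain ⟨hlen, hgood⟩ := (ih (l ++ [v]) u hgv).mp hu
      constructor
      · simp [hlen]
      · rwa [List.append_assoc, List.singleton_append] at hgood
    · rintro ⟨hw, hgood⟩
      cases w with
      | nil => simp at hw
      | cons v u =>
        have hassoc : l ++ v :: u = (l ++ [v]) ++ u := by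
          rw [List.append_assoc, List.singleton_append]
        have hgv : NCgood (l ++ [v]) := NCgood_prefix (x := l ++ [v]) (y := u) (by rwa [← hassoc])
        refine ⟨v, (NCgood_append hg v).mp hgv, u, ?_, rfl⟩
        exact (ih (l ++ [v]) u hgv).mpr ⟨by simpa using hw, by rwa [hassoc] at hgood⟩
def F : ℕ → ℕ → ℕ
  | 0, _ => 1
  | t+1, k => F t (k+1) + ∑ j ∈ Finset.range k, F t (j+1)

lemma RS (G : ℕ → ℕ) (s : Finset ℕ) :
    (∑ v ∈ s, G ((s.filter (fun x => x ≤ v)).card)) = ∑ j ∈ Finset.range s.card, G (j+1) := by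
  induction s using Finset.strongInduction with
  | _ s ih =>
    rcases s.eq_empty_or_nonempty with rfl | hne
    · simp
    · have hM : s.max' hne ∈ s := s.max'_mem hne
      set M := s.max' hne with hMdef
      rw [← Finset.sum_erase_add s _ hM]
      have h1 : (s.filter (fun x => x ≤ M)).card = s.card := by
        rw [Finset.filter_true_of_mem (fun x hx => s.le_max' x hx)]
      have h2 : ∀ v ∈ s.erase M,
          G ((s.filter (fun x => x ≤ v)).card) = G (((s.erase M).filter (fun x => x ≤ v)).card) := by
        intro v hv
        have hvM : v < M := by
          have := s.le_max' v (Finset.mem_of_mem_erase hv)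
          have := Finset.ne_of_mem_erase hv
          omega
        rw [Finset.filter_erase]
        rw [Finset.erase_eq_of_notMem (by simp; intro _; omega)]
      rw [Finset.sum_congr rfl h2, ih (s.erase M) (Finset.erase_ssubset hM), h1]
      rw [Finset.card_erase_of_mem hM]
      have hc : 0 < s.card := Finset.card_pos.mpr hne
      rw [show s.card = (s.card - 1) + 1 by omega, Finset.sum_range_succ]
      congr 2 <;> omega

lemma maxL_not_mem_SA (l : List ℕ) : maxL l + 1 ∉ SA l := by
  intro h
  have := SA_le_maxL h
  omega

lemma hS_push (l : List ℕ) : hS (l ++ [maxL l + 1]) = hS l + 1 := by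
  unfold hS
  rw [SA_append, Finset.filter_true_of_mem (fun x hx => by have := SA_le_maxL hx; omega)]
  rw [Finset.card_insert_of_notMem (maxL_not_mem_SA l)]

lemma hS_old {l : List ℕ} {v : ℕ} (hv : v ∈ SA l) :
    hS (l ++ [v]) = ((SA l).filter (fun x => x ≤ v)).card := by
  unfold hS
  rw [SA_append]
  rw [Finset.insert_eq_self.mpr (Finset.mem_filter.mpr ⟨hv, by simp⟩)]

lemma exts_disj (l : List ℕ) (t : ℕ) : ∀ v1 ∈ step l, ∀ v2 ∈ step l, v1 ≠ v2 →
    Disjoint ((exts (l ++ [v1]) t).image (v1 :: ·)) ((exts (l ++ [v2]) t).image (v2 :: ·)) := by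
  intro v1 _ v2 _ hne
  rw [Finset.disjoint_left]
  rintro a ha1 ha2
  obtain ⟨u1, _, rfl⟩ := Finset.mem_image.mp ha1
  obtain ⟨u2, _, he⟩ := Finset.mem_image.mp ha2
  simp only [List.cons.injEq] at he
  exact hne he.1.symm

lemma cons_inj (v : ℕ) : Function.Injective (fun u : List ℕ => v :: u) := by
  intro a b h; injection h

lemma card_exts : ∀ (t : ℕ) (l : List ℕ), NCgood l → l ≠ [] →
    (exts l t).card = F t (hS l) := by
  intro t
  induction t with
  | zero => intro l _ _; simp [exts, F]
  | succ t ih =>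
    intro l hg hne
    show ((step l).biUnion (fun v => (exts (l ++ [v]) t).image (v :: ·))).card = _
    rw [Finset.card_biUnion (exts_disj l t)]
    have h1 : ∀ v ∈ step l, ((exts (l ++ [v]) t).image (v :: ·)).card = F t (hS (l ++ [v])) := by
      intro v hv
      rw [Finset.card_image_of_injective _ (cons_inj v)]
      exact ih (l ++ [v]) ((NCgood_append hg v).mpr hv) (by simp)
    rw [Finset.sum_congr rfl h1]
    show ∑ v ∈ insert (maxL l + 1) (SA l), F t (hS (l ++ [v])) = _
    rw [Finset.sum_insert (maxL_not_mem_SA l), hS_push]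
    have h2 : ∀ v ∈ SA l, F t (hS (l ++ [v])) = F t (((SA l).filter (fun x => x ≤ v)).card) := by
      intro v hv; rw [hS_old hv]
    rw [Finset.sum_congr rfl h2, RS (F t) (SA l)]
    rfl

lemma card_exts_split : ∀ (t s : ℕ) (l : List ℕ), NCgood l →
    (exts l (t + s)).card = ∑ q ∈ exts l t, (exts (l ++ q) s).card := by
  intro t
  induction t with
  | zero =>
    intro s l _
    rw [Nat.zero_add]
    show _ = ∑ q ∈ ({[]} : Finset (List ℕ)), (exts (l ++ q) s).card
    rw [Finset.sum_singleton, List.append_nil]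
  | succ t ih =>
    intro s l hg
    rw [show t + 1 + s = (t + s) + 1 by omega]
    show ((step l).biUnion (fun v => (exts (l ++ [v]) (t + s)).image (v :: ·))).card = _
    rw [Finset.card_biUnion (exts_disj l (t + s))]
    have h1 : ∀ v ∈ step l, ((exts (l ++ [v]) (t+s)).image (v :: ·)).card
        = ∑ q ∈ exts (l ++ [v]) t, (exts (l ++ [v] ++ q) s).card := by
      intro v hv
      rw [Finset.card_image_of_injective _ (cons_inj v)]
      exact ih s (l ++ [v]) ((NCgood_append hg v).mpr hv)
    rw [Finset.sum_congr rfl h1]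
    show _ = ∑ q ∈ (step l).biUnion (fun v => (exts (l ++ [v]) t).image (v :: ·)),
        (exts (l ++ q) s).card
    rw [Finset.sum_biUnion ?hd]
    case hd =>
      intro v1 hv1 v2 hv2 hne
      exact exts_disj l t v1 hv1 v2 hv2 hne
    apply Finset.sum_congr rfl
    intro v hv
    rw [Finset.sum_image (fun a _ b _ h => cons_inj v h)]
    apply Finset.sum_congr rfl
    intro q hq
    congr 1
    rw [List.append_assoc, List.singleton_append]
lemma F_succ_succ (t k : ℕ) : F (t+1) (k+1) = F (t+1) k + F t (k+2) := by
  show F t (k+2) + ∑ j ∈ Finset.range (k+1), F t (j+1)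
    = (F t (k+1) + ∑ j ∈ Finset.range k, F t (j+1)) + F t (k+2)
  rw [Finset.sum_range_succ]
  omega

lemma F_one (k : ℕ) : F 1 k = k + 1 := by
  show F 0 (k+1) + ∑ j ∈ Finset.range k, F 0 (j+1) = k + 1
  show 1 + ∑ _j ∈ Finset.range k, 1 = k + 1
  rw [Finset.sum_const, Finset.card_range, smul_eq_mul]
  omega

lemma choose_symm' (n k m : ℕ) (h : k + m = n) : n.choose k = n.choose m := by
  have := Nat.choose_symm (n := n) (k := k) (by omega)
  rw [show n - k = m by omega] at this
  exact this.symm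

lemma F_closed : ∀ t k, F (t+1) k + Nat.choose (2*t+2+k) t = Nat.choose (2*t+2+k) (t+1) := by
  intro t
  induction t with
  | zero =>
    intro k
    show F 1 k + Nat.choose (2*0+2+k) 0 = Nat.choose (2*0+2+k) (0+1)
    rw [F_one]
    have e1 : Nat.choose (2*0+2+k) 0 = 1 := Nat.choose_zero_right _
    have e2 : Nat.choose (2*0+2+k) (0+1) = k + 2 := by
      show Nat.choose (2*0+2+k) 1 = k + 2
      rw [Nat.choose_one_right]; omega
    omega
  | succ t ih =>
    intro k
    induction k with
    | zero =>
      have hF : F (t+1+1) 0 = F (t+1) 1 := by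
        show F (t+1) 1 + ∑ j ∈ Finset.range 0, F (t+1) (j+1) = F (t+1) 1
        simp
      have h1 : F (t+1) 1 + Nat.choose (2*t+3) t = Nat.choose (2*t+3) (t+1) := ih 1
      have p1 : Nat.choose (2*t+4) (t+1) = Nat.choose (2*t+3) t + Nat.choose (2*t+3) (t+1) :=
        Nat.choose_succ_succ (2*t+3) t
      have p2 : Nat.choose (2*t+4) (t+2) = Nat.choose (2*t+3) (t+1) + Nat.choose (2*t+3) (t+2) :=
        Nat.choose_succ_succ (2*t+3) (t+1)
      have p3 : Nat.choose (2*t+3) (t+2) = Nat.choose (2*t+3) (t+1) :=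
        choose_symm' _ _ _ (by omega)
      have g1 : F (t+1+1) 0 + Nat.choose (2*t+4) (t+1) = Nat.choose (2*t+4) (t+2) := by omega
      exact g1
    | succ k ihk =>
      have hrec : F (t+1+1) (k+1) = F (t+1+1) k + F (t+1) (k+2) := F_succ_succ (t+1) k
      have h1 : F (t+1) (k+2) + Nat.choose (2*t+4+k) t = Nat.choose (2*t+4+k) (t+1) := by
        have h := ih (k+2)
        rwa [show 2*t+2+(k+2) = 2*t+4+k by omega] at h
      have h2 : F (t+1+1) k + Nat.choose (2*t+4+k) (t+1) = Nat.choose (2*t+4+k) (t+2) := ihk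
      have p1 : Nat.choose (2*t+5+k) (t+1) = Nat.choose (2*t+4+k) t + Nat.choose (2*t+4+k) (t+1) := by
        have h : Nat.choose ((2*t+4+k)+1) (t+1) = Nat.choose (2*t+4+k) t + Nat.choose (2*t+4+k) (t+1) :=
          Nat.choose_succ_succ (2*t+4+k) t
        rwa [show (2*t+4+k)+1 = 2*t+5+k by omega] at h
      have p2 : Nat.choose (2*t+5+k) (t+2) = Nat.choose (2*t+4+k) (t+1) + Nat.choose (2*t+4+k) (t+2) := by
        have h : Nat.choose ((2*t+4+k)+1) (t+2) = Nat.choose (2*t+4+k) (t+1) + Nat.choose (2*t+4+k) (t+2) :=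
          Nat.choose_succ_succ (2*t+4+k) (t+1)
        rwa [show (2*t+4+k)+1 = 2*t+5+k by omega] at h
      have g1 : F (t+1+1) (k+1) + Nat.choose (2*t+5+k) (t+1) = Nat.choose (2*t+5+k) (t+2) := by
        omega
      rw [show 2*(t+1)+2+(k+1) = 2*t+5+k by omega]
      exact g1

lemma F_final (t : ℕ) : (t + 1) * F t 1 = Nat.choose (2*t+2) (t+2) := by
  cases t with
  | zero => simp [F]
  | succ u =>
    set F1 := F (u+1) 1 with hF1
    have h1 : F1 + Nat.choose (2*u+3) u = Nat.choose (2*u+3) (u+1) := F_closed u 1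
    set c0 := Nat.choose (2*u+3) (u+1) with hc0
    set c1 := Nat.choose (2*u+3) u with hc1
    have hd : c0 * (u+1) = c1 * (u+3) := by
      have := Nat.choose_succ_right_eq (2*u+3) u
      rwa [show 2*u+3-u = u+3 by omega] at this
    have hc : Nat.choose (2*u+4) (u+2) = 2 * c0 := by
      have p : Nat.choose (2*u+4) (u+2) = Nat.choose (2*u+3) (u+1) + Nat.choose (2*u+3) (u+2) :=
        Nat.choose_succ_succ (2*u+3) (u+1)
      have p3 : Nat.choose (2*u+3) (u+2) = Nat.choose (2*u+3) (u+1) := choose_symm' _ _ _ (by omega)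
      omega
    have hb : Nat.choose (2*u+4) (u+3) * (u+3) = Nat.choose (2*u+4) (u+2) * (u+2) := by
      have := Nat.choose_succ_right_eq (2*u+4) (u+2)
      rwa [show 2*u+4-(u+2) = u+2 by omega] at this
    have e3 : (u+3) * c1 = (u+1) * c0 :=
      calc (u+3) * c1 = c1 * (u+3) := Nat.mul_comm _ _
        _ = c0 * (u+1) := hd.symm
        _ = (u+1) * c0 := Nat.mul_comm _ _
    have e2 : (u+3) * F1 + (u+3) * c1 = (u+3) * c0 := by
      rw [← Nat.left_distrib, h1]
    have e1 : (u+3) * F1 = 2 * c0 := by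
      rw [e3] at e2
      have e4 : (u+3) * c0 = (u+1) * c0 + 2 * c0 := by ring
      linarith
    apply Nat.eq_of_mul_eq_mul_left (show 0 < u+3 by omega)
    rw [show 2*(u+1)+2 = 2*u+4 by omega]
    calc (u+3) * ((u+1+1) * F1) = (u+2) * ((u+3) * F1) := by ring
      _ = (u+2) * (2*c0) := by rw [e1]
      _ = (u+3) * Nat.choose (2*u+4) (u+1+2) := by
          have h5 : Nat.choose (2*u+4) (u+3) * (u+3) = (2*c0) * (u+2) := by rw [hb, hc]
          have h6 : Nat.choose (2*u+4) (u+1+2) = Nat.choose (2*u+4) (u+3) := rfl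
          rw [h6]
          linarith
lemma getD_append_right' (l l' : List ℕ) (j : ℕ) :
    (l ++ l').getD (l.length + j) 0 = l'.getD j 0 := by
  simp [List.getD_eq_getElem?_getD, List.getElem?_append_right]

lemma take_succ_getD (l : List ℕ) (k : ℕ) (h : k < l.length) :
    l.take (k+1) = l.take k ++ [l.getD k 0] := by
  rw [List.take_succ]
  simp [List.getElem?_eq_getElem, h, List.getD_eq_getElem?_getD]

lemma take_i3 (l : List ℕ) (i : ℕ) (h : i + 3 ≤ l.length) :
    l.take (i+3) = l.take (i+1) ++ [l.getD (i+1) 0, l.getD (i+2) 0] := by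
  rw [show i+3 = (i+2)+1 by omega, take_succ_getD l (i+2) (by omega)]
  rw [show i+2 = (i+1)+1 by omega, take_succ_getD l (i+1) (by omega)]
  simp

lemma occAt_iff (l : List ℕ) (i : ℕ) :
    occAt [1,2,1] l i ↔ i + 3 ≤ l.length ∧
      l.getD i 0 = l.getD (i+2) 0 ∧ l.getD i 0 < l.getD (i+1) 0 := by
  unfold occAt OrdIso
  have hτlen : ([1,2,1] : List ℕ).length = 3 := rfl
  rw [hτlen]
  constructor
  · rintro ⟨hlen, hcmp⟩
    have hlen3 : i + 3 ≤ l.length := by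
      rw [List.length_take, List.length_drop] at hlen; omega
    have hgd : ∀ j, j < 3 → ((l.drop i).take 3).getD j 0 = l.getD (i+j) 0 := by
      intro j hj
      rw [getD_take'' _ _ _ _ hj, getD_drop]
    have h01 := hcmp 0 1 (by omega) (by omega)
    have h21 := hcmp 2 1 (by omega) (by omega)
    have h02 := hcmp 0 2 (by omega) (by omega)
    have h20 := hcmp 2 0 (by omega) (by omega)
    simp only [hgd 0 (by omega), hgd 1 (by omega), hgd 2 (by omega)] at h01 h21 h02 h20
    simp only [List.getD_cons_zero, List.getD_cons_succ, Nat.add_zero] at h01 h21 h02 h20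
    norm_num at h01 h21 h02 h20
    refine ⟨hlen3, ?_, ?_⟩ <;> simp only [List.getD_eq_getElem?_getD] <;> omega
  · rintro ⟨hlen3, heq, hlt⟩
    constructor
    · rw [List.length_take, List.length_drop]; omega
    · intro j k hj hk
      have hgd : ∀ j, j < 3 → ((l.drop i).take 3).getD j 0 = l.getD (i+j) 0 := by
        intro j hj
        rw [getD_take'' _ _ _ _ hj, getD_drop]
      rw [hgd j hj, hgd k hk]
      interval_cases j <;> interval_cases k <;>
        simp only [List.getD_cons_zero, List.getD_cons_succ, Nat.add_zero] <;>
        (constructor <;> intro <;> omega)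

lemma occ_char {l : List ℕ} (hg : NCgood l) {i : ℕ} (h3 : i + 3 ≤ l.length) :
    (l.getD i 0 = l.getD (i+2) 0 ∧ l.getD i 0 < l.getD (i+1) 0)
    ↔ (l.getD (i+1) 0 = maxL (l.take (i+1)) + 1 ∧ l.getD (i+2) 0 = l.getD i 0) := by
  constructor
  · rintro ⟨heq, hlt⟩
    refine ⟨?_, heq.symm⟩
    have hb2 : l.getD (i+1) 0 ≤ maxL (l.take (i+1)) + 1 := hg.1.2.2 i (by omega)
    by_contra hcon
    have hble : l.getD (i+1) 0 ≤ maxL (l.take (i+1)) := by omega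
    have hb1 : 1 ≤ l.getD (i+1) 0 := hg.1.2.1 _ (getD_mem l (i+1) (by omega))
    have hmem : l.getD (i+1) 0 ∈ l.take (i+1) := R1 (RGS_take hg.1 (i+1)) _ hb1 hble
    obtain ⟨q, hq, hqv⟩ := List.getElem_of_mem hmem
    have hq2 : q < (i+1) ⊓ l.length := by rw [List.length_take] at hq; exact hq
    have hqd : l.getD q 0 = l.getD (i+1) 0 := by
      rw [← getD_take'' l q (i+1) 0 (by omega), List.getD_eq_getElem _ 0 hq, hqv]
    have hqi : q < i := by
      rcases Nat.lt_trichotomy q i with h' | rfl | h'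
      · exact h'
      · omega
      · omega
    have := hg.2 q i (i+1) hqi (by omega) (by omega) hqd.symm
    omega
  · rintro ⟨hb, ha⟩
    have hmem : l.getD i 0 ∈ l.take (i+1) := by
      rw [← getD_take'' l i (i+1) 0 (by omega)]
      exact getD_mem _ _ (by rw [List.length_take]; omega)
    have := le_maxL hmem
    exact ⟨ha.symm, by omega⟩
lemma mem_exts_one {t : ℕ} {q : List ℕ} :
    q ∈ exts [1] t ↔ (q.length = t ∧ NCgood (1 :: q)) :=
  exts_mem t [1] q NCgood_one

def Bq (i : ℕ) (q : List ℕ) : List ℕ := (1 :: q) ++ [maxL (1 :: q) + 1, (1 :: q).getD i 0]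

lemma NCgood_Bq {i : ℕ} {q : List ℕ} (hlen : q.length = i) (hgP : NCgood (1 :: q)) :
    NCgood (Bq i q) ∧ hS (Bq i q) = hS (1 :: q) := by
  set P : List ℕ := 1 :: q with hP
  have hPlen : P.length = i + 1 := by simp [hP, hlen]
  set b := maxL P + 1 with hb
  set a := P.getD i 0 with ha
  have ha_last : a = P.getD (P.length - 1) 0 := by rw [hPlen, Nat.add_sub_cancel]
  have haSA : a ∈ SA P := by rw [ha_last]; exact last_mem_SA (by simp [hP])
  have haM : a ≤ maxL P := SA_le_maxL haSA
  have SA1 : SA (P ++ [b]) = insert b (SA P) := by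
    rw [SA_append, Finset.filter_true_of_mem (fun x hx => by have := SA_le_maxL hx; omega)]
  have g1 : NCgood (P ++ [b]) := (NCgood_append hgP b).mpr (Finset.mem_insert_self _ _)
  have haSA2 : a ∈ SA (P ++ [b]) := by rw [SA1]; exact Finset.mem_insert_of_mem haSA
  have g2 : NCgood ((P ++ [b]) ++ [a]) :=
    (NCgood_append g1 a).mpr (Finset.mem_insert_of_mem haSA2)
  have hBq : Bq i q = (P ++ [b]) ++ [a] := by
    show P ++ [b, a] = (P ++ [b]) ++ [a]
    rw [List.append_assoc]
    rfl
  have SA2 : SA ((P ++ [b]) ++ [a]) = SA P := by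
    rw [SA_append, SA1, Finset.filter_insert, if_neg (by omega : ¬ b ≤ a)]
    rw [Finset.filter_true_of_mem (fun x hx => by
      have := SA_le_last hx
      rw [← ha_last] at this
      exact this)]
    exact Finset.insert_eq_self.mpr haSA
  exact ⟨hBq ▸ g2, by unfold hS; rw [hBq, SA2]⟩

lemma Bq_take {i : ℕ} {q : List ℕ} (hlen : q.length = i) (w : List ℕ) :
    (Bq i q ++ w).take (i+1) = 1 :: q := by
  unfold Bq
  rw [List.append_assoc, List.take_append_of_le_length (by simp [hlen])]
  rw [show i + 1 = ((1:ℕ) :: q).length by simp [hlen], List.take_length]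

lemma card_occ (i t : ℕ) :
    (((exts [1] (i+t+2)).image (1 :: ·)).filter
      (fun π => π.getD i 0 = π.getD (i+2) 0 ∧ π.getD i 0 < π.getD (i+1) 0)).card
    = (exts [1] (i+t)).card := by
  have hO : ((exts [1] (i+t+2)).image (1 :: ·)).filter
      (fun π => π.getD i 0 = π.getD (i+2) 0 ∧ π.getD i 0 < π.getD (i+1) 0)
      = (exts [1] i).biUnion (fun q => (exts (Bq i q) t).image (fun w => Bq i q ++ w)) := by
    ext π
    simp only [Finset.mem_filter, Finset.mem_image, Finset.mem_biUnion]
    constructor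
    · rintro ⟨⟨r, hr, rfl⟩, hocc1, hocc2⟩
      obtain ⟨hrlen, hgπ⟩ := mem_exts_one.mp hr
      have hπlen : ((1:ℕ)::r).length = i+t+3 := by simp [hrlen]
      have h3 : i + 3 ≤ ((1:ℕ)::r).length := by omega
      have hocc := (occ_char hgπ h3).mp ⟨hocc1, hocc2⟩
      have hq' : (1:ℕ) :: r.take i = ((1:ℕ)::r).take (i+1) := (List.take_succ_cons).symm
      have hgPfx : NCgood ((1:ℕ) :: r.take i) := by rw [hq']; exact NCgood_take hgπ (i+1)
      have hqlen : (r.take i).length = i := by rw [List.length_take]; omega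
      have hBtake : Bq i (r.take i) = ((1:ℕ)::r).take (i+3) := by
        rw [take_i3 _ _ h3]
        show (1 :: r.take i) ++ _ = _
        rw [hq']
        congr 2
        · exact hocc.1.symm
        · rw [hocc.2, getD_take'' _ _ _ _ (by omega : i < i+1)]
      have hgB := (NCgood_Bq hqlen hgPfx).1
      refine ⟨r.take i, mem_exts_one.mpr ⟨hqlen, hgPfx⟩, ((1:ℕ)::r).drop (i+3), ?_, ?_⟩
      · apply (exts_mem t _ _ hgB).mpr
        constructor
        · rw [List.length_drop, hπlen]; omega
        · rw [hBtake, List.take_append_drop]; exact hgπ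
      · rw [hBtake, List.take_append_drop]
    · rintro ⟨q, hq, w, hw, rfl⟩
      obtain ⟨hqlen, hgP⟩ := mem_exts_one.mp hq
      have hgB := (NCgood_Bq hqlen hgP).1
      obtain ⟨hwlen, hgood⟩ := (exts_mem t _ w hgB).mp hw
      have hPlen : ((1:ℕ) :: q).length = i + 1 := by simp [hqlen]
      have e_i : (Bq i q ++ w).getD i 0 = ((1:ℕ)::q).getD i 0 := by
        unfold Bq
        rw [List.append_assoc, List.getD_append _ _ _ _ (by omega)]
      have e_i1 : (Bq i q ++ w).getD (i+1) 0 = maxL ((1:ℕ)::q) + 1 := by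
        unfold Bq
        rw [List.append_assoc, show i+1 = ((1:ℕ)::q).length + 0 by omega, getD_append_right']
        rfl
      have e_i2 : (Bq i q ++ w).getD (i+2) 0 = ((1:ℕ)::q).getD i 0 := by
        unfold Bq
        rw [List.append_assoc, show i+2 = ((1:ℕ)::q).length + 1 by omega, getD_append_right']
        rfl
      have haM : ((1:ℕ)::q).getD i 0 ≤ maxL ((1:ℕ)::q) := le_maxL (getD_mem _ _ (by omega))
      have hform : (1:ℕ) :: (q ++ [maxL ((1:ℕ)::q) + 1, ((1:ℕ)::q).getD i 0] ++ w) = Bq i q ++ w := by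
        show _ = ((1:ℕ) :: q) ++ _ ++ w
        simp
      refine ⟨⟨q ++ [maxL ((1:ℕ)::q) + 1, ((1:ℕ)::q).getD i 0] ++ w, ?_, hform⟩, ?_, ?_⟩
      · apply mem_exts_one.mpr
        constructor
        · simp only [List.length_append, List.length_cons, List.length_nil]
          omega
        · rw [hform]; exact hgood
      · rw [e_i, e_i2]
      · rw [e_i, e_i1]; omega
  rw [hO]
  rw [Finset.card_biUnion ?hdisj]
  case hdisj =>
    intro q1 hq1 q2 hq2 hne
    show _root_.Disjoint _ _
    rw [Finset.disjoint_left]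
    rintro π h1 h2
    obtain ⟨w1, _, rfl⟩ := Finset.mem_image.mp h1
    obtain ⟨w2, _, he⟩ := Finset.mem_image.mp h2
    have t1 := Bq_take (mem_exts_one.mp hq1).1 w1
    have t2 := Bq_take (mem_exts_one.mp hq2).1 w2
    rw [he] at t2
    rw [t1] at t2
    injection t2 with _ h
    exact hne h
  rw [card_exts_split i t [1] NCgood_one]
  apply Finset.sum_congr rfl
  intro q hq
  obtain ⟨hqlen, hgP⟩ := mem_exts_one.mp hq
  have hB := NCgood_Bq hqlen hgP
  rw [Finset.card_image_of_injective _ (fun x y h => List.append_cancel_left h)]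
  rw [card_exts t _ hB.1 (by simp [Bq]), hB.2, List.singleton_append,
    card_exts t _ hgP (by simp)]
lemma hS_one : hS [1] = 1 := by decide

lemma NC_mem (n : ℕ) (hn : 1 ≤ n) (π : List ℕ) :
    NCseq n π ↔ π ∈ (exts [1] (n-1)).image (1 :: ·) := by
  rw [NCseq_iff]
  constructor
  · rintro ⟨hlen, hr, hb⟩
    cases π with
    | nil => simp at hlen; omega
    | cons x r =>
      have hx : x = 1 := by simpa using hr.1
      subst hx
      apply Finset.mem_image.mpr
      exact ⟨r, mem_exts_one.mpr ⟨by simp at hlen; omega, ⟨hr, hb⟩⟩, rfl⟩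
  · intro h
    obtain ⟨r, hr, rfl⟩ := Finset.mem_image.mp h
    obtain ⟨hrlen, hg⟩ := mem_exts_one.mp hr
    exact ⟨by simp [hrlen]; omega, hg.1, hg.2⟩

end NC15

/-- For n ≥ 3, the total number of occurrences of the subword 121 over NC_n
equals binom(2n−4, n−1). -/
theorem stmt15 (n : ℕ) (hn : 3 ≤ n) :
    totalOcc n [1, 2, 1] = Nat.choose (2 * n - 4) (n - 1) := by
  classical
  open NC15 in
  set T : Finset (List ℕ × ℕ) := (Finset.range (n-2)).biUnion (fun i =>
    (((exts [1] (n-1)).image (1 :: ·)).filter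
      (fun π => π.getD i 0 = π.getD (i+2) 0 ∧ π.getD i 0 < π.getD (i+1) 0)).image
      (fun π => (π, i))) with hT
  have hset : {p : List ℕ × ℕ | NCseq n p.1 ∧ occAt [1,2,1] p.1 p.2} = ↑T := by
    ext p
    simp only [Set.mem_setOf_eq, Finset.mem_coe]
    constructor
    · rintro ⟨hNC, hocc⟩
      rw [NC15.occAt_iff] at hocc
      obtain ⟨h3, heq, hlt⟩ := hocc
      have hlen : p.1.length = n := hNC.1
      rw [hT]
      apply Finset.mem_biUnion.mpr
      refine ⟨p.2, Finset.mem_range.mpr (by omega), ?_⟩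
      apply Finset.mem_image.mpr
      refine ⟨p.1, Finset.mem_filter.mpr ⟨(NC15.NC_mem n (by omega) p.1).mp hNC, heq, hlt⟩, ?_⟩
      exact Prod.mk.eta
    · intro hp
      rw [hT] at hp
      obtain ⟨i, hi, hmem⟩ := Finset.mem_biUnion.mp hp
      obtain ⟨π, hπ, hpe⟩ := Finset.mem_image.mp hmem
      obtain ⟨hπm, heq, hlt⟩ := Finset.mem_filter.mp hπ
      have hNC := (NC15.NC_mem n (by omega) π).mpr hπm
      have hlen : π.length = n := hNC.1
      have hi' : i < n - 2 := Finset.mem_range.mp hi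
      subst hpe
      refine ⟨hNC, ?_⟩
      rw [NC15.occAt_iff]
      exact ⟨by simp [hlen]; omega, heq, hlt⟩
  have h1 : totalOcc n [1,2,1] = T.card := by
    calc totalOcc n [1,2,1]
        = Nat.card {p : List ℕ × ℕ | NCseq n p.1 ∧ occAt [1,2,1] p.1 p.2} := rfl
      _ = Nat.card (↑T : Set (List ℕ × ℕ)) := by rw [hset]
      _ = T.card := by rw [Nat.card_coe_set_eq, Set.ncard_coe_finset]
  have h2 : T.card = (n-2) * (exts [1] (n-3)).card := by
    rw [hT]
    rw [Finset.card_biUnion ?hdisj]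
    case hdisj =>
      intro i1 _ i2 _ hne
      show _root_.Disjoint _ _
      rw [Finset.disjoint_left]
      rintro p h1 h2
      obtain ⟨π1, _, he1⟩ := Finset.mem_image.mp h1
      obtain ⟨π2, _, he2⟩ := Finset.mem_image.mp h2
      rw [← he1] at he2
      exact hne (congrArg Prod.snd he2).symm
    have hterm : ∀ i ∈ Finset.range (n-2),
        ((((exts [1] (n-1)).image (1 :: ·)).filter
          (fun π => π.getD i 0 = π.getD (i+2) 0 ∧ π.getD i 0 < π.getD (i+1) 0)).image
          (fun π => (π, i))).card = (exts [1] (n-3)).card := by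
      intro i hi
      have hi' : i < n - 2 := Finset.mem_range.mp hi
      rw [Finset.card_image_of_injective _ (fun a b h => (Prod.mk.injEq _ _ _ _ ▸ h : _ ∧ _).1)]
      have := NC15.card_occ i (n-3-i)
      rw [show i+(n-3-i)+2 = n-1 by omega, show i+(n-3-i) = n-3 by omega] at this
      exact this
    rw [Finset.sum_congr rfl hterm, Finset.sum_const, Finset.card_range, smul_eq_mul]
  have h3 : (exts [1] (n-3)).card = F (n-3) 1 := by
    rw [NC15.card_exts _ _ NC15.NCgood_one (by simp), NC15.hS_one]
  rw [h1, h2, h3]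
  have hF := NC15.F_final (n-3)
  rw [show n-3+1 = n-2 by omega] at hF
  rw [hF]
  congr 1 <;> omega
end

section
/- For all n ≥ 0 and k ≥ 0, the number of non-crossing partitions of [n] with exactly k occurrences of the subword 112 equals the number with exactly k occurrences of the subword 122. -/
namespace NC18
open List

def rgsAux : ℕ → List ℕ → Prop
  | _, [] => True
  | m, a :: l => 1 ≤ a ∧ a ≤ m + 1 ∧ rgsAux (max m a) l

lemma foldr_max_seed (a m : ℕ) (t : List ℕ) :
    t.foldr max (max m a) = max a (t.foldr max m) := by
  induction t with
  | nil => simp [Nat.max_comm]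
  | cons b t ih => simp only [foldr_cons, ih]; omega

lemma rgsAux_iff (l : List ℕ) : ∀ m, rgsAux m l ↔
    ∀ i, i < l.length → 1 ≤ l.getD i 0 ∧ l.getD i 0 ≤ (l.take i).foldr max m + 1 := by
  induction l with
  | nil => simp [rgsAux]
  | cons a l ih =>
    intro m
    simp only [rgsAux, ih]
    constructor
    · rintro ⟨h1, h2, h3⟩ i hi
      match i with
      | 0 => simpa using ⟨h1, h2⟩
      | j + 1 =>
        have := h3 j (by simpa using hi)
        simpa [foldr_max_seed] using this
    · intro h
      have h0 := h 0 (by simp)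
      refine ⟨by simpa using h0.1, by simpa using h0.2, fun j hj => ?_⟩
      have := h (j+1) (by simpa using hj)
      simpa [foldr_max_seed] using this

lemma isRGS_iff (l : List ℕ) : IsRGS l ↔ rgsAux 0 l := by
  rw [rgsAux_iff]
  cases l with
  | nil => simp [IsRGS]
  | cons a l =>
    constructor
    · rintro ⟨h1, h2, h3⟩ i hi
      match i with
      | 0 =>
        simp only [getD_cons_zero] at h1 ⊢
        omega
      | j + 1 =>
        refine ⟨?_, h3 j (by simpa using hi)⟩
        have hj : j < l.length := by simpa using hi
        rw [getD_cons_succ, l.getD_eq_getElem 0 hj]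
        exact h2 _ (by exact List.mem_cons_of_mem a (l.getElem_mem hj))
    · intro h
      have h0 := h 0 (by simp)
      simp only [getD_cons_zero, take_zero, foldr_nil] at h0
      refine ⟨by simp; omega, ?_, fun j hj => (h (j+1) (by simpa using hj)).2⟩
      intro x hx
      rw [List.mem_iff_getElem] at hx
      obtain ⟨i, hi, rfl⟩ := hx
      have := (h i hi).1
      rwa [(a::l).getD_eq_getElem 0 hi] at this

lemma crossing_iff (l : List ℕ) :
    Crossing l ↔ ∃ a b, a < b ∧ [a, b, a, b] <+ l := by
  constructor
  · rintro ⟨i, j, k, m, hij, hjk, hkm, hm, e1, e2, hab⟩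
    have hi : i < l.length := by omega
    have hj : j < l.length := by omega
    have hk : k < l.length := by omega
    rw [l.getD_eq_getElem 0 hi, l.getD_eq_getElem 0 hk] at e1
    rw [l.getD_eq_getElem 0 hj, l.getD_eq_getElem 0 hm] at e2
    rw [l.getD_eq_getElem 0 hi, l.getD_eq_getElem 0 hj] at hab
    refine ⟨l[i], l[j], hab, ?_⟩
    rw [sublist_iff_exists_orderEmbedding_getElem?_eq]
    have hf : StrictMono (fun t : ℕ => match t with
      | 0 => i | 1 => j | 2 => k | 3 => m | t + 4 => l.length + t) := by
      apply strictMono_nat_of_lt_succ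
      intro n
      match n with
      | 0 => simpa using hij
      | 1 => simpa using hjk
      | 2 => simpa using hkm
      | 3 => simpa using hm
      | t + 4 => simp
    refine ⟨OrderEmbedding.ofStrictMono _ hf, fun ix => ?_⟩
    match ix with
    | 0 => simp [getElem?_eq_getElem hi]
    | 1 => simp [getElem?_eq_getElem hj]
    | 2 => simp [getElem?_eq_getElem hk, e1]
    | 3 => simp [getElem?_eq_getElem hm, e2]
    | t + 4 =>
      simp [getElem?_eq_none (by omega : l.length ≤ l.length + t)]
  · rintro ⟨a, b, hab, hs⟩
    rw [sublist_iff_exists_fin_orderEmbedding_get_eq] at hs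
    obtain ⟨f, hf⟩ := hs
    have mono := f.strictMono
    have h01 : (f ⟨0, by simp⟩ : ℕ) < f ⟨1, by simp⟩ :=
      mono (Fin.mk_lt_mk.2 (by norm_num))
    have h12 : (f ⟨1, by simp⟩ : ℕ) < f ⟨2, by simp⟩ :=
      mono (Fin.mk_lt_mk.2 (by norm_num))
    have h23 : (f ⟨2, by simp⟩ : ℕ) < f ⟨3, by simp⟩ :=
      mono (Fin.mk_lt_mk.2 (by norm_num))
    have v0 := hf ⟨0, by simp⟩
    have v1 := hf ⟨1, by simp⟩
    have v2 := hf ⟨2, by simp⟩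
    have v3 := hf ⟨3, by simp⟩
    simp only [get_eq_getElem] at v0 v1 v2 v3
    refine ⟨f ⟨0, by simp⟩, f ⟨1, by simp⟩, f ⟨2, by simp⟩, f ⟨3, by simp⟩,
      h01, h12, h23, (f ⟨3, by simp⟩).isLt, ?_, ?_, ?_⟩
    · rw [l.getD_eq_getElem 0 (f ⟨0, by simp⟩).isLt, l.getD_eq_getElem 0 (f ⟨2, by simp⟩).isLt]
      rw [← v0, ← v2]
      simp
    · rw [l.getD_eq_getElem 0 (f ⟨1, by simp⟩).isLt, l.getD_eq_getElem 0 (f ⟨3, by simp⟩).isLt]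
      rw [← v1, ← v3]
      simp
    · rw [l.getD_eq_getElem 0 (f ⟨0, by simp⟩).isLt, l.getD_eq_getElem 0 (f ⟨1, by simp⟩).isLt]
      rw [← v0, ← v1]
      exact hab

def decode (rs : List (ℕ × ℕ)) : List ℕ := rs.flatMap fun p => List.replicate p.2 p.1

def Good (rs : List (ℕ × ℕ)) : Prop :=
  (∀ p ∈ rs, 1 ≤ p.2) ∧ rs.Chain' (fun a b => a.1 ≠ b.1)

@[simp] lemma decode_nil : decode [] = [] := rfl

@[simp] lemma decode_cons (p : ℕ × ℕ) (t : List (ℕ × ℕ)) :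
    decode (p :: t) = List.replicate p.2 p.1 ++ decode t := rfl

lemma decode_length (rs : List (ℕ × ℕ)) : (decode rs).length = (rs.map Prod.snd).sum := by
  induction rs with
  | nil => rfl
  | cons p t ih => simp [ih]

lemma sublist_cons_of_replicate (c : ℕ) :
    ∀ (r : ℕ) (p y : List ℕ), p.Chain' (· ≠ ·) →
      p <+ (List.replicate (r+1) c ++ y) → p <+ c :: y := by
  intro r
  induction r with
  | zero => intro p y _ h; simpa using h
  | succ r ih =>
    intro p y hp h
    have : p <+ c :: (List.replicate (r+1) c ++ y) := by
      simpa [List.replicate_succ (n := r+1)] using h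
    rcases sublist_cons_iff.1 this with h' | ⟨q, rfl, hq⟩
    · exact ih p y hp h'
    · have hq' : q <+ c :: y := ih q y hp.tail hq
      rcases sublist_cons_iff.1 hq' with h'' | ⟨q2, rfl, _⟩
      · exact (h''.cons_cons c)
      · exact absurd rfl (List.isChain_cons_cons.1 hp).1

lemma map_fst_sublist_decode (rs : List (ℕ × ℕ)) (h : ∀ p ∈ rs, 1 ≤ p.2) :
    rs.map Prod.fst <+ decode rs := by
  induction rs with
  | nil => simp
  | cons p t ih =>
    have hp : 1 ≤ p.2 := h p (by simp)
    obtain ⟨s, hs⟩ : ∃ s, p.2 = s + 1 := ⟨p.2 - 1, by omega⟩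
    simp only [map_cons, decode_cons, hs, List.replicate_succ, cons_append]
    exact (ih (fun q hq => h q (by simp [hq]))).trans
      (sublist_append_right _ _) |>.cons_cons p.1

lemma chain_sublist_decode' :
    ∀ (rs : List (ℕ × ℕ)), (∀ q ∈ rs, 1 ≤ q.2) →
      ∀ p : List ℕ, p.Chain' (· ≠ ·) → p <+ decode rs → p <+ rs.map Prod.fst := by
  intro rs
  induction rs with
  | nil => intro _ p _ h; simpa using h
  | cons q t ih =>
    intro hg p hp h
    have hq : 1 ≤ q.2 := hg q (by simp)
    obtain ⟨s, hs⟩ : ∃ s, q.2 = s + 1 := ⟨q.2 - 1, by omega⟩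
    rw [decode_cons, hs] at h
    have h1 : p <+ q.1 :: decode t := sublist_cons_of_replicate q.1 s p (decode t) hp h
    have ht : ∀ q' ∈ t, 1 ≤ q'.2 := fun q' hq' => hg q' (by simp [hq'])
    rcases sublist_cons_iff.1 h1 with h' | ⟨r, rfl, hr⟩
    · exact (ih ht p hp h').trans (sublist_cons_self _ _)
    · exact (ih ht r hp.tail hr).cons_cons q.1

lemma rgsAux_dup (m c : ℕ) (y : List ℕ) : rgsAux m (c::c::y) ↔ rgsAux m (c::y) := by
  simp only [rgsAux]
  have h1 : c ≤ max m c + 1 := by omega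
  have h2 : max (max m c) c = max m c := by omega
  constructor
  · rintro ⟨a, b, _, _, d⟩; exact ⟨a, b, by rwa [h2] at d⟩
  · rintro ⟨a, b, d⟩; exact ⟨a, b, a, h1, by rwa [h2]⟩

lemma rgsAux_replicate (v : ℕ) (y : List ℕ) :
    ∀ (r : ℕ) (m : ℕ), rgsAux m (List.replicate (r+1) v ++ y) ↔ rgsAux m (v :: y) := by
  intro r
  induction r with
  | zero => intro m; simp
  | succ r ih =>
    intro m
    have e : List.replicate (r+1+1) v ++ y = v :: v :: (List.replicate r v ++ y) := by
      simp [List.replicate_succ]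
    have e2 : List.replicate (r+1) v ++ y = v :: (List.replicate r v ++ y) := by
      simp [List.replicate_succ]
    rw [e, rgsAux_dup, ← e2, ih]

lemma rgsAux_decode : ∀ (rs : List (ℕ × ℕ)), (∀ q ∈ rs, 1 ≤ q.2) →
    ∀ m, rgsAux m (decode rs) ↔ rgsAux m (rs.map Prod.fst) := by
  intro rs
  induction rs with
  | nil => intro _ m; simp
  | cons q t ih =>
    intro hg m
    have hq : 1 ≤ q.2 := hg q (by simp)
    obtain ⟨s, hs⟩ : ∃ s, q.2 = s + 1 := ⟨q.2 - 1, by omega⟩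
    have ht : ∀ q' ∈ t, 1 ≤ q'.2 := fun q' hq' => hg q' (by simp [hq'])
    rw [decode_cons, hs, rgsAux_replicate]
    simp only [map_cons, rgsAux]
    exact and_congr Iff.rfl (and_congr Iff.rfl (ih ht _))

lemma crossing_decode (rs : List (ℕ × ℕ)) (h : ∀ q ∈ rs, 1 ≤ q.2) :
    Crossing (decode rs) ↔ Crossing (rs.map Prod.fst) := by
  rw [crossing_iff, crossing_iff]
  constructor
  · rintro ⟨a, b, hab, hs⟩
    have hc : List.Chain' (· ≠ ·) [a, b, a, b] := by
      simp [List.Chain']; omega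
    exact ⟨a, b, hab, chain_sublist_decode' rs h _ hc hs⟩
  · rintro ⟨a, b, hab, hs⟩
    exact ⟨a, b, hab, hs.trans (map_fst_sublist_decode rs h)⟩

def encode : List ℕ → List (ℕ × ℕ)
  | [] => []
  | a :: l => match encode l with
    | (b, r) :: t => if a = b then (a, r+1) :: t else (a, 1) :: (b, r) :: t
    | [] => [(a, 1)]

@[simp] lemma encode_nil : encode [] = [] := rfl

lemma encode_cons (a : ℕ) (l : List ℕ) : encode (a :: l) = match encode l with
    | (b, r) :: t => if a = b then (a, r+1) :: t else (a, 1) :: (b, r) :: t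
    | [] => [(a, 1)] := rfl

lemma decode_encode (l : List ℕ) : decode (encode l) = l := by
  induction l with
  | nil => rfl
  | cons a l ih =>
    match h : encode l with
    | [] =>
      have e : encode (a :: l) = [(a, 1)] := by rw [encode_cons, h]
      rw [h] at ih
      simp only [decode_nil] at ih
      rw [e, ← ih]
      rfl
    | (b, r) :: t =>
      rw [h] at ih
      by_cases hab : a = b
      · subst hab
        have e : encode (a :: l) = (a, r+1) :: t := by rw [encode_cons, h]; simp
        have e2 : decode ((a, r+1) :: t) = a :: decode ((a, r) :: t) := by
          simp [List.replicate_succ]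
        rw [e, e2, ih]
      · have e : encode (a :: l) = (a, 1) :: (b, r) :: t := by rw [encode_cons, h]; simp [hab]
        rw [e, ← ih]
        simp

lemma encode_head : ∀ (a : ℕ) (l : List ℕ), ∃ r t, encode (a :: l) = (a, r) :: t := by
  intro a l
  rw [encode_cons]
  match encode l with
  | [] => exact ⟨1, [], rfl⟩
  | (b, r) :: t =>
    by_cases hab : a = b
    · subst hab; exact ⟨r+1, t, by simp⟩
    · exact ⟨1, (b, r) :: t, by simp [hab]⟩

lemma encode_good (l : List ℕ) : Good (encode l) := by
  induction l with
  | nil => exact ⟨by simp, by simp [List.Chain']⟩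
  | cons a l ih =>
    obtain ⟨h1, h2⟩ := ih
    rw [encode_cons]
    match h : encode l with
    | [] => exact ⟨by simp, by simp [List.Chain']⟩
    | (b, r) :: t =>
      rw [h] at h1 h2
      by_cases hab : a = b
      · subst hab
        simp only [if_pos rfl]
        constructor
        · intro p hp
          rcases List.mem_cons.1 hp with rfl | hp
          · simp
          · exact h1 p (by simp [hp])
        · exact List.isChain_cons.2 ⟨fun y hy => (List.isChain_cons.1 h2).1 y hy, (List.isChain_cons.1 h2).2⟩
      · simp only [if_neg hab]
        constructor
        · intro p hp
          rcases List.mem_cons.1 hp with rfl | hp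
          · simp
          · exact h1 p hp
        · exact List.isChain_cons_cons.2 ⟨hab, h2⟩

lemma encode_replicate_append (v : ℕ) (u : List ℕ)
    (hu : ∀ w r' t', encode u = (w, r') :: t' → w ≠ v) :
    ∀ r, encode (List.replicate (r+1) v ++ u) = (v, r+1) :: encode u := by
  intro r
  induction r with
  | zero =>
    have e0 : List.replicate (0+1) v ++ u = v :: u := by simp
    rw [e0, encode_cons]
    match h : encode u with
    | [] => rfl
    | (w, r') :: t' =>
      have : w ≠ v := hu w r' t' h
      simp only [if_neg (fun hh : v = w => this hh.symm)]
  | succ r ih =>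
    have e : List.replicate (r+1+1) v ++ u = v :: (List.replicate (r+1) v ++ u) := by
      simp [List.replicate_succ]
    rw [e, encode_cons, ih]
    simp

lemma good_tail {p : ℕ × ℕ} {t : List (ℕ × ℕ)} (h : Good (p :: t)) : Good t :=
  ⟨fun q hq => h.1 q (by simp [hq]), h.2.tail⟩

lemma encode_decode (rs : List (ℕ × ℕ)) (h : Good rs) : encode (decode rs) = rs := by
  induction rs with
  | nil => rfl
  | cons p t ih =>
    have ih' := ih (good_tail h)
    have hp2 : 1 ≤ p.2 := h.1 p (by simp)
    obtain ⟨s, hs⟩ : ∃ s, p.2 = s + 1 := ⟨p.2 - 1, by omega⟩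
    have hu : ∀ w r' t', encode (decode t) = (w, r') :: t' → w ≠ p.1 := by
      intro w r' t' he
      rw [ih'] at he
      subst he
      exact fun hw => (List.isChain_cons_cons.1 h.2).1 hw.symm
    have := encode_replicate_append p.1 (decode t) hu s
    rw [decode_cons, hs, this, ih', ← hs]

def chainrev (c : List (ℕ × ℕ)) : List (ℕ × ℕ) :=
  (c.map Prod.fst).zip ((c.map Prod.snd).reverse)

lemma zip_map_self (c : List (ℕ × ℕ)) : (c.map Prod.fst).zip (c.map Prod.snd) = c := by
  induction c with
  | nil => rfl
  | cons p t ih => simp [ih]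

@[simp] lemma map_fst_chainrev (c : List (ℕ × ℕ)) :
    (chainrev c).map Prod.fst = c.map Prod.fst :=
  map_fst_zip (by simp)

@[simp] lemma map_snd_chainrev (c : List (ℕ × ℕ)) :
    (chainrev c).map Prod.snd = (c.map Prod.snd).reverse :=
  map_snd_zip (by simp)

@[simp] lemma length_chainrev (c : List (ℕ × ℕ)) : (chainrev c).length = c.length := by
  simp [chainrev]

lemma chainrev_chainrev (c : List (ℕ × ℕ)) : chainrev (chainrev c) = c := by
  rw [show chainrev (chainrev c)
      = ((chainrev c).map Prod.fst).zip (((chainrev c).map Prod.snd).reverse) from rfl,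
    map_fst_chainrev, map_snd_chainrev, reverse_reverse, zip_map_self]

def chains : List (ℕ × ℕ) → List (List (ℕ × ℕ))
  | [] => []
  | p :: t => match chains t with
    | (q :: c) :: cs => if p.1 < q.1 then (p :: q :: c) :: cs else [p] :: (q :: c) :: cs
    | cs => [p] :: cs

@[simp] lemma chains_nil : chains [] = [] := rfl

lemma chains_cons (p : ℕ × ℕ) (t : List (ℕ × ℕ)) : chains (p :: t) = match chains t with
    | (q :: c) :: cs => if p.1 < q.1 then (p :: q :: c) :: cs else [p] :: (q :: c) :: cs
    | cs => [p] :: cs := rfl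

lemma chains_flatten (rs : List (ℕ × ℕ)) : (chains rs).flatten = rs := by
  induction rs with
  | nil => rfl
  | cons p t ih =>
    rw [chains_cons]
    match h : chains t with
    | [] => rw [h] at ih; simp at ih; simp [ih]
    | [] :: cs =>
      rw [h] at ih
      simp only [flatten_cons, nil_append] at ih
      simp [ih]
    | (q :: c) :: cs =>
      rw [h] at ih
      simp only [flatten_cons, cons_append] at ih
      by_cases hpq : p.1 < q.1
      · simp only [if_pos hpq, flatten_cons, cons_append, ih]
      · simp only [if_neg hpq, flatten_cons, cons_append, nil_append, singleton_append, ih]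

lemma chains_ne_nil (rs : List (ℕ × ℕ)) : ∀ c ∈ chains rs, c ≠ [] := by
  induction rs with
  | nil => simp
  | cons p t ih =>
    rw [chains_cons]
    match h : chains t with
    | [] => simp
    | [] :: cs => exact absurd rfl (ih [] (by rw [h]; simp))
    | (q :: c) :: cs =>
      rw [h] at ih
      by_cases hpq : p.1 < q.1
      · simp only [if_pos hpq]
        intro d hd
        rcases List.mem_cons.1 hd with rfl | hd
        · simp
        · exact ih d (by simp [hd])
      · simp only [if_neg hpq]
        intro d hd
        rcases List.mem_cons.1 hd with rfl | hd
        · simp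
        · exact ih d hd

lemma chains_chain (rs : List (ℕ × ℕ)) :
    ∀ c ∈ chains rs, c.Chain' (fun a b => a.1 < b.1) := by
  induction rs with
  | nil => simp
  | cons p t ih =>
    rw [chains_cons]
    match h : chains t with
    | [] => simp [List.Chain']
    | [] :: cs => exact absurd rfl (chains_ne_nil t [] (by rw [h]; simp))
    | (q :: c) :: cs =>
      rw [h] at ih
      by_cases hpq : p.1 < q.1
      · simp only [if_pos hpq]
        intro d hd
        rcases List.mem_cons.1 hd with rfl | hd
        · exact List.isChain_cons_cons.2 ⟨hpq, ih (q :: c) (by simp)⟩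
        · exact ih d (by simp [hd])
      · simp only [if_neg hpq]
        intro d hd
        rcases List.mem_cons.1 hd with rfl | hd
        · simp [List.Chain']
        · exact ih d hd

def Bdry (c d : List (ℕ × ℕ)) : Prop :=
  ∀ p q, c.getLast? = some p → d.head? = some q → ¬ p.1 < q.1

lemma chains_bdry (rs : List (ℕ × ℕ)) : (chains rs).Chain' Bdry := by
  induction rs with
  | nil => simp [List.Chain']
  | cons p t ih =>
    rw [chains_cons]
    match h : chains t with
    | [] => simp [List.Chain']
    | [] :: cs => exact absurd rfl (chains_ne_nil t [] (by rw [h]; simp))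
    | (q :: c) :: cs =>
      rw [h] at ih
      by_cases hpq : p.1 < q.1
      · simp only [if_pos hpq]
        rcases List.isChain_cons.1 ih with ⟨hbd, hcs⟩
        refine List.isChain_cons.2 ⟨?_, hcs⟩
        intro d hd
        intro a b ha hb
        have : (q :: c).getLast? = some a := by
          rw [← ha, List.getLast?_cons_cons]
        exact hbd d hd a b this hb
      · simp only [if_neg hpq]
        refine List.isChain_cons_cons.2 ⟨?_, ih⟩
        intro a b ha hb
        simp only [List.getLast?_singleton, Option.some_inj] at ha
        subst ha
        simp only [List.head?_cons, Option.some_inj] at hb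
        subst hb
        exact hpq

lemma chains_map_fst_congr : ∀ rs rs' : List (ℕ × ℕ), rs.map Prod.fst = rs'.map Prod.fst →
    (chains rs).map (List.map Prod.fst) = (chains rs').map (List.map Prod.fst) := by
  intro rs
  induction rs with
  | nil =>
    intro rs' h
    have : rs' = [] := by simpa using (map_eq_nil_iff.1 h.symm)
    subst this; rfl
  | cons p t ih =>
    intro rs' h
    match rs' with
    | [] => simp at h
    | p' :: t' =>
      simp only [map_cons, List.cons.injEq] at h
      obtain ⟨hp, ht⟩ := h
      have IH := ih t' ht
      match h1 : chains t with
      | [] =>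
        rw [h1] at IH
        have h2 : chains t' = [] := map_eq_nil_iff.1 IH.symm
        have e1 : chains (p :: t) = [[p]] := by rw [chains_cons, h1]
        have e2 : chains (p' :: t') = [[p']] := by rw [chains_cons, h2]
        rw [e1, e2]; simp [hp]
      | [] :: cs => exact absurd rfl (chains_ne_nil t [] (by rw [h1]; simp))
      | (q :: c) :: cs =>
        rw [h1] at IH
        match h2 : chains t' with
        | [] => rw [h2] at IH; simp at IH
        | [] :: ds => exact absurd rfl (chains_ne_nil t' [] (by rw [h2]; simp))
        | (q' :: c') :: ds =>
          rw [h2] at IH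
          simp only [map_cons, List.cons.injEq] at IH
          obtain ⟨⟨hq, hc⟩, hcs⟩ := IH
          have e1 : chains (p :: t)
              = if p.1 < q.1 then (p :: q :: c) :: cs else [p] :: (q :: c) :: cs := by
            rw [chains_cons, h1]
          have e2 : chains (p' :: t')
              = if p'.1 < q'.1 then (p' :: q' :: c') :: ds else [p'] :: (q' :: c') :: ds := by
            rw [chains_cons, h2]
          by_cases hpq : p.1 < q.1
          · rw [e1, e2, if_pos hpq, if_pos (by rw [← hp, ← hq]; exact hpq)]
            simp only [map_cons, List.cons.injEq]
            exact ⟨⟨hp, hq, hc⟩, hcs⟩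
          · rw [e1, e2, if_neg hpq, if_neg (by rw [← hp, ← hq]; exact hpq)]
            simp only [map_cons, List.cons.injEq]
            exact ⟨by simp [hp], ⟨hq, hc⟩, hcs⟩

lemma flatten_inj : ∀ cs ds : List (List (ℕ × ℕ)), cs.map length = ds.map length →
    cs.flatten = ds.flatten → cs = ds := by
  intro cs
  induction cs with
  | nil =>
    intro ds h _
    have : ds = [] := by simpa using (map_eq_nil_iff.1 h.symm)
    rw [this]
  | cons c cs ih =>
    intro ds h hf
    match ds with
    | [] => simp at h
    | d :: ds =>
      simp only [map_cons, List.cons.injEq] at h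
      simp only [flatten_cons] at hf
      obtain ⟨hcd, hrest⟩ := List.append_inj hf h.1
      rw [hcd, ih ds h.2 hrest]

def phi (rs : List (ℕ × ℕ)) : List (ℕ × ℕ) := ((chains rs).map chainrev).flatten

lemma map_fst_phi (rs : List (ℕ × ℕ)) : (phi rs).map Prod.fst = rs.map Prod.fst := by
  unfold phi
  rw [map_flatten, map_map]
  have : (List.map Prod.fst ∘ chainrev) = (List.map (Prod.fst (α := ℕ) (β := ℕ))) := by
    funext c; exact map_fst_chainrev c
  rw [this, ← map_flatten, chains_flatten]

lemma chains_phi (rs : List (ℕ × ℕ)) : chains (phi rs) = (chains rs).map chainrev := by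
  apply flatten_inj
  · have h1 : (chains (phi rs)).map (List.map Prod.fst) = (chains rs).map (List.map Prod.fst) :=
      chains_map_fst_congr _ _ (map_fst_phi rs)
    have lenfst : ∀ cs : List (List (ℕ × ℕ)), cs.map length = (cs.map (List.map Prod.fst)).map length := by
      intro cs
      rw [map_map]
      apply map_congr_left
      intro c _
      simp
    rw [lenfst, h1, ← lenfst]
    rw [map_map]
    apply map_congr_left
    intro c _
    simp
  · rw [chains_flatten]
    rfl

lemma phi_phi (rs : List (ℕ × ℕ)) : phi (phi rs) = rs := by
  rw [show phi (phi rs) = ((chains (phi rs)).map chainrev).flatten from rfl, chains_phi,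
    map_map]
  have : (chainrev ∘ chainrev) = id := by funext c; exact chainrev_chainrev c
  rw [this, map_id, chains_flatten]

lemma phi_good {rs : List (ℕ × ℕ)} (h : Good rs) : Good (phi rs) := by
  constructor
  · intro p hp
    unfold phi at hp
    rw [List.mem_flatten] at hp
    obtain ⟨c, hc, hpc⟩ := hp
    rw [List.mem_map] at hc
    obtain ⟨c0, hc0, rfl⟩ := hc
    have h2 : p.2 ∈ (chainrev c0).map Prod.snd := List.mem_map_of_mem (f := Prod.snd) hpc
    rw [map_snd_chainrev, List.mem_reverse, List.mem_map] at h2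
    obtain ⟨q, hq, hq2⟩ := h2
    have : q ∈ rs := by
      rw [← chains_flatten rs, List.mem_flatten]
      exact ⟨c0, hc0, hq⟩
    rw [← hq2]
    exact h.1 q this
  · have := h.2
    simp only [List.Chain'] at this ⊢
    rw [← List.isChain_map (R := (· ≠ ·)) Prod.fst] at this ⊢
    rwa [map_fst_phi]

lemma phi_sum_snd (rs : List (ℕ × ℕ)) :
    ((phi rs).map Prod.snd).sum = (rs.map Prod.snd).sum := by
  conv_rhs => rw [← chains_flatten rs]
  unfold phi
  rw [map_flatten, map_flatten, sum_flatten, sum_flatten, map_map, map_map, map_map]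
  congr 1
  apply map_congr_left
  intro c _
  simp [Function.comp, List.sum_reverse]

def sA : ℕ × ℕ → List (ℕ × ℕ) → ℕ
  | _, [] => 0
  | p, q :: t => (if 2 ≤ p.2 ∧ p.1 < q.1 then 1 else 0) + sA q t

def statA : List (ℕ × ℕ) → ℕ
  | [] => 0
  | p :: t => sA p t

def sB : ℕ × ℕ → List (ℕ × ℕ) → ℕ
  | _, [] => 0
  | p, q :: t => (if p.1 < q.1 ∧ 2 ≤ q.2 then 1 else 0) + sB q t

def statB : List (ℕ × ℕ) → ℕ
  | [] => 0
  | p :: t => sB p t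

lemma sA_append (c : List (ℕ × ℕ)) : ∀ (p : ℕ × ℕ) (d : List (ℕ × ℕ)),
    sA p (c ++ d) = sA p c + sA (c.getLast?.getD p) d := by
  induction c with
  | nil => intro p d; simp [sA]
  | cons q t ih =>
    intro p d
    have e : ((q :: t).getLast?).getD p = (t.getLast?).getD q := by
      simp [getLast?_cons]
    show (if 2 ≤ p.2 ∧ p.1 < q.1 then 1 else 0) + sA q (t ++ d)
        = (if 2 ≤ p.2 ∧ p.1 < q.1 then 1 else 0) + sA q t + sA (((q :: t).getLast?).getD p) d
    rw [ih q d, e]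
    omega

lemma sB_append (c : List (ℕ × ℕ)) : ∀ (p : ℕ × ℕ) (d : List (ℕ × ℕ)),
    sB p (c ++ d) = sB p c + sB (c.getLast?.getD p) d := by
  induction c with
  | nil => intro p d; simp [sB]
  | cons q t ih =>
    intro p d
    have e : ((q :: t).getLast?).getD p = (t.getLast?).getD q := by
      simp [getLast?_cons]
    show (if p.1 < q.1 ∧ 2 ≤ q.2 then 1 else 0) + sB q (t ++ d)
        = (if p.1 < q.1 ∧ 2 ≤ q.2 then 1 else 0) + sB q t + sB (((q :: t).getLast?).getD p) d
    rw [ih q d, e]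
    omega

lemma sA_statA (x : ℕ × ℕ) (Y : List (ℕ × ℕ))
    (h0 : ∀ q, Y.head? = some q → ¬ x.1 < q.1) : sA x Y = statA Y := by
  cases Y with
  | nil => rfl
  | cons q t =>
    have : ¬ x.1 < q.1 := h0 q rfl
    simp [sA, statA, this]

lemma sB_statB (x : ℕ × ℕ) (Y : List (ℕ × ℕ))
    (h0 : ∀ q, Y.head? = some q → ¬ x.1 < q.1) : sB x Y = statB Y := by
  cases Y with
  | nil => rfl
  | cons q t =>
    have : ¬ x.1 < q.1 := h0 q rfl
    simp [sB, statB, this]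

lemma sA_chain (c : List (ℕ × ℕ)) : ∀ p : ℕ × ℕ,
    List.Chain' (fun a b => a.1 < b.1) (p :: c) →
    sA p c = ((p :: c).map Prod.snd).dropLast.countP (fun m => 2 ≤ m) := by
  induction c with
  | nil => intro p _; simp [sA]
  | cons q t ih =>
    intro p h
    have hlt : p.1 < q.1 := (List.isChain_cons_cons.1 h).1
    have ht := (List.isChain_cons_cons.1 h).2
    simp only [sA, ih q ht, map_cons, dropLast_cons₂, countP_cons]
    by_cases h2 : 2 ≤ p.2 <;> simp [h2, hlt] <;> omega

lemma sB_chain (c : List (ℕ × ℕ)) : ∀ p : ℕ × ℕ,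
    List.Chain' (fun a b => a.1 < b.1) (p :: c) →
    sB p c = (c.map Prod.snd).countP (fun m => 2 ≤ m) := by
  induction c with
  | nil => intro p _; simp [sB]
  | cons q t ih =>
    intro p h
    have hlt : p.1 < q.1 := (List.isChain_cons_cons.1 h).1
    have ht := (List.isChain_cons_cons.1 h).2
    simp only [sB, ih q ht, map_cons, countP_cons]
    by_cases h2 : 2 ≤ q.2 <;> simp [h2, hlt] <;> omega

lemma chainrev_chain' {c : List (ℕ × ℕ)} (h : List.Chain' (fun a b => a.1 < b.1) c) :
    List.Chain' (fun a b => a.1 < b.1) (chainrev c) := by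
  simp only [List.Chain'] at h ⊢
  rw [← List.isChain_map (R := (· < ·)) Prod.fst] at h ⊢
  rwa [map_fst_chainrev]

lemma statB_flatten : ∀ cs : List (List (ℕ × ℕ)), (∀ c ∈ cs, c ≠ []) →
    (∀ c ∈ cs, List.Chain' (fun a b => a.1 < b.1) c) → cs.Chain' Bdry →
    statB ((cs.map chainrev).flatten) = statA cs.flatten := by
  intro cs
  induction cs with
  | nil => intro _ _ _; rfl
  | cons c cs ih =>
    intro hne hch hbd
    obtain ⟨p, c0, rfl⟩ := exists_cons_of_ne_nil (hne c (by simp))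
    obtain ⟨p', c0', hc'⟩ := exists_cons_of_ne_nil
      (show chainrev (p :: c0) ≠ [] by
        intro hh
        have := congrArg List.length hh
        simp at this)
    have hchc : List.Chain' (fun a b => a.1 < b.1) (p :: c0) := hch _ (by simp)
    have hchc' : List.Chain' (fun a b => a.1 < b.1) (p' :: c0') := by
      rw [← hc']; exact chainrev_chain' hchc
    -- the two within-chunk counts agree
    have hcount : sB p' c0' = sA p c0 := by
      rw [sB_chain c0' p' hchc', sA_chain c0 p hchc]
      have h1 : (p' :: c0').map Prod.snd = ((p :: c0).map Prod.snd).reverse := by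
        rw [← hc', map_snd_chainrev]
      have h2 : ((p' :: c0').map Prod.snd).tail = ((p :: c0).map Prod.snd).dropLast.reverse := by
        rw [h1, tail_reverse]
      have e1 : c0'.map Prod.snd = ((p :: c0).map Prod.snd).dropLast.reverse := by
        rw [← h2, map_cons, tail_cons]
      rw [e1]
      exact ((reverse_perm _).countP_eq _)
    -- last elements have equal firsts
    have hlast : ((p' :: c0').getLast?.getD p').1 = ((p :: c0).getLast?.getD p).1 := by
      have : (p' :: c0').getLast?.map Prod.fst = (p :: c0).getLast?.map Prod.fst := by
        rw [← getLast?_map, ← getLast?_map, ← hc', map_fst_chainrev]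
      cases h1 : (p' :: c0').getLast? with
      | none => simp at h1
      | some a =>
        cases h2 : (p :: c0).getLast? with
        | none => simp at h2
        | some b =>
          rw [h1, h2] at this
          simpa using this
    simp only [map_cons, flatten_cons]
    rw [hc']
    rw [show (p' :: c0') ++ ((cs.map chainrev).flatten) = p' :: (c0' ++ (cs.map chainrev).flatten) from rfl]
    rw [show (p :: c0) ++ cs.flatten = p :: (c0 ++ cs.flatten) from rfl]
    show sB p' (c0' ++ (cs.map chainrev).flatten) = sA p (c0 ++ cs.flatten)
    rw [sB_append, sA_append, hcount]
    congr 1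
    -- boundary terms
    cases cs with
    | nil => simp [sA, sB]
    | cons d cs' =>
      obtain ⟨q, d0, rfl⟩ := exists_cons_of_ne_nil (hne d (by simp))
      have hbdcd : Bdry (p :: c0) (q :: d0) := (List.isChain_cons_cons.1 hbd).1
      have hnd : ¬ ((p :: c0).getLast?.getD p).1 < q.1 := by
        apply hbdcd
        · cases h2 : (p :: c0).getLast? with
          | none => simp at h2
          | some b => simp
        · rfl
      have hA : sA ((p :: c0).getLast?.getD p) ((q :: d0) :: cs').flatten
          = statA ((q :: d0) :: cs').flatten := by
        apply sA_statA
        intro q2 hq2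
        simp only [flatten_cons, cons_append, head?_cons, Option.some_inj] at hq2
        exact hq2 ▸ hnd
      have hB : sB ((p' :: c0').getLast?.getD p') ((((q :: d0) :: cs').map chainrev).flatten)
          = statB ((((q :: d0) :: cs').map chainrev).flatten) := by
        apply sB_statB
        intro q2 hq2
        have hd' : (chainrev (q :: d0)).head?.map Prod.fst = some q.1 := by
          rw [← head?_map, map_fst_chainrev]
          simp
        have : ((((q :: d0) :: cs').map chainrev).flatten).head? = (chainrev (q :: d0)).head? := by
          simp only [map_cons, flatten_cons, head?_append]
          cases hh : (chainrev (q :: d0)).head? with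
          | none =>
            exfalso
            have : chainrev (q :: d0) = [] := head?_eq_none_iff.1 hh
            have := congrArg List.length this
            simp at this
          | some z => simp
        rw [this] at hq2
        have : q2.1 = q.1 := by
          rw [hq2] at hd'
          simpa using hd'
        rw [hlast, this]
        exact hnd
      have eL : c0.getLast?.getD p = (p :: c0).getLast?.getD p := by simp [getLast?_cons]
      have eL' : c0'.getLast?.getD p' = (p' :: c0').getLast?.getD p' := by simp [getLast?_cons]
      rw [eL, eL', hA, hB]
      exact ih (fun c hc => hne c (by simp [hc])) (fun c hc => hch c (by simp [hc])) hbd.tail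

lemma statB_phi (rs : List (ℕ × ℕ)) : statB (phi rs) = statA rs := by
  have := statB_flatten (chains rs) (chains_ne_nil rs) (chains_chain rs) (chains_bdry rs)
  rwa [chains_flatten] at this

def c112 : List ℕ → ℕ
  | a :: b :: c :: t => (if a = b ∧ b < c then 1 else 0) + c112 (b :: c :: t)
  | _ => 0

def c122 : List ℕ → ℕ
  | a :: b :: c :: t => (if a < b ∧ b = c then 1 else 0) + c122 (b :: c :: t)
  | _ => 0

lemma repl112 : ∀ (r : ℕ) (v : ℕ) (t : List ℕ),
    c112 (List.replicate (r+2) v ++ t) = c112 (v :: v :: t) := by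
  intro r
  induction r with
  | zero => intro v t; rfl
  | succ r ih =>
    intro v t
    have e : List.replicate (r+1+2) v ++ t = v :: v :: v :: (List.replicate (r-0) v ++ t) := by
      simp [List.replicate_succ]
    rw [e]
    show (if v = v ∧ v < v then 1 else 0) + c112 (v :: v :: (List.replicate r v ++ t))
        = c112 (v :: v :: t)
    have e2 : v :: v :: (List.replicate r v ++ t) = List.replicate (r+2) v ++ t := by
      simp [List.replicate_succ]
    rw [e2, ih v t]
    simp

lemma c112_replicate (r v : ℕ) : c112 (List.replicate r v) = 0 := by
  match r with
  | 0 => rfl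
  | 1 => rfl
  | r + 2 =>
    have := repl112 r v []
    simp only [append_nil] at this
    rw [this]
    rfl

lemma drop112 (v w : ℕ) (u : List ℕ) (h : v ≠ w) : c112 (v :: w :: u) = c112 (w :: u) := by
  match u with
  | [] => rfl
  | c :: t =>
    show (if v = w ∧ w < c then 1 else 0) + c112 (w :: c :: t) = c112 (w :: c :: t)
    simp [h]

lemma bridge112 : ∀ rs : List (ℕ × ℕ), Good rs → c112 (decode rs) = statA rs := by
  intro rs
  induction rs with
  | nil => intro _; rfl
  | cons p rest ih =>
    intro hg
    obtain ⟨v, r⟩ := p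
    have hr : 1 ≤ r := hg.1 (v, r) (by simp)
    match rest with
    | [] =>
      show c112 (List.replicate r v ++ decode []) = statA [(v, r)]
      simp only [decode_nil, append_nil]
      rw [c112_replicate]
      rfl
    | (w, s) :: t2 =>
      have hvw : v ≠ w := (List.isChain_cons_cons.1 hg.2).1
      have hs : 1 ≤ s := hg.1 (w, s) (by simp)
      have ih' := ih (good_tail hg)
      obtain ⟨s1, rfl⟩ : ∃ s1, s = s1 + 1 := ⟨s - 1, by omega⟩
      have hd : decode ((w, s1+1) :: t2) = w :: (List.replicate s1 w ++ decode t2) := by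
        simp [List.replicate_succ]
      have hstat : statA ((v, r) :: (w, s1+1) :: t2)
          = (if 2 ≤ r ∧ v < w then 1 else 0) + statA ((w, s1+1) :: t2) := rfl
      rw [hstat]
      show c112 (decode ((v, r) :: (w, s1+1) :: t2))
          = (if 2 ≤ r ∧ v < w then 1 else 0) + statA ((w, s1+1) :: t2)
      rw [← ih']
      have hdc : decode ((v, r) :: (w, s1+1) :: t2)
          = List.replicate r v ++ decode ((w, s1+1) :: t2) := rfl
      rw [hdc, hd]
      match r with
      | 1 =>
        rw [show List.replicate 1 v ++ (w :: (List.replicate s1 w ++ decode t2))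
            = v :: w :: (List.replicate s1 w ++ decode t2) from rfl]
        rw [drop112 v w _ hvw]
        simp
      | r2 + 2 =>
        rw [repl112 r2 v (w :: (List.replicate s1 w ++ decode t2))]
        show (if v = v ∧ v < w then 1 else 0)
            + c112 (v :: w :: (List.replicate s1 w ++ decode t2)) = _
        rw [drop112 v w _ hvw]
        by_cases hlt : v < w <;> simp [hlt]

lemma drop122a (v : ℕ) (u : List ℕ) : c122 (v :: v :: u) = c122 (v :: u) := by
  match u with
  | [] => rfl
  | c :: t =>
    show (if v < v ∧ v = c then 1 else 0) + c122 (v :: c :: t) = c122 (v :: c :: t)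
    simp

lemma repl122 : ∀ (r v : ℕ) (u : List ℕ),
    c122 (List.replicate (r+1) v ++ u) = c122 (v :: u) := by
  intro r
  induction r with
  | zero => intro v u; rfl
  | succ r ih =>
    intro v u
    have e : List.replicate (r+1+1) v ++ u = v :: v :: (List.replicate r v ++ u) := by
      simp [List.replicate_succ]
    have e2 : v :: (List.replicate r v ++ u) = List.replicate (r+1) v ++ u := by
      simp [List.replicate_succ]
    rw [e, drop122a, e2, ih]

lemma bridge122 : ∀ rs : List (ℕ × ℕ), Good rs → c122 (decode rs) = statB rs := by
  intro rs
  induction rs with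
  | nil => intro _; rfl
  | cons p rest ih =>
    intro hg
    obtain ⟨v, r⟩ := p
    have hr : 1 ≤ r := hg.1 (v, r) (by simp)
    obtain ⟨r1, rfl⟩ : ∃ r1, r = r1 + 1 := ⟨r - 1, by omega⟩
    have hdc : decode ((v, r1+1) :: rest) = List.replicate (r1+1) v ++ decode rest := rfl
    rw [hdc, repl122]
    match rest with
    | [] =>
      show c122 [v] = statB [(v, r1+1)]
      rfl
    | (w, s) :: t2 =>
      have hvw : v ≠ w := (List.isChain_cons_cons.1 hg.2).1
      have hs : 1 ≤ s := hg.1 (w, s) (by simp)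
      have ih' := ih (good_tail hg)
      have hstat : statB ((v, r1+1) :: (w, s) :: t2)
          = (if v < w ∧ 2 ≤ s then 1 else 0) + sB (w, s) t2 := rfl
      have hstat2 : statB ((w, s) :: t2) = sB (w, s) t2 := rfl
      rw [hstat, ← hstat2, ← ih']
      match s, hs with
      | 1, _ =>
        have hd : decode ((w, 1) :: t2) = w :: decode t2 := by simp
        rw [hd]
        simp only [show ((if v < w ∧ 2 ≤ 1 then 1 else 0) : ℕ) = 0 by simp]
        rw [Nat.zero_add]
        match t2, hg with
        | [], _ => rfl
        | (x, xr) :: t3, hg =>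
          have hwx : w ≠ x := (List.isChain_cons_cons.1 (List.isChain_cons_cons.1 hg.2).2).1
          have hxr : 1 ≤ xr := hg.1 (x, xr) (by simp)
          obtain ⟨x1, rfl⟩ : ∃ x1, xr = x1 + 1 := ⟨xr - 1, by omega⟩
          have hd2 : decode ((x, x1+1) :: t3) = x :: (List.replicate x1 x ++ decode t3) := by
            simp [List.replicate_succ]
          rw [hd2]
          show (if v < w ∧ w = x then 1 else 0)
              + c122 (w :: x :: (List.replicate x1 x ++ decode t3))
              = c122 (w :: x :: (List.replicate x1 x ++ decode t3))
          simp [hwx]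
      | s2 + 2, _ =>
        have hd : decode ((w, s2+2) :: t2) = w :: w :: (List.replicate s2 w ++ decode t2) := by
          simp [List.replicate_succ]
        rw [hd]
        show (if v < w ∧ w = w then 1 else 0) + c122 (w :: w :: (List.replicate s2 w ++ decode t2))
            = (if v < w ∧ 2 ≤ s2 + 2 then 1 else 0) + c122 (w :: w :: (List.replicate s2 w ++ decode t2))
        by_cases hlt : v < w <;> simp [hlt]

lemma getD_take_drop (l : List ℕ) (i j : ℕ) (hlen : i + 3 ≤ l.length) (hj : j < 3) :
    ((l.drop i).take 3).getD j 0 = l.getD (i + j) 0 := by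
  have h1 : ((l.drop i).take 3).length = 3 := by
    rw [length_take, length_drop]; omega
  have h2 : j < ((l.drop i).take 3).length := by omega
  have h3 : i + j < l.length := by omega
  rw [List.getD_eq_getElem _ _ h2, List.getD_eq_getElem _ _ h3]
  rw [List.getElem_take, List.getElem_drop]

lemma occAt_112_iff (l : List ℕ) (i : ℕ) : occAt [1, 1, 2] l i ↔
    i + 3 ≤ l.length ∧ l.getD i 0 = l.getD (i+1) 0 ∧ l.getD (i+1) 0 < l.getD (i+2) 0 := by
  unfold occAt OrdIso
  constructor
  · rintro ⟨hlen, h⟩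
    simp only [length_cons, length_nil] at hlen h
    have hlen' : i + 3 ≤ l.length := by
      rw [length_take, length_drop] at hlen; omega
    have g0 : ((l.drop i).take 3).getD 0 0 = l.getD i 0 := by
      simpa using getD_take_drop l i 0 hlen' (by omega)
    have g1 := getD_take_drop l i 1 hlen' (by omega)
    have g2 := getD_take_drop l i 2 hlen' (by omega)
    have h01 := h 0 1 (by omega) (by omega)
    have h10 := h 1 0 (by omega) (by omega)
    have h12 := h 1 2 (by omega) (by omega)
    rw [g0, g1] at h01 h10
    rw [g1, g2] at h12
    have n01 : ¬ (l.getD i 0 < l.getD (i+1) 0) := fun hh =>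
      (by decide : ¬ (([1,1,2] : List ℕ).getD 0 0 < ([1,1,2] : List ℕ).getD 1 0)) (h01.2 hh)
    have n10 : ¬ (l.getD (i+1) 0 < l.getD i 0) := fun hh =>
      (by decide : ¬ (([1,1,2] : List ℕ).getD 1 0 < ([1,1,2] : List ℕ).getD 0 0)) (h10.2 hh)
    have lt12 : l.getD (i+1) 0 < l.getD (i+2) 0 := h12.1 (by decide)
    exact ⟨hlen', by omega, lt12⟩
  · rintro ⟨hlen, heq, hlt⟩
    have hlen' : ((l.drop i).take 3).length = 3 := by
      rw [length_take, length_drop]; omega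
    refine ⟨by simpa using hlen'.symm, ?_⟩
    intro j k hj hk
    simp only [length_cons, length_nil] at hj hk
    simp only [show ([1,1,2] : List ℕ).length = 3 from rfl]
    have g0 : ((l.drop i).take 3).getD 0 0 = l.getD i 0 := by
      simpa using getD_take_drop l i 0 hlen (by omega)
    have g1 := getD_take_drop l i 1 hlen (by omega)
    have g2 := getD_take_drop l i 2 hlen (by omega)
    have hj' : j = 0 ∨ j = 1 ∨ j = 2 := by omega
    have hk' : k = 0 ∨ k = 1 ∨ k = 2 := by omega
    rcases hj' with rfl | rfl | rfl <;> rcases hk' with rfl | rfl | rfl <;>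
        simp only [g0, g1, g2] <;>
      first
      | exact iff_of_true (by decide) (by omega)
      | exact iff_of_false (by decide) (by omega)

lemma occAt_122_iff (l : List ℕ) (i : ℕ) : occAt [1, 2, 2] l i ↔
    i + 3 ≤ l.length ∧ l.getD i 0 < l.getD (i+1) 0 ∧ l.getD (i+1) 0 = l.getD (i+2) 0 := by
  unfold occAt OrdIso
  constructor
  · rintro ⟨hlen, h⟩
    simp only [length_cons, length_nil] at hlen h
    have hlen' : i + 3 ≤ l.length := by
      rw [length_take, length_drop] at hlen; omega
    have g0 : ((l.drop i).take 3).getD 0 0 = l.getD i 0 := by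
      simpa using getD_take_drop l i 0 hlen' (by omega)
    have g1 := getD_take_drop l i 1 hlen' (by omega)
    have g2 := getD_take_drop l i 2 hlen' (by omega)
    have h01 := h 0 1 (by omega) (by omega)
    have h12 := h 1 2 (by omega) (by omega)
    have h21 := h 2 1 (by omega) (by omega)
    rw [g0, g1] at h01
    rw [g1, g2] at h12 h21
    have lt01 : l.getD i 0 < l.getD (i+1) 0 := h01.1 (by decide)
    have n12 : ¬ (l.getD (i+1) 0 < l.getD (i+2) 0) := fun hh =>
      (by decide : ¬ (([1,2,2] : List ℕ).getD 1 0 < ([1,2,2] : List ℕ).getD 2 0)) (h12.2 hh)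
    have n21 : ¬ (l.getD (i+2) 0 < l.getD (i+1) 0) := fun hh =>
      (by decide : ¬ (([1,2,2] : List ℕ).getD 2 0 < ([1,2,2] : List ℕ).getD 1 0)) (h21.2 hh)
    exact ⟨hlen', lt01, by omega⟩
  · rintro ⟨hlen, hlt, heq⟩
    have hlen' : ((l.drop i).take 3).length = 3 := by
      rw [length_take, length_drop]; omega
    refine ⟨by simpa using hlen'.symm, ?_⟩
    intro j k hj hk
    simp only [length_cons, length_nil] at hj hk
    simp only [show ([1,2,2] : List ℕ).length = 3 from rfl]
    have g0 : ((l.drop i).take 3).getD 0 0 = l.getD i 0 := by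
      simpa using getD_take_drop l i 0 hlen (by omega)
    have g1 := getD_take_drop l i 1 hlen (by omega)
    have g2 := getD_take_drop l i 2 hlen (by omega)
    have hj' : j = 0 ∨ j = 1 ∨ j = 2 := by omega
    have hk' : k = 0 ∨ k = 1 ∨ k = 2 := by omega
    rcases hj' with rfl | rfl | rfl <;> rcases hk' with rfl | rfl | rfl <;>
        simp only [g0, g1, g2] <;>
      first
      | exact iff_of_true (by decide) (by omega)
      | exact iff_of_false (by decide) (by omega)

open Classical in
lemma natCard_sum (P : ℕ → Prop) (N : ℕ) (h : ∀ i, P i → i < N) :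
    Nat.card {i : ℕ // P i} = ∑ i ∈ Finset.range N, (if P i then 1 else 0) := by
  rw [← Finset.card_filter, ← Nat.card_eq_finsetCard]
  apply Nat.card_congr
  apply Equiv.subtypeEquivRight
  intro i
  simp only [Finset.mem_filter, Finset.mem_range]
  exact ⟨fun hp => ⟨h i hp, hp⟩, fun hp => hp.2⟩

lemma c112_cons_head (a : ℕ) (l : List ℕ) : c112 (a :: l)
    = c112 l + (if 0+3 ≤ l.length + 1 ∧ a = l.getD 0 0 ∧ l.getD 0 0 < l.getD 1 0
        then 1 else 0) := by
  match l with
  | [] => simp [c112]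
  | [b] => simp [c112]
  | b :: c :: t =>
    have e1 : (b :: c :: t).getD 0 0 = b := rfl
    have e2 : (b :: c :: t).getD 1 0 = c := rfl
    rw [e1, e2]
    have hc : (0+3 ≤ (b :: c :: t).length + 1 ∧ a = b ∧ b < c) ↔ (a = b ∧ b < c) := by
      simp only [length_cons]
      exact ⟨fun h => h.2, fun h => ⟨by omega, h⟩⟩
    rw [if_congr hc rfl rfl]
    show (if a = b ∧ b < c then 1 else 0) + c112 (b :: c :: t)
        = c112 (b :: c :: t) + (if a = b ∧ b < c then 1 else 0)
    omega

lemma c122_cons_head (a : ℕ) (l : List ℕ) : c122 (a :: l)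
    = c122 l + (if 0+3 ≤ l.length + 1 ∧ a < l.getD 0 0 ∧ l.getD 0 0 = l.getD 1 0
        then 1 else 0) := by
  match l with
  | [] => simp [c122]
  | [b] => simp [c122]
  | b :: c :: t =>
    have e1 : (b :: c :: t).getD 0 0 = b := rfl
    have e2 : (b :: c :: t).getD 1 0 = c := rfl
    rw [e1, e2]
    have hc : (0+3 ≤ (b :: c :: t).length + 1 ∧ a < b ∧ b = c) ↔ (a < b ∧ b = c) := by
      simp only [length_cons]
      exact ⟨fun h => h.2, fun h => ⟨by omega, h⟩⟩
    rw [if_congr hc rfl rfl]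
    show (if a < b ∧ b = c then 1 else 0) + c122 (b :: c :: t)
        = c122 (b :: c :: t) + (if a < b ∧ b = c then 1 else 0)
    omega

lemma occCount112 (l : List ℕ) : occCount [1, 1, 2] l = c112 l := by
  classical
  induction l with
  | nil =>
    unfold occCount
    rw [natCard_sum _ 0 (fun i hi => by
      rw [occAt_112_iff] at hi
      simp only [length_nil] at hi
      omega)]
    simp [c112]
  | cons a l ih =>
    have hbl : ∀ i, occAt [1, 1, 2] l i → i < l.length := fun i hi => by
      rw [occAt_112_iff] at hi; omega
    have hb : ∀ i, occAt [1, 1, 2] (a :: l) i → i < l.length + 1 := fun i hi => by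
      rw [occAt_112_iff] at hi; simp only [length_cons] at hi; omega
    have ihs : (∑ i ∈ Finset.range l.length,
        if occAt [1, 1, 2] l i then 1 else 0) = c112 l := by
      rw [← natCard_sum _ _ hbl]; exact ih
    have hshift : ∀ i : ℕ, occAt [1, 1, 2] (a :: l) (i+1) ↔ occAt [1, 1, 2] l i := by
      intro i
      rw [occAt_112_iff, occAt_112_iff]
      have d1 : (a :: l).getD (i+1) 0 = l.getD i 0 := getD_cons_succ
      have d2 : (a :: l).getD (i+1+1) 0 = l.getD (i+1) 0 := getD_cons_succ
      have d3 : (a :: l).getD (i+1+2) 0 = l.getD (i+2) 0 := getD_cons_succ (n := i+2)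
      rw [d1, d2, d3, length_cons]
      exact ⟨fun ⟨h1, h2, h3⟩ => ⟨by omega, h2, h3⟩, fun ⟨h1, h2, h3⟩ => ⟨by omega, h2, h3⟩⟩
    have hiff : occAt [1, 1, 2] (a :: l) 0 ↔
        (0+3 ≤ l.length + 1 ∧ a = l.getD 0 0 ∧ l.getD 0 0 < l.getD 1 0) := by
      rw [occAt_112_iff]
      have d0 : (a :: l).getD 0 0 = a := rfl
      have d1 : (a :: l).getD (0+1) 0 = l.getD 0 0 := rfl
      have d2 : (a :: l).getD (0+2) 0 = l.getD 1 0 := rfl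
      rw [d0, d1, d2, length_cons]
    unfold occCount
    rw [natCard_sum _ (l.length + 1) hb, Finset.sum_range_succ',
      Finset.sum_congr rfl (fun i _ => if_congr (hshift i) rfl rfl), ihs,
      if_congr hiff rfl rfl, c112_cons_head a l]

lemma occCount122 (l : List ℕ) : occCount [1, 2, 2] l = c122 l := by
  classical
  induction l with
  | nil =>
    unfold occCount
    rw [natCard_sum _ 0 (fun i hi => by
      rw [occAt_122_iff] at hi
      simp only [length_nil] at hi
      omega)]
    simp [c122]
  | cons a l ih =>
    have hbl : ∀ i, occAt [1, 2, 2] l i → i < l.length := fun i hi => by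
      rw [occAt_122_iff] at hi; omega
    have hb : ∀ i, occAt [1, 2, 2] (a :: l) i → i < l.length + 1 := fun i hi => by
      rw [occAt_122_iff] at hi; simp only [length_cons] at hi; omega
    have ihs : (∑ i ∈ Finset.range l.length,
        if occAt [1, 2, 2] l i then 1 else 0) = c122 l := by
      rw [← natCard_sum _ _ hbl]; exact ih
    have hshift : ∀ i : ℕ, occAt [1, 2, 2] (a :: l) (i+1) ↔ occAt [1, 2, 2] l i := by
      intro i
      rw [occAt_122_iff, occAt_122_iff]
      have d1 : (a :: l).getD (i+1) 0 = l.getD i 0 := getD_cons_succ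
      have d2 : (a :: l).getD (i+1+1) 0 = l.getD (i+1) 0 := getD_cons_succ
      have d3 : (a :: l).getD (i+1+2) 0 = l.getD (i+2) 0 := getD_cons_succ (n := i+2)
      rw [d1, d2, d3, length_cons]
      exact ⟨fun ⟨h1, h2, h3⟩ => ⟨by omega, h2, h3⟩, fun ⟨h1, h2, h3⟩ => ⟨by omega, h2, h3⟩⟩
    have hiff : occAt [1, 2, 2] (a :: l) 0 ↔
        (0+3 ≤ l.length + 1 ∧ a < l.getD 0 0 ∧ l.getD 0 0 = l.getD 1 0) := by
      rw [occAt_122_iff]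
      have d0 : (a :: l).getD 0 0 = a := rfl
      have d1 : (a :: l).getD (0+1) 0 = l.getD 0 0 := rfl
      have d2 : (a :: l).getD (0+2) 0 = l.getD 1 0 := rfl
      rw [d0, d1, d2, length_cons]
    unfold occCount
    rw [natCard_sum _ (l.length + 1) hb, Finset.sum_range_succ',
      Finset.sum_congr rfl (fun i _ => if_congr (hshift i) rfl rfl), ihs,
      if_congr hiff rfl rfl, c122_cons_head a l]

def fmap (l : List ℕ) : List ℕ := decode (phi (encode l))

lemma fmap_invol (l : List ℕ) : fmap (fmap l) = l := by
  unfold fmap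
  rw [encode_decode _ (phi_good (encode_good l)), phi_phi, decode_encode]

lemma length_fmap (l : List ℕ) : (fmap l).length = l.length := by
  unfold fmap
  rw [decode_length, phi_sum_snd, ← decode_length, decode_encode]

lemma isRGS_fmap (l : List ℕ) : IsRGS (fmap l) ↔ IsRGS l := by
  rw [isRGS_iff, isRGS_iff]
  unfold fmap
  rw [rgsAux_decode _ (phi_good (encode_good l)).1 0, map_fst_phi,
    ← rgsAux_decode _ (encode_good l).1 0, decode_encode]

lemma crossing_fmap (l : List ℕ) : Crossing (fmap l) ↔ Crossing l := by
  unfold fmap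
  rw [crossing_decode _ (phi_good (encode_good l)).1, map_fst_phi,
    ← crossing_decode _ (encode_good l).1, decode_encode]

lemma ncseq_fmap (n : ℕ) (l : List ℕ) : NCseq n (fmap l) ↔ NCseq n l := by
  unfold NCseq
  rw [length_fmap, isRGS_fmap, crossing_fmap]

lemma occ_swap (l : List ℕ) : occCount [1, 2, 2] (fmap l) = occCount [1, 1, 2] l := by
  rw [occCount122, occCount112]
  unfold fmap
  rw [bridge122 _ (phi_good (encode_good l)), statB_phi,
    ← bridge112 _ (encode_good l), decode_encode]

lemma occ_swap' (l : List ℕ) : occCount [1, 1, 2] (fmap l) = occCount [1, 2, 2] l := by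
  have h := occ_swap (fmap l)
  rw [fmap_invol] at h
  exact h.symm

end NC18

/-- The subwords 112 and 122 are equidistributed on NC_n. -/
theorem stmt18 (n k : ℕ) :
    Nat.card {l : List ℕ // NCseq n l ∧ occCount [1, 1, 2] l = k} =
      Nat.card {l : List ℕ // NCseq n l ∧ occCount [1, 2, 2] l = k} := by
  apply Nat.card_congr
  exact {
    toFun := fun x => ⟨NC18.fmap x.1,
      (NC18.ncseq_fmap n x.1).2 x.2.1, by rw [NC18.occ_swap]; exact x.2.2⟩
    invFun := fun x => ⟨NC18.fmap x.1,
      (NC18.ncseq_fmap n x.1).2 x.2.1, by rw [NC18.occ_swap']; exact x.2.2⟩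
    left_inv := fun x => Subtype.ext (NC18.fmap_invol x.1)
    right_inv := fun x => Subtype.ext (NC18.fmap_invol x.1) }
end
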